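/- arXiv:math-ph/0403027 — 10 statements merged into one kernel-verified Lean document; each statement's English description precedes it below -/
import Mathlib

section
/- Let v : ℝ^m × ℝ → ℝ^m be continuously differentiable and let φ : ℝ^m × ℝ → ℝ be a continuously differentiable solution of the transport equation ∂φ/∂t(x,t) + v(x,t)·∇φ(x,t) = 0 for all (x,t). Assume there is a compact set K ⊆ ℝ^m such that φ(·,t) is supported in K for every t. Then the function t ↦ ∫_{ℝ^m} φ(x,t)² dx is differentiable, with derivative d/dt ∫_{ℝ^m} φ(x,t)² dx = ∫_{ℝ^m} (div_x v)(x,t) φ(x,t)² dx. -/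
open MeasureTheory RealInnerProductSpace

/-- Spatial divergence of a time-dependent vector field on `ℝ^m`. -/
noncomputable def spatialDiv {m : ℕ}
    (v : EuclideanSpace ℝ (Fin m) × ℝ → EuclideanSpace ℝ (Fin m))
    (x : EuclideanSpace ℝ (Fin m)) (t : ℝ) : ℝ :=
  ∑ i, fderiv ℝ (fun y => v (y, t) i) x (EuclideanSpace.single i 1)

open Metric Set Function Filter

/-- Expansion of a continuous linear functional on Euclidean space over the standard basis. -/
lemma clm_eq_sum_single {m : ℕ} (L : EuclideanSpace ℝ (Fin m) →L[ℝ] ℝ)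
    (w : EuclideanSpace ℝ (Fin m)) :
    L w = ∑ i, w i * L (EuclideanSpace.single i 1) := by
  have hw : w = ∑ i, w i • EuclideanSpace.single i (1 : ℝ) := by
    ext j
    rw [WithLp.ofLp_sum, Finset.sum_apply]
    simp [EuclideanSpace.single_apply]
  conv_lhs => rw [hw]
  rw [map_sum]
  simp [smul_eq_mul]

theorem transport_L2_energy_derivative {m : ℕ}
    (v : EuclideanSpace ℝ (Fin m) × ℝ → EuclideanSpace ℝ (Fin m))
    (φ : EuclideanSpace ℝ (Fin m) × ℝ → ℝ)
    (hv : ContDiff ℝ 1 v) (hφ : ContDiff ℝ 1 φ)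
    (hpde : ∀ x t, deriv (fun s => φ (x, s)) t
      + ⟪v (x, t), gradient (fun y => φ (y, t)) x⟫ = 0)
    (K : Set (EuclideanSpace ℝ (Fin m))) (hK : IsCompact K)
    (hsupp : ∀ t, Function.support (fun x => φ (x, t)) ⊆ K)
    (t : ℝ) :
    HasDerivAt (fun s => ∫ x, (φ (x, s)) ^ 2)
      (∫ x, spatialDiv v x t * (φ (x, t)) ^ 2) t := by
  classical
  have hφd : Differentiable ℝ φ := hφ.differentiable one_ne_zero
  -- the time derivative of φ
  set dφ : EuclideanSpace ℝ (Fin m) × ℝ → ℝ := fun p => fderiv ℝ φ p (0, 1) with hdφ_def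
  have hdφc : Continuous dφ :=
    (hφ.continuous_fderiv one_ne_zero).clm_apply continuous_const
  have hder : ∀ x s, HasDerivAt (fun s => φ (x, s)) (dφ (x, s)) s := by
    intro x s
    have h1 : HasDerivAt (fun s : ℝ => ((x, s) : EuclideanSpace ℝ (Fin m) × ℝ))
        ((0 : EuclideanSpace ℝ (Fin m)), (1 : ℝ)) s :=
      (hasDerivAt_const s x).prodMk (hasDerivAt_id s)
    exact (hφd (x, s)).hasFDerivAt.comp_hasDerivAt s h1
  have hsq : ∀ x s, HasDerivAt (fun s => φ (x, s) ^ 2) (2 * φ (x, s) * dφ (x, s)) s := by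
    intro x s
    have := (hder x s).pow 2
    norm_num at this
    exact this
  have hφzero : ∀ x, x ∉ K → ∀ s, φ (x, s) = 0 := by
    intro x hx s
    by_contra h
    exact hx (hsupp s h)
  -- continuity facts
  have hφc : Continuous φ := hφ.continuous
  have hφtc : ∀ s : ℝ, Continuous fun x => φ (x, s) := fun s =>
    hφc.comp (continuous_id.prodMk continuous_const)
  -- derivative of the energy via dominated convergence
  obtain ⟨C, hC⟩ := (hK.prod (isCompact_Icc (a := t - 1) (b := t + 1))).exists_bound_of_continuousOn
    (f := fun p => 2 * φ p * dφ p)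
    ((continuous_const.mul hφc |>.mul hdφc).continuousOn)
  set bound : EuclideanSpace ℝ (Fin m) → ℝ := K.indicator fun _ => C with hbound_def
  have key : HasDerivAt (fun s => ∫ x, (φ (x, s)) ^ 2)
      (∫ x, 2 * φ (x, t) * dφ (x, t)) t := by
    have h := hasDerivAt_integral_of_dominated_loc_of_deriv_le
      (μ := (volume : Measure (EuclideanSpace ℝ (Fin m))))
      (F := fun s x => φ (x, s) ^ 2) (F' := fun s x => 2 * φ (x, s) * dφ (x, s))
      (x₀ := t) (bound := bound) (ball_mem_nhds t one_pos)
      (Eventually.of_forall fun s => ((hφtc s).pow 2).aestronglyMeasurable)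
      ?_ ?_ ?_ ?_ ?_
    · exact h.2
    · -- integrability of φ(·,t)²
      refine ((hφtc t).pow 2).integrable_of_hasCompactSupport
        (HasCompactSupport.intro hK fun x hx => ?_)
      simp [hφzero x hx t]
    · exact ((continuous_const.mul (hφtc t)).mul
        (hdφc.comp (continuous_id.prodMk continuous_const))).aestronglyMeasurable
    · refine Eventually.of_forall fun x => fun s hs => ?_
      by_cases hx : x ∈ K
      · have hsI : s ∈ Set.Icc (t - 1) (t + 1) := by
          rw [Real.ball_eq_Ioo] at hs
          exact Set.Ioo_subset_Icc_self hs
        simpa [hbound_def, Set.indicator_of_mem hx] using hC (x, s) ⟨hx, hsI⟩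
      · simp [hbound_def, Set.indicator_of_notMem hx, hφzero x hx s]
    · rw [hbound_def, integrable_indicator_iff hK.measurableSet]
      exact integrableOn_const hK.measure_lt_top.ne
    · exact Eventually.of_forall fun x => fun s _ => hsq x s
  -- now identify the two integrals
  set φt : EuclideanSpace ℝ (Fin m) → ℝ := fun y => φ (y, t) with hφt_def
  set ψ : EuclideanSpace ℝ (Fin m) → ℝ := fun y => φ (y, t) ^ 2 with hψ_def
  have hφt : ContDiff ℝ 1 φt := hφ.comp (contDiff_id.prodMk contDiff_const)
  have hψ : ContDiff ℝ 1 ψ := hφt.pow 2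
  set vt : Fin m → EuclideanSpace ℝ (Fin m) → ℝ := fun i y => v (y, t) i with hvt_def
  have hvti : ∀ i, ContDiff ℝ 1 (vt i) := by
    intro i
    have h : ContDiff ℝ 1 (fun y : EuclideanSpace ℝ (Fin m) => v (y, t) i) :=
      (EuclideanSpace.proj (𝕜 := ℝ) i).contDiff.comp
        (hv.comp (contDiff_id.prodMk contDiff_const))
    exact h
  -- support facts
  have htsupp : tsupport ψ ⊆ K := by
    refine closure_minimal ?_ hK.isClosed
    intro x hx
    refine hsupp t ?_
    simp only [Function.mem_support] at hx ⊢
    intro h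
    exact hx (by simp [hψ_def, h])
  have hfd0 : ∀ x, x ∉ K → fderiv ℝ ψ x = 0 := by
    intro x hx
    by_contra h
    exact hx (htsupp (support_fderiv_subset ℝ h))
  -- pointwise identity : 2 φ ∂ₜφ = -∑ i vᵢ ∂ᵢ(φ²)
  have hpoint : ∀ x, 2 * φ (x, t) * dφ (x, t)
      = -∑ i, vt i x * fderiv ℝ ψ x (EuclideanSpace.single i 1) := by
    intro x
    have h1 : dφ (x, t) = -⟪v (x, t), gradient φt x⟫ := by
      have := hpde x t
      rw [(hder x t).deriv] at this
      linarith
    have h2 : ⟪v (x, t), gradient φt x⟫ = fderiv ℝ φt x (v (x, t)) := by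
      rw [real_inner_comm]
      exact InnerProductSpace.toDual_symm_apply
    have h3 : fderiv ℝ φt x (v (x, t))
        = ∑ i, vt i x * fderiv ℝ φt x (EuclideanSpace.single i 1) :=
      clm_eq_sum_single _ _
    have h4 : ∀ i, fderiv ℝ ψ x (EuclideanSpace.single i 1)
        = 2 * φ (x, t) * fderiv ℝ φt x (EuclideanSpace.single i 1) := by
      intro i
      have hψ' : ψ = fun y => φt y * φt y := by
        funext y; simp [hψ_def, hφt_def, sq]
      rw [hψ', fderiv_fun_mul (hφt.differentiable one_ne_zero x) (hφt.differentiable one_ne_zero x)]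
      simp [hφt_def]
      ring
    rw [h2, h3] at h1
    rw [h1, mul_neg, neg_inj, Finset.mul_sum]
    exact Finset.sum_congr rfl fun i _ => by rw [h4 i]; ring
  -- integrability facts
  have hψcs : HasCompactSupport ψ := HasCompactSupport.intro hK fun x hx => by
    simp [hψ_def, hφzero x hx t]
  have hψint : Integrable ψ := (hψ.continuous).integrable_of_hasCompactSupport hψcs
  have hDψc : ∀ i, Continuous fun x => fderiv ℝ ψ x (EuclideanSpace.single i 1) := fun i =>
    (hψ.continuous_fderiv one_ne_zero).clm_apply continuous_const
  have hDvc : ∀ i, Continuous fun x => fderiv ℝ (vt i) x (EuclideanSpace.single i 1) := fun i =>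
    ((hvti i).continuous_fderiv one_ne_zero).clm_apply continuous_const
  have hint1 : ∀ i, Integrable fun x => vt i x * fderiv ℝ ψ x (EuclideanSpace.single i 1) := by
    intro i
    refine (((hvti i).continuous).mul (hDψc i)).integrable_of_hasCompactSupport
      (HasCompactSupport.intro hK fun x hx => ?_)
    simp [hfd0 x hx]
  have hint2 : ∀ i, Integrable fun x => fderiv ℝ (vt i) x (EuclideanSpace.single i 1) * ψ x := by
    intro i
    refine ((hDvc i).mul hψ.continuous).integrable_of_hasCompactSupport
      (HasCompactSupport.intro hK fun x hx => ?_)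
    simp [hψ_def, hφzero x hx t]
  have hint3 : ∀ i, Integrable fun x => vt i x * ψ x := by
    intro i
    refine (((hvti i).continuous).mul hψ.continuous).integrable_of_hasCompactSupport
      (HasCompactSupport.intro hK fun x hx => ?_)
    simp [hψ_def, hφzero x hx t]
  -- integration by parts in each coordinate
  have hibp : ∀ i, ∫ x, vt i x * fderiv ℝ ψ x (EuclideanSpace.single i 1)
      = -∫ x, fderiv ℝ (vt i) x (EuclideanSpace.single i 1) * ψ x := fun i =>
    integral_mul_fderiv_eq_neg_fderiv_mul_of_integrable (hint2 i) (hint1 i) (hint3 i)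
      (fun x _ => (hvti i).differentiable one_ne_zero x) (fun x _ => hψ.differentiable one_ne_zero x)
  -- put everything together
  have hintegrand : ∀ i, Integrable fun x => -(vt i x * fderiv ℝ ψ x (EuclideanSpace.single i 1)) :=
    fun i => (hint1 i).neg
  have heq : (∫ x, 2 * φ (x, t) * dφ (x, t))
      = ∫ x, spatialDiv v x t * (φ (x, t)) ^ 2 := by
    calc (∫ x, 2 * φ (x, t) * dφ (x, t))
        = ∫ x, ∑ i, -(vt i x * fderiv ℝ ψ x (EuclideanSpace.single i 1)) := by
          congr 1
          funext x
          rw [hpoint x]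
          simp
      _ = ∑ i, ∫ x, -(vt i x * fderiv ℝ ψ x (EuclideanSpace.single i 1)) :=
          integral_finset_sum _ fun i _ => hintegrand i
      _ = ∑ i, ∫ x, fderiv ℝ (vt i) x (EuclideanSpace.single i 1) * ψ x := by
          refine Finset.sum_congr rfl fun i _ => ?_
          rw [integral_neg, hibp i, neg_neg]
      _ = ∫ x, ∑ i, fderiv ℝ (vt i) x (EuclideanSpace.single i 1) * ψ x :=
          (integral_finset_sum _ fun i _ => hint2 i).symm
      _ = ∫ x, spatialDiv v x t * (φ (x, t)) ^ 2 := by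
          congr 1
          funext x
          simp only [spatialDiv, hψ_def, hvt_def, Finset.sum_mul]
  rw [← heq]
  exact key
end

section
/- Let v : ℝ^m × ℝ → ℝ^m be continuously differentiable with (div_x v)(x,t) ≤ −2β for all (x,t), where β > 0 is a constant. Let φ : ℝ^m × ℝ → ℝ be a continuously differentiable solution of the transport equation ∂φ/∂t(x,t) + v(x,t)·∇φ(x,t) = 0, supported for every t in a fixed compact set K ⊆ ℝ^m. Then for all t ≥ 0, ∫_{ℝ^m} φ(x,t)² dx ≤ e^{−2βt} ∫_{ℝ^m} φ(x,0)² dx. In particular, the squared L² distance between any two such solutions decays exponentially with rate 2β. -/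
open MeasureTheory RealInnerProductSpace

section Aux
variable {m : ℕ}
local notation "E" => EuclideanSpace ℝ (Fin m)

-- slice regularity
lemma slice_contDiff {F : Type*} [NormedAddCommGroup F] [NormedSpace ℝ F]
    (φ : E × ℝ → F) (hφ : ContDiff ℝ 1 φ) (t : ℝ) :
    ContDiff ℝ 1 (fun y : E => φ (y, t)) :=
  hφ.comp (contDiff_id.prodMk contDiff_const)

lemma tslice_contDiff {F : Type*} [NormedAddCommGroup F] [NormedSpace ℝ F]
    (φ : E × ℝ → F) (hφ : ContDiff ℝ 1 φ) (x : E) :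
    ContDiff ℝ 1 (fun s : ℝ => φ (x, s)) :=
  hφ.comp (contDiff_const.prodMk contDiff_id)

lemma deriv_slice (φ : E × ℝ → ℝ) (hφ : ContDiff ℝ 1 φ) (x : E) (t : ℝ) :
    deriv (fun s => φ (x, s)) t = fderiv ℝ φ (x, t) (0, 1) := by
  have h1 : HasDerivAt (fun s : ℝ => (x, s)) ((0 : E), (1:ℝ)) t :=
    (hasDerivAt_const t x).prodMk (hasDerivAt_id t)
  exact ((hφ.differentiable one_ne_zero _).hasFDerivAt.comp_hasDerivAt t h1).deriv

lemma basis_expand (u : E) : u = ∑ i, u i • EuclideanSpace.single i 1 := by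
  have := (EuclideanSpace.basisFun (Fin m) ℝ).toBasis.sum_repr u
  simpa [EuclideanSpace.basisFun_apply] using this.symm

end Aux

section Aux2
variable {m : ℕ}
local notation "E" => EuclideanSpace ℝ (Fin m)

lemma integrable_of_K (f : E → ℝ) (hf : Continuous f)
    (K : Set E) (hK : IsCompact K) (h : ∀ x ∉ K, f x = 0) :
    Integrable f :=
  hf.integrable_of_hasCompactSupport (HasCompactSupport.intro hK h)

lemma div_ibp (v : E × ℝ → E) (hv : ContDiff ℝ 1 v)
    (g : E → ℝ) (hg : ContDiff ℝ 1 g)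
    (K : Set E) (hK : IsCompact K) (hgK : ∀ x ∉ K, g x = 0) (t : ℝ) :
    ∫ x, g x * spatialDiv v x t = - ∫ x, fderiv ℝ g x (v (x, t)) := by
  set e : Fin m → E := fun i => EuclideanSpace.single i 1 with he
  have hgc : Continuous g := hg.continuous
  have hgts : tsupport g ⊆ K := by
    apply closure_minimal _ hK.isClosed
    intro x hx
    by_contra hxK
    exact hx (hgK x hxK)
  have hdgK : ∀ x ∉ K, fderiv ℝ g x = 0 := fun x hx =>
    fderiv_of_notMem_tsupport (𝕜 := ℝ) (fun hmem => hx (hgts hmem))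
  have hdgc : Continuous (fderiv ℝ g) := hg.continuous_fderiv one_ne_zero
  have hwi : ∀ i : Fin m, ContDiff ℝ 1 (fun y : E => v (y, t) i) := fun i =>
    ContDiff.comp ((EuclideanSpace.proj i : E →L[ℝ] ℝ)).contDiff (slice_contDiff v hv t)
  have hwic : ∀ i : Fin m, Continuous (fun y : E => v (y, t) i) := fun i => (hwi i).continuous
  have hc1 : ∀ i : Fin m, Continuous (fun x => fderiv ℝ g x (e i) * v (x, t) i) := fun i =>
    (hdgc.clm_apply continuous_const).mul (hwic i)
  have hc2 : ∀ i : Fin m, Continuous (fun x => g x * fderiv ℝ (fun y => v (y, t) i) x (e i)) :=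
    fun i => hgc.mul (((hwi i).continuous_fderiv one_ne_zero).clm_apply continuous_const)
  have hint : ∀ i : Fin m, Integrable (fun x => g x * fderiv ℝ (fun y => v (y, t) i) x (e i)) :=
    fun i => integrable_of_K _ (hc2 i) K hK (fun x hx => by simp [hgK x hx])
  have hint2 : ∀ i : Fin m, Integrable (fun x => fderiv ℝ g x (e i) * v (x, t) i) :=
    fun i => integrable_of_K _ (hc1 i) K hK (fun x hx => by simp [hdgK x hx])
  have key : ∀ i : Fin m,
      ∫ x, g x * fderiv ℝ (fun y => v (y, t) i) x (e i)
        = - ∫ x, fderiv ℝ g x (e i) * v (x, t) i := by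
    intro i
    refine integral_mul_fderiv_eq_neg_fderiv_mul_of_integrable (hint2 i) (hint i) ?_
      (fun x _ => hg.differentiable one_ne_zero x) (fun x _ => (hwi i).differentiable one_ne_zero x)
    exact integrable_of_K _ (hgc.mul (hwic i)) K hK (fun x hx => by simp [hgK x hx])
  calc ∫ x, g x * spatialDiv v x t
      = ∫ x, ∑ i, g x * fderiv ℝ (fun y => v (y, t) i) x (e i) := by
        simp only [spatialDiv, Finset.mul_sum, he]
    _ = ∑ i, ∫ x, g x * fderiv ℝ (fun y => v (y, t) i) x (e i) :=
        integral_finset_sum _ (fun i _ => hint i)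
    _ = ∑ i, - ∫ x, fderiv ℝ g x (e i) * v (x, t) i :=
        Finset.sum_congr rfl (fun i _ => key i)
    _ = - ∑ i, ∫ x, fderiv ℝ g x (e i) * v (x, t) i := by
        rw [← Finset.sum_neg_distrib]
    _ = - ∫ x, ∑ i, fderiv ℝ g x (e i) * v (x, t) i := by
        rw [integral_finset_sum _ (fun i _ => hint2 i)]
    _ = - ∫ x, fderiv ℝ g x (v (x, t)) := by
        congr 1
        refine integral_congr_ae (Filter.Eventually.of_forall fun x => ?_)
        show ∑ i, fderiv ℝ g x (e i) * v (x, t) i = fderiv ℝ g x (v (x, t))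
        conv_rhs => rw [basis_expand (v (x, t))]
        rw [map_sum (fderiv ℝ g x)]
        refine Finset.sum_congr rfl fun i _ => ?_
        rw [ContinuousLinearMap.map_smul, smul_eq_mul, mul_comm]

end Aux2


theorem transport_L2_contraction {m : ℕ} (β : ℝ) (hβ : 0 < β)
    (v : EuclideanSpace ℝ (Fin m) × ℝ → EuclideanSpace ℝ (Fin m))
    (φ : EuclideanSpace ℝ (Fin m) × ℝ → ℝ)
    (hv : ContDiff ℝ 1 v)
    (hdiv : ∀ x t, spatialDiv v x t ≤ -2 * β)
    (hφ : ContDiff ℝ 1 φ)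
    (hpde : ∀ x t, deriv (fun s => φ (x, s)) t
      + ⟪v (x, t), gradient (fun y => φ (y, t)) x⟫ = 0)
    (K : Set (EuclideanSpace ℝ (Fin m))) (hK : IsCompact K)
    (hsupp : ∀ t, Function.support (fun x => φ (x, t)) ⊆ K) :
    ∀ t ≥ (0 : ℝ),
      ∫ x, (φ (x, t)) ^ 2 ≤ Real.exp (-2 * β * t) * ∫ x, (φ (x, 0)) ^ 2 := by
  have hφc : Continuous φ := hφ.continuous
  have hK0 : ∀ t x, x ∉ K → φ (x, t) = 0 := fun t x hx =>
    Function.notMem_support.1 (fun h => hx (hsupp t h))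
  set Dt : EuclideanSpace ℝ (Fin m) × ℝ → ℝ := fun p => fderiv ℝ φ p (0, 1) with hDtdef
  have hDtc : Continuous Dt := (hφ.continuous_fderiv one_ne_zero).clm_apply continuous_const
  have hDt : ∀ x t, deriv (fun s => φ (x, s)) t = Dt (x, t) := fun x t =>
    deriv_slice φ hφ x t
  have hgrad : ∀ x t, Dt (x, t) = - fderiv ℝ (fun y => φ (y, t)) x (v (x, t)) := by
    intro x t
    have h1 := hpde x t
    rw [hDt x t] at h1
    have h2 : ⟪v (x, t), gradient (fun y => φ (y, t)) x⟫
        = fderiv ℝ (fun y => φ (y, t)) x (v (x, t)) := by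
      rw [real_inner_comm, gradient, InnerProductSpace.toDual_symm_apply]
    rw [h2] at h1
    linarith
  -- derivative of squared slice in space
  have hsq : ∀ t x (u : EuclideanSpace ℝ (Fin m)),
      fderiv ℝ (fun y => φ (y, t) ^ 2) x u
        = 2 * φ (x, t) * fderiv ℝ (fun y => φ (y, t)) x u := by
    intro t x u
    have hd := ((slice_contDiff φ hφ t).differentiable one_ne_zero x).hasFDerivAt
    have h2 := hd.mul hd
    have h3 : (fun y => φ (y, t) ^ 2) = fun y => φ (y, t) * φ (y, t) := by
      funext y; ring
    rw [h3, show (fun y => φ (y, t) * φ (y, t)) = (fun y => φ (y, t)) * (fun y => φ (y, t)) from rfl, h2.fderiv]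
    simp
    ring
  -- time derivative of squared slice
  have hts : ∀ x t, HasDerivAt (fun s => φ (x, s) ^ 2) (2 * φ (x, t) * Dt (x, t)) t := by
    intro x t
    have h1 : HasDerivAt (fun s : ℝ => (x, s)) ((0 : EuclideanSpace ℝ (Fin m)), (1:ℝ)) t :=
      (hasDerivAt_const t x).prodMk (hasDerivAt_id t)
    have h0 : HasDerivAt (fun s => φ (x, s)) (Dt (x, t)) t :=
      (hφ.differentiable one_ne_zero _).hasFDerivAt.comp_hasDerivAt t h1
    have := h0.fun_pow 2
    simpa [mul_assoc] using this
  have hslc : ∀ t : ℝ, Continuous (fun x => φ (x, t)) :=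
    fun t => hφc.comp (continuous_id.prodMk continuous_const)
  have Eint : ∀ t : ℝ, Integrable (fun x => φ (x, t) ^ 2) := fun t =>
    integrable_of_K _ ((hslc t).pow 2) K hK (fun x hx => by simp [hK0 t x hx])
  set Ef : ℝ → ℝ := fun t => ∫ x, φ (x, t) ^ 2 with hEf
  -- derivative of Ef
  have hE' : ∀ t : ℝ, HasDerivAt Ef (∫ x, 2 * φ (x, t) * Dt (x, t)) t := by
    intro t
    have hcont : Continuous (fun p : EuclideanSpace ℝ (Fin m) × ℝ => 2 * φ p * Dt p) :=
      (continuous_const.mul hφc).mul hDtc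
    obtain ⟨C, hC⟩ := (hK.prod (isCompact_Icc (a := t - 1) (b := t + 1))).exists_bound_of_continuousOn
      hcont.continuousOn
    refine (hasDerivAt_integral_of_dominated_loc_of_deriv_le (s := Metric.ball t 1) (Metric.ball_mem_nhds t one_pos)
      (F := fun s x => φ (x, s) ^ 2) (F' := fun s x => 2 * φ (x, s) * Dt (x, s))
      (bound := K.indicator fun _ => C) ?_ (Eint t) ?_ ?_ ?_ ?_).2
    · exact Filter.Eventually.of_forall fun s => ((hslc s).pow 2).aestronglyMeasurable
    · exact ((continuous_const.mul (hslc t)).mul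
        (hDtc.comp (continuous_id.prodMk continuous_const))).aestronglyMeasurable
    · refine Filter.Eventually.of_forall fun x => fun s hs => ?_
      by_cases hxK : x ∈ K
      · rw [Set.indicator_of_mem hxK]
        refine hC (x, s) ⟨hxK, ?_⟩
        have := Metric.mem_ball.1 hs
        rw [Real.dist_eq] at this
        constructor <;> [linarith [abs_lt.1 this]; linarith [abs_lt.1 this]]
      · rw [Set.indicator_of_notMem hxK]
        simp [hK0 s x hxK]
    · exact (integrable_indicator_iff hK.measurableSet).2
        (integrableOn_const hK.measure_lt_top.ne)
    · exact Filter.Eventually.of_forall fun x s hs => hts x s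
  -- identify the derivative and bound it
  have hE'le : ∀ t : ℝ, (∫ x, 2 * φ (x, t) * Dt (x, t)) ≤ (-2 * β) * Ef t := by
    intro t
    have hg1 : ContDiff ℝ 1 (fun y => φ (y, t) ^ 2) := (slice_contDiff φ hφ t).pow 2
    have hibp := div_ibp v hv (fun y => φ (y, t) ^ 2) hg1 K hK
      (fun x hx => by simp [hK0 t x hx]) t
    have heq : (∫ x, 2 * φ (x, t) * Dt (x, t))
        = ∫ x, φ (x, t) ^ 2 * spatialDiv v x t := by
      rw [hibp]
      rw [← integral_neg]
      refine integral_congr_ae (Filter.Eventually.of_forall fun x => ?_)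
      show 2 * φ (x, t) * Dt (x, t) = -(fderiv ℝ (fun y => φ (y, t) ^ 2) x (v (x, t)))
      rw [hsq t x (v (x, t)), hgrad x t]
      ring
    rw [heq]
    have hcdiv : Continuous (fun x => spatialDiv v x t) := by
      refine continuous_finset_sum _ fun i _ => ?_
      have hwi : ContDiff ℝ 1 (fun y : EuclideanSpace ℝ (Fin m) => v (y, t) i) :=
        ContDiff.comp ((EuclideanSpace.proj i : EuclideanSpace ℝ (Fin m) →L[ℝ] ℝ)).contDiff
          (slice_contDiff v hv t)
      exact (hwi.continuous_fderiv one_ne_zero).clm_apply continuous_const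
    have hi1 : Integrable (fun x => φ (x, t) ^ 2 * spatialDiv v x t) :=
      integrable_of_K _ (((hslc t).pow 2).mul hcdiv) K hK
        (fun x hx => by simp [hK0 t x hx])
    have hi2 : Integrable (fun x => φ (x, t) ^ 2 * (-2 * β)) := (Eint t).mul_const _
    have hle := integral_mono hi1 hi2 (fun x =>
      mul_le_mul_of_nonneg_left (hdiv x t) (sq_nonneg _))
    rw [integral_mul_const] at hle
    calc (∫ x, φ (x, t) ^ 2 * spatialDiv v x t) ≤ (∫ x, φ (x, t) ^ 2) * (-2 * β) := hle
      _ = (-2 * β) * Ef t := by rw [mul_comm]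
  -- Gronwall via monotonicity of exp(2βt) * Ef t
  set G : ℝ → ℝ := fun t => Real.exp (2 * β * t) * Ef t with hG
  have hGd : ∀ t, HasDerivAt G
      (Real.exp (2 * β * t) * (2 * β) * Ef t
        + Real.exp (2 * β * t) * (∫ x, 2 * φ (x, t) * Dt (x, t))) t := by
    intro t
    have hexp : HasDerivAt (fun s => Real.exp (2 * β * s)) (Real.exp (2 * β * t) * (2 * β)) t := by
      simpa using ((hasDerivAt_id t).const_mul (2 * β)).exp
    exact hexp.mul (hE' t)
  have hmono : Antitone G := by
    refine antitone_of_deriv_nonpos (fun t => (hGd t).differentiableAt) fun t => ?_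
    rw [(hGd t).deriv]
    have h1 := hE'le t
    have h2 := (Real.exp_pos (2 * β * t)).le
    nlinarith [mul_le_mul_of_nonneg_left h1 h2]
  intro t ht
  have hfin : G t ≤ G 0 := hmono ht
  have hG0 : G 0 = Ef 0 := by simp [hG]
  rw [hG0] at hfin
  have hpos := (Real.exp_pos (-2 * β * t)).le
  calc Ef t = Real.exp (-2 * β * t) * (Real.exp (2 * β * t) * Ef t) := by
        rw [← mul_assoc, ← Real.exp_add]
        ring_nf
        simp
    _ ≤ Real.exp (-2 * β * t) * Ef 0 := mul_le_mul_of_nonneg_left hfin hpos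
end

section
/- Let v : ℝ^m × ℝ → ℝ^m be continuously differentiable and let φ : ℝ^m × ℝ → ℝ be a continuously differentiable solution of the continuity equation ∂φ/∂t(x,t) + div_x(φ(x,t) v(x,t)) = 0 for all (x,t), supported for every t in a fixed compact set K ⊆ ℝ^m. Then t ↦ ∫_{ℝ^m} φ(x,t)² dx is differentiable with d/dt ∫_{ℝ^m} φ(x,t)² dx = − ∫_{ℝ^m} (div_x v)(x,t) φ(x,t)² dx. In particular, if (div_x v)(x,t) ≥ 0 everywhere, then t ↦ ∫_{ℝ^m} φ(x,t)² dx is nonincreasing. -/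
open MeasureTheory RealInnerProductSpace

section Helpers
variable {m : ℕ}

lemma fderiv_partial {F : EuclideanSpace ℝ (Fin m) × ℝ → ℝ} (hF : Differentiable ℝ F)
    (t : ℝ) (x w : EuclideanSpace ℝ (Fin m)) :
    fderiv ℝ (fun y => F (y, t)) x w = fderiv ℝ F (x, t) (w, 0) := by
  have h : HasFDerivAt (fun y => F (y, t))
      ((fderiv ℝ F (x, t)).comp ((ContinuousLinearMap.id ℝ _).prod 0)) x :=
    (hF (x, t)).hasFDerivAt.comp x ((hasFDerivAt_id x).prodMk (hasFDerivAt_const t x))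
  rw [h.fderiv]
  simp

lemma hasDerivAt_time {F : EuclideanSpace ℝ (Fin m) × ℝ → ℝ} (hF : Differentiable ℝ F)
    (x : EuclideanSpace ℝ (Fin m)) (t : ℝ) :
    HasDerivAt (fun s => F (x, s)) (fderiv ℝ F (x, t) (0, 1)) t := by
  have h := (hF (x, t)).hasFDerivAt.comp_hasDerivAt t
    ((hasDerivAt_const t x).prodMk (hasDerivAt_id t))
  exact h

lemma aux_integrable {G : EuclideanSpace ℝ (Fin m) → ℝ} (hG : ContDiff ℝ 1 G)
    {K : Set (EuclideanSpace ℝ (Fin m))} (hK : IsCompact K) (hs : Function.support G ⊆ K)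
    (w : EuclideanSpace ℝ (Fin m)) :
    Integrable (fun x => fderiv ℝ G x w) := by
  have hcs : HasCompactSupport G := HasCompactSupport.of_support_subset_isCompact hK hs
  exact ((hG.continuous_fderiv one_ne_zero).clm_apply continuous_const).integrable_of_hasCompactSupport
    (hcs.fderiv_apply ℝ w)

lemma aux_zero {G : EuclideanSpace ℝ (Fin m) → ℝ} (hG : ContDiff ℝ 1 G)
    {K : Set (EuclideanSpace ℝ (Fin m))} (hK : IsCompact K) (hs : Function.support G ⊆ K)
    (w : EuclideanSpace ℝ (Fin m)) :
    ∫ x, fderiv ℝ G x w = 0 := by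
  have hcs : HasCompactSupport G := HasCompactSupport.of_support_subset_isCompact hK hs
  have h := integral_mul_fderiv_eq_neg_fderiv_mul_of_integrable (μ := volume)
    (f := fun _ : EuclideanSpace ℝ (Fin m) => (1:ℝ)) (g := G) (v := w)
    (by simp) (by simpa using aux_integrable hG hK hs w)
    (by simpa using hG.continuous.integrable_of_hasCompactSupport hcs)
    (fun x _ => differentiableAt_const _) (fun x _ => (hG.differentiable one_ne_zero) x)
  simpa using h

end Helpers

theorem continuity_equation_L2_derivative {m : ℕ}
    (v : EuclideanSpace ℝ (Fin m) × ℝ → EuclideanSpace ℝ (Fin m))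
    (φ : EuclideanSpace ℝ (Fin m) × ℝ → ℝ)
    (hv : ContDiff ℝ 1 v) (hφ : ContDiff ℝ 1 φ)
    (hpde : ∀ x t, deriv (fun s => φ (x, s)) t
      + ∑ i, fderiv ℝ (fun y => φ (y, t) * v (y, t) i) x (EuclideanSpace.single i 1) = 0)
    (K : Set (EuclideanSpace ℝ (Fin m))) (hK : IsCompact K)
    (hsupp : ∀ t, Function.support (fun x => φ (x, t)) ⊆ K) :
    (∀ t, HasDerivAt (fun s => ∫ x, (φ (x, s)) ^ 2)
        (- ∫ x, spatialDiv v x t * (φ (x, t)) ^ 2) t) ∧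
      ((∀ x t, 0 ≤ spatialDiv v x t) → Antitone (fun t => ∫ x, (φ (x, t)) ^ 2)) := by
  -- basic differentiability facts
  have hφd : Differentiable ℝ φ := hφ.differentiable one_ne_zero
  have hvi : ∀ i, ContDiff ℝ 1 (fun p => v p i) := by
    intro i
    exact (EuclideanSpace.proj i).contDiff.comp hv
  have hvid : ∀ i, Differentiable ℝ (fun p : EuclideanSpace ℝ (Fin m) × ℝ => v p i) :=
    fun i => (hvi i).differentiable one_ne_zero
  -- partial maps in space are C¹
  have hslice : ∀ t : ℝ, ContDiff ℝ 1 (fun y : EuclideanSpace ℝ (Fin m) => (y, t)) := fun t =>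
    contDiff_id.prodMk contDiff_const
  have ha : ∀ t, ContDiff ℝ 1 (fun y => φ (y, t)) := fun t => hφ.comp (hslice t)
  have hb : ∀ i t, ContDiff ℝ 1 (fun y => v (y, t) i) := fun i t => (hvi i).comp (hslice t)
  -- zero outside K
  have hzero : ∀ x t, x ∉ K → φ (x, t) = 0 := by
    intro x t hx
    by_contra h0
    exact hx (hsupp t h0)
  -- compact support of x ↦ φ (x,t)^2
  have hsupp2 : ∀ t, Function.support (fun x => φ (x, t) ^ 2) ⊆ K := by
    intro t x hx
    by_contra hxK
    exact hx (by simp [hzero x t hxK])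
  have hcs2 : ∀ t, HasCompactSupport (fun x => φ (x, t) ^ 2) := fun t =>
    HasCompactSupport.of_support_subset_isCompact hK (hsupp2 t)
  -- continuity of the fderiv of φ
  have hDφ : Continuous (fderiv ℝ φ) := hφ.continuous_fderiv one_ne_zero
  -- time derivative of φ in second variable
  have htime : ∀ x t, HasDerivAt (fun s => φ (x, s)) (fderiv ℝ φ (x, t) (0, 1)) t :=
    fun x t => hasDerivAt_time hφd x t
  -- the candidate derivative function
  set ψ : EuclideanSpace ℝ (Fin m) → ℝ → ℝ := fun x t => fderiv ℝ φ (x, t) (0, 1) with hψdef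
  have hψcont : Continuous (fun p : EuclideanSpace ℝ (Fin m) × ℝ => ψ p.1 p.2) := by
    exact (hDφ.clm_apply continuous_const)
  -- Step A : differentiation under the integral sign
  have stepA : ∀ t, HasDerivAt (fun s => ∫ x, (φ (x, s)) ^ 2)
      (∫ x, 2 * φ (x, t) * ψ x t) t := by
    intro t
    obtain ⟨C, hC⟩ : ∃ C, ∀ p ∈ K ×ˢ Set.Icc (t - 1) (t + 1),
        ‖2 * φ p * ψ p.1 p.2‖ ≤ C := by
      apply (hK.prod isCompact_Icc).exists_bound_of_continuousOn
      exact (((continuous_const.mul hφ.continuous).mul hψcont)).continuousOn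
    set bound : EuclideanSpace ℝ (Fin m) → ℝ := K.indicator fun _ => max C 0 with hbdef
    have hCnonneg : ∀ a, 0 ≤ bound a := by
      intro a
      by_cases h : a ∈ K
      · simp [hbdef, Set.indicator_of_mem h, le_max_right]
      · simp [hbdef, Set.indicator_of_notMem h]
    have main := hasDerivAt_integral_of_dominated_loc_of_deriv_le (μ := volume)
      (F := fun s x => φ (x, s) ^ 2) (F' := fun s x => 2 * φ (x, s) * ψ x s)
      (x₀ := t) (bound := bound) (s := Metric.ball t 1) (Metric.ball_mem_nhds t one_pos)
      (Filter.Eventually.of_forall fun s =>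
        ((hφ.continuous.comp (continuous_id.prodMk continuous_const)).pow 2).aestronglyMeasurable)
      (((ha t).continuous.pow 2).integrable_of_hasCompactSupport (hcs2 t))
      (((continuous_const.mul (hφ.continuous.comp (continuous_id.prodMk continuous_const))).mul
        (hψcont.comp (continuous_id.prodMk continuous_const))).aestronglyMeasurable)
      ?_ ?_ ?_
    · exact main.2
    · -- bound
      apply Filter.Eventually.of_forall
      intro a s hs
      by_cases h : a ∈ K
      · have hmem : (a, s) ∈ K ×ˢ Set.Icc (t - 1) (t + 1) := by
          refine ⟨h, ?_⟩
          have := Metric.mem_ball.mp hs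
          rw [Real.dist_eq] at this
          constructor <;> [linarith [abs_lt.mp this]; linarith [abs_lt.mp this]]
        calc ‖2 * φ (a, s) * ψ a s‖ ≤ max C 0 := (hC _ hmem).trans (le_max_left _ _)
        _ = bound a := by simp [hbdef, Set.indicator_of_mem h]
      · have h0 : φ (a, s) = 0 := hzero a s h
        simp only [h0, mul_zero, zero_mul, norm_zero]
        exact hCnonneg a
    · -- integrable bound
      rw [hbdef, integrable_indicator_iff hK.measurableSet]
      exact integrableOn_const hK.measure_lt_top.ne
    · -- differentiability
      apply Filter.Eventually.of_forall
      intro a s hs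
      have h := (htime a s).fun_pow 2
      convert h using 1
      · rfl
      push_cast
      ring
  -- Step B : identify the derivative
  have stepB : ∀ t, ∫ x, 2 * φ (x, t) * ψ x t
      = - ∫ x, spatialDiv v x t * φ (x, t) ^ 2 := by
    intro t
    -- pointwise identity
    have hpoint : ∀ x, 2 * φ (x, t) * ψ x t
        = (- ∑ i, fderiv ℝ (fun y => φ (y, t) ^ 2 * v (y, t) i) x (EuclideanSpace.single i 1))
          - spatialDiv v x t * φ (x, t) ^ 2 := by
      intro x
      have hp := hpde x t
      have hd : deriv (fun s => φ (x, s)) t = ψ x t := (htime x t).deriv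
      have hψeq : ψ x t
          = - ∑ i, fderiv ℝ (fun y => φ (y, t) * v (y, t) i) x (EuclideanSpace.single i 1) := by
        rw [← hd]; linarith
      have hitem : ∀ i : Fin m,
          2 * φ (x, t) * fderiv ℝ (fun y => φ (y, t) * v (y, t) i) x (EuclideanSpace.single i 1)
          = fderiv ℝ (fun y => φ (y, t) ^ 2 * v (y, t) i) x (EuclideanSpace.single i 1)
            + φ (x, t) ^ 2 * fderiv ℝ (fun y => v (y, t) i) x (EuclideanSpace.single i 1) := by
        intro i
        have da : DifferentiableAt ℝ (fun y => φ (y, t)) x :=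
          ((ha t).differentiable one_ne_zero) x
        have db : DifferentiableAt ℝ (fun y => v (y, t) i) x :=
          ((hb i t).differentiable one_ne_zero) x
        have H1 : fderiv ℝ (fun y => φ (y, t) * v (y, t) i) x
            = φ (x, t) • fderiv ℝ (fun y => v (y, t) i) x
              + v (x, t) i • fderiv ℝ (fun y => φ (y, t)) x := fderiv_fun_mul da db
        have H2 : fderiv ℝ (fun y => φ (y, t) ^ 2 * v (y, t) i) x
            = fderiv ℝ (fun y => (φ (y, t) * φ (y, t)) * v (y, t) i) x := by
          simp only [pow_two]
        have H3 : fderiv ℝ (fun y => (φ (y, t) * φ (y, t)) * v (y, t) i) x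
            = (φ (x, t) * φ (x, t)) • fderiv ℝ (fun y => v (y, t) i) x
              + v (x, t) i • fderiv ℝ (fun y => φ (y, t) * φ (y, t)) x :=
          fderiv_fun_mul (da.mul da) db
        have H4 : fderiv ℝ (fun y => φ (y, t) * φ (y, t)) x
            = φ (x, t) • fderiv ℝ (fun y => φ (y, t)) x
              + φ (x, t) • fderiv ℝ (fun y => φ (y, t)) x := fderiv_fun_mul da da
        rw [H2, H3, H4, H1]
        simp only [ContinuousLinearMap.add_apply, ContinuousLinearMap.coe_smul',
          Pi.smul_apply, smul_eq_mul]
        ring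
      rw [hψeq, spatialDiv, mul_neg, Finset.mul_sum, Finset.sum_congr rfl fun i _ => hitem i,
        Finset.sum_add_distrib, ← Finset.mul_sum]
      ring
    -- integrability facts
    have hGc : ∀ i : Fin m, ContDiff ℝ 1 (fun y => φ (y, t) ^ 2 * v (y, t) i) := fun i =>
      ((ha t).pow 2).mul (hb i t)
    have hGsupp : ∀ i : Fin m,
        Function.support (fun y => φ (y, t) ^ 2 * v (y, t) i) ⊆ K := by
      intro i y hy
      by_contra hyK
      exact hy (by simp [hzero y t hyK])
    have hint1 : ∀ i : Fin m, Integrable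
        (fun x => fderiv ℝ (fun y => φ (y, t) ^ 2 * v (y, t) i) x (EuclideanSpace.single i 1)) :=
      fun i => aux_integrable (hGc i) hK (hGsupp i) _
    have hdivcont : Continuous (fun x => spatialDiv v x t) := by
      have : (fun x => spatialDiv v x t)
          = fun x => ∑ i, fderiv ℝ (fun p => v p i) (x, t) (EuclideanSpace.single i 1, 0) := by
        funext x
        rw [spatialDiv]
        exact Finset.sum_congr rfl fun i _ => fderiv_partial (hvid i) t x _
      rw [this]
      apply continuous_finset_sum
      intro i _
      exact ((((hvi i).continuous_fderiv one_ne_zero).comp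
        (continuous_id.prodMk continuous_const)).clm_apply continuous_const)
    have hint2 : Integrable (fun x => spatialDiv v x t * φ (x, t) ^ 2) := by
      apply (hdivcont.mul ((ha t).continuous.pow 2)).integrable_of_hasCompactSupport
      exact (hcs2 t).mul_left
    have hintsum : Integrable (fun x => ∑ i,
        fderiv ℝ (fun y => φ (y, t) ^ 2 * v (y, t) i) x (EuclideanSpace.single i 1)) :=
      integrable_finset_sum _ fun i _ => hint1 i
    calc ∫ x, 2 * φ (x, t) * ψ x t
        = ∫ x, ((- ∑ i, fderiv ℝ (fun y => φ (y, t) ^ 2 * v (y, t) i) x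
            (EuclideanSpace.single i 1)) - spatialDiv v x t * φ (x, t) ^ 2) :=
          integral_congr_ae (Filter.Eventually.of_forall hpoint)
      _ = (∫ x, - ∑ i, fderiv ℝ (fun y => φ (y, t) ^ 2 * v (y, t) i) x
            (EuclideanSpace.single i 1)) - ∫ x, spatialDiv v x t * φ (x, t) ^ 2 :=
          integral_sub hintsum.neg hint2
      _ = - ∫ x, spatialDiv v x t * φ (x, t) ^ 2 := by
          rw [integral_neg, integral_finset_sum _ fun i _ => hint1 i]
          have hz : ∀ i : Fin m, ∫ x, fderiv ℝ (fun y => φ (y, t) ^ 2 * v (y, t) i) x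
              (EuclideanSpace.single i 1) = 0 :=
            fun i => aux_zero (hGc i) hK (hGsupp i) _
          simp [hz]
  -- conclusion
  have hmain : ∀ t, HasDerivAt (fun s => ∫ x, (φ (x, s)) ^ 2)
      (- ∫ x, spatialDiv v x t * (φ (x, t)) ^ 2) t := by
    intro t
    have := stepA t
    rwa [stepB t] at this
  refine ⟨hmain, fun hdiv => ?_⟩
  apply antitone_of_deriv_nonpos
  · exact fun t => (hmain t).differentiableAt
  · intro t
    rw [(hmain t).deriv]
    simp only [neg_nonpos]
    apply integral_nonneg
    intro x
    exact mul_nonneg (hdiv x t) (sq_nonneg _)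
end

section
/- Let h : ℝ × ℝ^m × ℝ → ℝ, (u,x,t) ↦ h(u,x,t), be continuously differentiable, let v : ℝ^m × ℝ → ℝ^m be continuously differentiable, and suppose there is a constant β > 0 such that ∂h/∂u(u,x,t) − ½ (div_x v)(x,t) ≥ β for all (u,x,t). Let φ₁, φ₂ : ℝ^m × ℝ → ℝ be continuously differentiable solutions of the reaction–convection equation ∂φ/∂t(x,t) + h(φ(x,t),x,t) + v(x,t)·∇φ(x,t) = 0, such that φ₁(·,t) − φ₂(·,t) is supported in a fixed compact set K ⊆ ℝ^m for every t. Then for all t ≥ 0, ∫_{ℝ^m} (φ₁(x,t) − φ₂(x,t))² dx ≤ e^{−2βt} ∫_{ℝ^m} (φ₁(x,0) − φ₂(x,0))² dx. -/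
open MeasureTheory RealInnerProductSpace

set_option maxHeartbeats 2000000 in
private def RCC_insCurve {n : ℕ} (i : Fin (n+1)) (c : Fin n → ℝ) (y : ℝ) : Fin (n+1) → ℝ :=
  i.insertNth y c

set_option maxHeartbeats 2000000 in
private lemma RCC_curve_hasDerivAt {n : ℕ} (i : Fin (n+1)) (c : Fin n → ℝ) (y : ℝ) :
    HasDerivAt (RCC_insCurve i c) (Pi.single i 1 : Fin (n+1) → ℝ) y := by
  have key : RCC_insCurve i c
      = fun y : ℝ => RCC_insCurve i c 0 + y • (Pi.single i 1 : Fin (n+1) → ℝ) := by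
    funext y; ext j
    rcases eq_or_ne j i with rfl | hj
    · simp [RCC_insCurve]
    · rcases Fin.exists_succAbove_eq hj with ⟨k, rfl⟩
      simp [RCC_insCurve, Pi.single_eq_of_ne hj]
  rw [key]
  simpa using ((hasDerivAt_id y).smul_const (Pi.single i 1 : Fin (n+1) → ℝ)).const_add
    (RCC_insCurve i c 0)

set_option maxHeartbeats 2000000 in
private lemma RCC_integral_fderiv_pi_single {n : ℕ} (f : (Fin (n+1) → ℝ) → ℝ)
    (hf : ContDiff ℝ 1 f) (hsupp : HasCompactSupport f) (i : Fin (n+1)) :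
    ∫ x, fderiv ℝ f x (Pi.single i 1) = 0 := by
  set G : (Fin (n+1) → ℝ) → ℝ := fun x => fderiv ℝ f x (Pi.single i 1) with hG
  have hGcont : Continuous G := (hf.continuous_fderiv one_ne_zero).clm_apply continuous_const
  have hGsupp : HasCompactSupport G := by
    have h2 := hsupp.fderiv (𝕜 := ℝ)
    exact h2.comp_left (g := fun L : (Fin (n+1) → ℝ) →L[ℝ] ℝ => L (Pi.single i 1)) rfl
  have hGint : Integrable G := hGcont.integrable_of_hasCompactSupport hGsupp
  have key : ∀ c : Fin n → ℝ, ∫ y : ℝ, G (RCC_insCurve i c y) = 0 := by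
    intro c
    have hder : ∀ y : ℝ,
        HasDerivAt (fun y => f (RCC_insCurve i c y)) (G (RCC_insCurve i c y)) y :=
      fun y => ((hf.differentiable one_ne_zero _).hasFDerivAt).comp_hasDerivAt y
        (RCC_curve_hasDerivAt i c y)
    obtain ⟨R, hR⟩ := hsupp.isBounded.subset_closedBall (0 : Fin (n+1) → ℝ)
    have hbd : ∀ y : ℝ, y ∉ Set.Icc (-R) R → RCC_insCurve i c y ∉ tsupport f := by
      intro y hy hmem
      have h3 := hR hmem
      rw [Metric.mem_closedBall, dist_zero_right] at h3
      have h1 : |y| ≤ R := by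
        have h4 := (norm_le_pi_norm (RCC_insCurve i c y) i).trans h3
        simpa [RCC_insCurve] using h4
      exact hy ⟨neg_le_of_abs_le h1, le_of_abs_le h1⟩
    have hcurve : Continuous (RCC_insCurve i c) :=
      continuous_iff_continuousAt.2 fun y => (RCC_curve_hasDerivAt i c y).continuousAt
    have hFsupp : HasCompactSupport (fun y => f (RCC_insCurve i c y)) :=
      HasCompactSupport.intro (isCompact_Icc (a := -R) (b := R)) (fun y hy =>
        image_eq_zero_of_notMem_tsupport (hbd y hy))
    have hF'supp : HasCompactSupport (fun y => G (RCC_insCurve i c y)) := by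
      refine HasCompactSupport.intro (isCompact_Icc (a := -R) (b := R)) (fun y hy => ?_)
      have hzero : fderiv ℝ f (RCC_insCurve i c y) = 0 := by
        have hz : f =ᶠ[nhds (RCC_insCurve i c y)] 0 :=
          notMem_tsupport_iff_eventuallyEq.1 (hbd y hy)
        rw [hz.fderiv_eq]; exact fderiv_const_apply 0
      simp [hG, hzero]
    have hFint : Integrable (fun y => f (RCC_insCurve i c y)) :=
      ((hf.continuous).comp hcurve).integrable_of_hasCompactSupport hFsupp
    have hF'int : Integrable (fun y => G (RCC_insCurve i c y)) :=
      (hGcont.comp hcurve).integrable_of_hasCompactSupport hF'supp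
    exact integral_eq_zero_of_hasDerivAt_of_integrable hder hF'int hFint
  set e := MeasurableEquiv.piFinSuccAbove (fun _ : Fin (n+1) => ℝ) i with he
  have hmeas : MeasurePreserving e := volume_preserving_piFinSuccAbove _ i
  have h1 : ∫ x, G x = ∫ p : ℝ × (Fin n → ℝ), G (e.symm p) :=
    ((hmeas.symm e).integral_comp e.symm.measurableEmbedding G).symm
  have hint2 : Integrable (G ∘ e.symm) :=
    ((hmeas.symm e).integrable_comp_emb e.symm.measurableEmbedding).2 hGint
  rw [h1]
  rw [show (volume : Measure (ℝ × (Fin n → ℝ))) = Measure.prod volume volume from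
    Measure.volume_eq_prod ℝ (Fin n → ℝ)]
  rw [integral_prod_symm (fun p : ℝ × (Fin n → ℝ) => G (e.symm p))
    (by rw [← Measure.volume_eq_prod ℝ (Fin n → ℝ)]; exact hint2)]
  have hes : ∀ (y : ℝ) (c : Fin n → ℝ), e.symm (y, c) = RCC_insCurve i c y := fun y c => rfl
  simp only [hes, key, integral_zero]

set_option maxHeartbeats 2000000 in
private lemma RCC_euc_integral_fderiv_single {m : ℕ} (f : EuclideanSpace ℝ (Fin m) → ℝ)
    (hf : ContDiff ℝ 1 f) (hsupp : HasCompactSupport f) (i : Fin m) :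
    ∫ x, fderiv ℝ f x (EuclideanSpace.single i 1) = 0 := by
  cases m with
  | zero => exact i.elim0
  | succ n =>
    set iso := (EuclideanSpace.equiv (Fin (n+1)) ℝ).symm with hiso
    have hg : ContDiff ℝ 1 (f ∘ iso) := hf.comp iso.contDiff
    have hgs : HasCompactSupport (f ∘ iso) :=
      hsupp.comp_isClosedEmbedding iso.toHomeomorph.isClosedEmbedding
    have hkey := RCC_integral_fderiv_pi_single (f ∘ iso) hg hgs i
    have h2 : ∀ x : Fin (n+1) → ℝ,
        fderiv ℝ (f ∘ iso) x (Pi.single i 1)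
          = fderiv ℝ f (iso x) (EuclideanSpace.single i 1) := by
      intro x
      rw [iso.comp_right_fderiv]
      rfl
    have hmp := (EuclideanSpace.volume_preserving_symm_measurableEquiv_toLp (Fin (n+1))).symm
    have h3 := hmp.integral_comp (MeasurableEquiv.measurableEmbedding _)
      (fun z => fderiv ℝ f z (EuclideanSpace.single i 1))
    have h4 : ∀ x : Fin (n+1) → ℝ,
        (MeasurableEquiv.toLp 2 (Fin (n+1) → ℝ)).symm.symm x = iso x := fun x => rfl
    rw [← h3]
    simp only [h4]
    rw [← hkey]
    exact integral_congr_ae (Filter.Eventually.of_forall fun x => (h2 x).symm)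

private lemma RCC_euc_sum_single (m : ℕ) (z : EuclideanSpace ℝ (Fin m)) :
    ∑ i, z i • EuclideanSpace.single i (1:ℝ) = z := by
  have hb := (EuclideanSpace.basisFun (Fin m) ℝ).sum_repr z
  simpa [EuclideanSpace.basisFun_apply, EuclideanSpace.basisFun_repr] using hb

set_option maxHeartbeats 2000000 in
private lemma RCC_ibp_lemma {m : ℕ} (w : EuclideanSpace ℝ (Fin m) → EuclideanSpace ℝ (Fin m))
    (hw : ContDiff ℝ 1 w) (g : EuclideanSpace ℝ (Fin m) → ℝ) (hg : ContDiff ℝ 1 g)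
    (hgs : HasCompactSupport g) :
    ∫ x, (fderiv ℝ g x (w x)
      + g x * ∑ i, fderiv ℝ (fun y => w y i) x (EuclideanSpace.single i 1)) = 0 := by
  classical
  set fi : Fin m → EuclideanSpace ℝ (Fin m) → ℝ := fun i x => g x * w x i with hfi
  have hwi : ∀ i, ContDiff ℝ 1 (fun x => w x i) :=
    fun i => ((EuclideanSpace.proj i : EuclideanSpace ℝ (Fin m) →L[ℝ] ℝ).contDiff).comp hw
  have hfic : ∀ i, ContDiff ℝ 1 (fi i) := fun i => hg.mul (hwi i)
  have hfis : ∀ i, HasCompactSupport (fi i) := fun i => hgs.mul_right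
  have hzero : ∀ i, ∫ x, fderiv ℝ (fi i) x (EuclideanSpace.single i 1) = 0 :=
    fun i => RCC_euc_integral_fderiv_single (fi i) (hfic i) (hfis i) i
  have hderiv : ∀ (i) (x), fderiv ℝ (fi i) x
      = g x • fderiv ℝ (fun y => w y i) x + w x i • fderiv ℝ g x := by
    intro i x
    exact (((hg.differentiable one_ne_zero x).hasFDerivAt).mul
      ((hwi i).differentiable one_ne_zero x |>.hasFDerivAt)).fderiv
  have hptwise : ∀ x, (fderiv ℝ g x (w x)
      + g x * ∑ i, fderiv ℝ (fun y => w y i) x (EuclideanSpace.single i 1))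
      = ∑ i, fderiv ℝ (fi i) x (EuclideanSpace.single i 1) := by
    intro x
    have h1 : fderiv ℝ g x (w x)
        = ∑ i, w x i * fderiv ℝ g x (EuclideanSpace.single i 1) := by
      conv_lhs => rw [← RCC_euc_sum_single m (w x)]
      rw [map_sum]
      simp [smul_eq_mul]
    rw [h1, Finset.mul_sum]
    rw [← Finset.sum_add_distrib]
    congr 1; funext i
    rw [hderiv i x]
    simp [smul_eq_mul]
    ring
  have hint : ∀ i, Integrable (fun x => fderiv ℝ (fi i) x (EuclideanSpace.single i 1)) := by
    intro i
    refine Continuous.integrable_of_hasCompactSupport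
      (((hfic i).continuous_fderiv one_ne_zero).clm_apply continuous_const) ?_
    exact ((hfis i).fderiv (𝕜 := ℝ)).comp_left
      (g := fun L : EuclideanSpace ℝ (Fin m) →L[ℝ] ℝ => L (EuclideanSpace.single i 1)) rfl
  calc ∫ x, (fderiv ℝ g x (w x)
      + g x * ∑ i, fderiv ℝ (fun y => w y i) x (EuclideanSpace.single i 1))
      = ∫ x, ∑ i, fderiv ℝ (fi i) x (EuclideanSpace.single i 1) :=
        integral_congr_ae (Filter.Eventually.of_forall hptwise)
    _ = ∑ i, ∫ x, fderiv ℝ (fi i) x (EuclideanSpace.single i 1) :=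
        integral_finset_sum _ (fun i _ => hint i)
    _ = 0 := by simp [hzero]

private lemma RCC_mvt_ineq (f : ℝ → ℝ) (hf : Differentiable ℝ f) (c : ℝ)
    (hder : ∀ u, c ≤ deriv f u) (a b : ℝ) : c * (a - b)^2 ≤ (a - b) * (f a - f b) := by
  rcases lt_trichotomy a b with hab | hab | hab
  · obtain ⟨u, _, hu⟩ := exists_hasDerivAt_eq_slope f (deriv f) hab
      hf.continuous.continuousOn (fun u _ => (hf u).hasDerivAt)
    have hne : b - a > 0 := sub_pos.2 hab
    have heq : f b - f a = deriv f u * (b - a) := by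
      field_simp at hu; linarith [hu]
    nlinarith [hder u, sq_nonneg (a - b)]
  · simp [hab]
  · obtain ⟨u, _, hu⟩ := exists_hasDerivAt_eq_slope f (deriv f) hab
      hf.continuous.continuousOn (fun u _ => (hf u).hasDerivAt)
    have hne : a - b > 0 := sub_pos.2 hab
    have heq : f a - f b = deriv f u * (a - b) := by
      field_simp at hu; linarith [hu]
    nlinarith [hder u, sq_nonneg (a - b)]

theorem reaction_convection_contraction {m : ℕ} (β : ℝ) (hβ : 0 < β)
    (h : ℝ → EuclideanSpace ℝ (Fin m) → ℝ → ℝ)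
    (v : EuclideanSpace ℝ (Fin m) × ℝ → EuclideanSpace ℝ (Fin m))
    (hh : ContDiff ℝ 1 (fun q : ℝ × EuclideanSpace ℝ (Fin m) × ℝ => h q.1 q.2.1 q.2.2))
    (hv : ContDiff ℝ 1 v)
    (hcontr : ∀ (u : ℝ) (x : EuclideanSpace ℝ (Fin m)) (t : ℝ),
      β ≤ deriv (fun w => h w x t) u - (1 / 2) * spatialDiv v x t)
    (φ₁ φ₂ : EuclideanSpace ℝ (Fin m) × ℝ → ℝ)
    (hφ₁ : ContDiff ℝ 1 φ₁) (hφ₂ : ContDiff ℝ 1 φ₂)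
    (hpde₁ : ∀ x t, deriv (fun s => φ₁ (x, s)) t + h (φ₁ (x, t)) x t
      + ⟪v (x, t), gradient (fun y => φ₁ (y, t)) x⟫ = 0)
    (hpde₂ : ∀ x t, deriv (fun s => φ₂ (x, s)) t + h (φ₂ (x, t)) x t
      + ⟪v (x, t), gradient (fun y => φ₂ (y, t)) x⟫ = 0)
    (K : Set (EuclideanSpace ℝ (Fin m))) (hK : IsCompact K)
    (hsupp : ∀ t, Function.support (fun x => φ₁ (x, t) - φ₂ (x, t)) ⊆ K) :
    ∀ t ≥ (0 : ℝ),
      ∫ x, (φ₁ (x, t) - φ₂ (x, t)) ^ 2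
        ≤ Real.exp (-2 * β * t) * ∫ x, (φ₁ (x, 0) - φ₂ (x, 0)) ^ 2 := by
  have hψ : ContDiff ℝ 1 (fun p : EuclideanSpace ℝ (Fin m) × ℝ => φ₁ p - φ₂ p) := hφ₁.sub hφ₂
  set ψ : EuclideanSpace ℝ (Fin m) × ℝ → ℝ := fun p => φ₁ p - φ₂ p with hψdef
  -- vanishing of ψ outside K
  have hψK : ∀ (t : ℝ) (x : EuclideanSpace ℝ (Fin m)), x ∉ K → ψ (x, t) = 0 := by
    intro t x hx
    by_contra hne
    exact hx ((Function.support_subset_iff.1 (hsupp t)) x hne)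
  -- integrability helper
  have integrable_K : ∀ (f : EuclideanSpace ℝ (Fin m) → ℝ), Continuous f →
      (∀ x ∉ K, f x = 0) → Integrable f := by
    intro f hc h0
    exact hc.integrable_of_hasCompactSupport (HasCompactSupport.intro hK h0)
  -- slices are C¹
  have hslice : ∀ (f : EuclideanSpace ℝ (Fin m) × ℝ → ℝ), ContDiff ℝ 1 f →
      ∀ t : ℝ, ContDiff ℝ 1 (fun y => f (y, t)) :=
    fun f hf t => hf.comp (contDiff_id.prodMk contDiff_const)
  -- time derivative of slices
  have htime : ∀ (f : EuclideanSpace ℝ (Fin m) × ℝ → ℝ), ContDiff ℝ 1 f →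
      ∀ (x : EuclideanSpace ℝ (Fin m)) (t : ℝ),
      HasDerivAt (fun s => f (x, s)) (fderiv ℝ f (x, t) (0, 1)) t := by
    intro f hf x t
    have hcurve : HasDerivAt (fun s : ℝ => ((x, s) : EuclideanSpace ℝ (Fin m) × ℝ))
        ((0 : EuclideanSpace ℝ (Fin m)), (1 : ℝ)) t :=
      (hasDerivAt_const t x).prodMk (hasDerivAt_id t)
    exact (hf.differentiable one_ne_zero _).hasFDerivAt.comp_hasDerivAt t hcurve
  -- inner product with gradient is fderiv
  have hinner : ∀ (f : EuclideanSpace ℝ (Fin m) → ℝ) (x w : EuclideanSpace ℝ (Fin m)),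
      ⟪w, gradient f x⟫ = fderiv ℝ f x w := by
    intro f x w
    rw [real_inner_comm]
    unfold gradient
    exact InnerProductSpace.toDual_symm_apply
  -- PDE satisfied by ψ
  have hpsi_t : ∀ (x : EuclideanSpace ℝ (Fin m)) (t : ℝ),
      fderiv ℝ ψ (x, t) (0, 1)
        = -(h (φ₁ (x, t)) x t - h (φ₂ (x, t)) x t)
          - fderiv ℝ (fun y => ψ (y, t)) x (v (x, t)) := by
    intro x t
    have e₁ := hpde₁ x t
    have e₂ := hpde₂ x t
    rw [(htime φ₁ hφ₁ x t).deriv] at e₁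
    rw [(htime φ₂ hφ₂ x t).deriv] at e₂
    rw [hinner (fun y => φ₁ (y, t)) x (v (x, t))] at e₁
    rw [hinner (fun y => φ₂ (y, t)) x (v (x, t))] at e₂
    have hsub_t : fderiv ℝ ψ (x, t) ((0 : EuclideanSpace ℝ (Fin m)), (1:ℝ))
        = fderiv ℝ φ₁ (x, t) (0, 1) - fderiv ℝ φ₂ (x, t) (0, 1) := by
      rw [hψdef, fderiv_fun_sub (hφ₁.differentiable one_ne_zero _) (hφ₂.differentiable one_ne_zero _)]
      rfl
    have hsub_x : fderiv ℝ (fun y => ψ (y, t)) x (v (x, t))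
        = fderiv ℝ (fun y => φ₁ (y, t)) x (v (x, t))
          - fderiv ℝ (fun y => φ₂ (y, t)) x (v (x, t)) := by
      rw [show (fun y => ψ (y, t)) = fun y => φ₁ (y, t) - φ₂ (y, t) from rfl]
      rw [fderiv_fun_sub ((hslice φ₁ hφ₁ t).differentiable one_ne_zero x)
        ((hslice φ₂ hφ₂ t).differentiable one_ne_zero x)]
      rfl
    rw [hsub_t, hsub_x]
    linarith
  -- continuity facts
  have hψc : Continuous ψ := hψ.continuous
  have hDtc : Continuous (fun p : EuclideanSpace ℝ (Fin m) × ℝ => fderiv ℝ ψ p (0, 1)) :=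
    (hψ.continuous_fderiv one_ne_zero).clm_apply continuous_const
  -- the energy and its derivative
  set Efun : ℝ → ℝ := fun t => ∫ x, ψ (x, t) ^ 2 with hEdef
  set E' : ℝ → ℝ := fun t => ∫ x, 2 * ψ (x, t) * fderiv ℝ ψ (x, t) (0, 1) with hE'def
  have hE : ∀ t₀ : ℝ, HasDerivAt Efun (E' t₀) t₀ := by
    intro t₀
    have hS : IsCompact (K ×ˢ Set.Icc (t₀ - 1) (t₀ + 1)) := hK.prod isCompact_Icc
    have hcont2 : Continuous (fun p : EuclideanSpace ℝ (Fin m) × ℝ =>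
        2 * ψ p * fderiv ℝ ψ p (0, 1)) :=
      ((continuous_const.mul hψc).mul hDtc)
    obtain ⟨C, hC⟩ := hS.exists_bound_of_continuousOn hcont2.continuousOn
    have key := hasDerivAt_integral_of_dominated_loc_of_deriv_le (s := Metric.ball t₀ 1) (Metric.ball_mem_nhds t₀ one_pos)
      (F := fun t x => ψ (x, t) ^ 2)
      (F' := fun t x => 2 * ψ (x, t) * fderiv ℝ ψ (x, t) (0, 1))
      (bound := K.indicator fun _ => C)
      (Filter.Eventually.of_forall fun t =>
        ((hψc.comp (continuous_id.prodMk continuous_const)).pow 2).aestronglyMeasurable)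
      (integrable_K (fun x => ψ (x, t₀) ^ 2)
        (((hψc.comp (continuous_id.prodMk continuous_const)).pow 2))
        (fun x hx => by simp [hψK t₀ x hx]))
      ((hcont2.comp (continuous_id.prodMk continuous_const)).aestronglyMeasurable)
      (Filter.Eventually.of_forall fun x => by
        intro s hs
        by_cases hx : x ∈ K
        · rw [Set.indicator_of_mem hx]
          refine hC (x, s) ⟨hx, ?_⟩
          rw [Metric.mem_ball, Real.dist_eq] at hs
          constructor <;> [linarith [abs_lt.1 hs]; linarith [abs_lt.1 hs]]
        · rw [Set.indicator_of_notMem hx]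
          simp [hψK s x hx])
      ((integrable_indicator_iff hK.measurableSet).2
        (integrableOn_const hK.measure_lt_top.ne))
      (Filter.Eventually.of_forall fun x => by
        intro s hs
        have hp : HasDerivAt (fun s => ψ (x, s) ^ 2) _ s := (htime ψ hψ x s).pow 2
        simpa using hp)
    exact key.2
  -- derivative bound
  have hE'le : ∀ t : ℝ, E' t ≤ -(2 * β) * Efun t := by
    intro t
    -- spatial objects at time t
    have hgc : ContDiff ℝ 1 (fun y => ψ (y, t) ^ 2) := (hslice ψ hψ t).pow 2
    have hgsupp : HasCompactSupport (fun y => ψ (y, t) ^ 2) :=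
      HasCompactSupport.intro hK (fun x hx => by simp [hψK t x hx])
    have hwc : ContDiff ℝ 1 (fun y => v (y, t)) := hv.comp (contDiff_id.prodMk contDiff_const)
    have hibp := RCC_ibp_lemma (fun y => v (y, t)) hwc (fun y => ψ (y, t) ^ 2) hgc hgsupp
    -- identify the divergence
    have hdiv_eq : ∀ x : EuclideanSpace ℝ (Fin m),
        (∑ i, fderiv ℝ (fun y => v (y, t) i) x (EuclideanSpace.single i 1))
          = spatialDiv v x t := fun x => rfl
    -- fderiv of the squared slice
    have hsq : ∀ x : EuclideanSpace ℝ (Fin m),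
        fderiv ℝ (fun y => ψ (y, t) ^ 2) x
          = (2 * ψ (x, t)) • fderiv ℝ (fun y => ψ (y, t)) x := by
      intro x
      have hat := ((hslice ψ hψ t).differentiable one_ne_zero x).hasFDerivAt
      have hmul : HasFDerivAt (fun y => ψ (y, t) * ψ (y, t)) _ x := hat.mul hat
      have : (fun y => ψ (y, t) ^ 2) = fun y => ψ (y, t) * ψ (y, t) := by
        funext y; ring
      rw [this, hmul.fderiv]
      ext z
      simp [smul_eq_mul]
      ring
    -- continuity of the divergence
    have hdivc : Continuous (fun x => spatialDiv v x t) := by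
      simp only [spatialDiv]
      refine continuous_finset_sum _ fun i _ => ?_
      have hvi : ContDiff ℝ 1 (fun y => v (y, t) i) :=
        ((EuclideanSpace.proj i : EuclideanSpace ℝ (Fin m) →L[ℝ] ℝ).contDiff).comp hwc
      exact (hvi.continuous_fderiv one_ne_zero).clm_apply continuous_const
    -- fderiv of slice vanishes off K
    have hfd0 : ∀ x ∉ K, fderiv ℝ (fun y => ψ (y, t) ^ 2) x = 0 := by
      intro x hx
      have hz : (fun y => ψ (y, t) ^ 2) =ᶠ[nhds x] 0 := by
        refine Filter.eventually_of_mem (hK.isClosed.isOpen_compl.mem_nhds hx) ?_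
        intro y hy
        simp [hψK t y hy]
      rw [hz.fderiv_eq]; exact fderiv_const_apply 0
    -- integrability of the pieces
    have hΔhc : Continuous (fun x => h (φ₁ (x, t)) x t - h (φ₂ (x, t)) x t) := by
      have hH := hh.continuous
      have c1 : Continuous (fun x : EuclideanSpace ℝ (Fin m) => h (φ₁ (x, t)) x t) :=
        hH.comp (((hφ₁.continuous).comp (continuous_id.prodMk continuous_const)).prodMk
          (continuous_id.prodMk continuous_const))
      have c2 : Continuous (fun x : EuclideanSpace ℝ (Fin m) => h (φ₂ (x, t)) x t) :=
        hH.comp (((hφ₂.continuous).comp (continuous_id.prodMk continuous_const)).prodMk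
          (continuous_id.prodMk continuous_const))
      exact c1.sub c2
    have hψtc : Continuous (fun x => ψ (x, t)) := hψc.comp (continuous_id.prodMk continuous_const)
    have I1 : Integrable (fun x => 2 * ψ (x, t) * fderiv ℝ ψ (x, t) (0, 1)) := by
      refine integrable_K _ ((continuous_const.mul hψtc).mul
        (hDtc.comp (continuous_id.prodMk continuous_const))) (fun x hx => by simp [hψK t x hx])
    have I2 : Integrable (fun x =>
        -2 * ψ (x, t) * (h (φ₁ (x, t)) x t - h (φ₂ (x, t)) x t)) := by
      refine integrable_K _ (((continuous_const.mul hψtc).mul hΔhc)) (fun x hx => by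
        simp [hψK t x hx])
    have I3 : Integrable (fun x => fderiv ℝ (fun y => ψ (y, t) ^ 2) x (v (x, t))) := by
      refine integrable_K _ ((hgc.continuous_fderiv one_ne_zero).clm_apply
        (hwc.continuous)) (fun x hx => by rw [hfd0 x hx]; simp)
    have I4 : Integrable (fun x => ψ (x, t) ^ 2 * spatialDiv v x t) := by
      refine integrable_K _ ((hψtc.pow 2).mul hdivc) (fun x hx => by simp [hψK t x hx])
    have I5 : Integrable (fun x => ψ (x, t) ^ 2) :=
      integrable_K _ (hψtc.pow 2) (fun x hx => by simp [hψK t x hx])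
    -- rewrite hibp with divergence
    rw [show (fun x => (fderiv ℝ (fun y => ψ (y, t) ^ 2) x (v (x, t))
        + ψ (x, t) ^ 2 * ∑ i, fderiv ℝ (fun y => v (y, t) i) x (EuclideanSpace.single i 1)))
      = (fun x => fderiv ℝ (fun y => ψ (y, t) ^ 2) x (v (x, t))
        + ψ (x, t) ^ 2 * spatialDiv v x t) from rfl] at hibp
    have hibp2 : ∫ x, fderiv ℝ (fun y => ψ (y, t) ^ 2) x (v (x, t))
        = - ∫ x, ψ (x, t) ^ 2 * spatialDiv v x t := by
      have := integral_add I3 I4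
      rw [hibp] at this
      linarith [this]
    -- pointwise inequality
    have hpt : ∀ x : EuclideanSpace ℝ (Fin m),
        2 * ψ (x, t) * fderiv ℝ ψ (x, t) (0, 1)
          ≤ -2 * ψ (x, t) * (h (φ₁ (x, t)) x t - h (φ₂ (x, t)) x t)
            - fderiv ℝ (fun y => ψ (y, t) ^ 2) x (v (x, t)) := by
      intro x
      rw [hpsi_t x t]
      have : fderiv ℝ (fun y => ψ (y, t) ^ 2) x (v (x, t))
          = 2 * ψ (x, t) * fderiv ℝ (fun y => ψ (y, t)) x (v (x, t)) := by
        rw [hsq x]; simp [smul_eq_mul]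
      rw [this]
      apply le_of_eq
      ring
    -- assemble
    have step1 : E' t ≤ ∫ x, (-2 * ψ (x, t) * (h (φ₁ (x, t)) x t - h (φ₂ (x, t)) x t)
        - fderiv ℝ (fun y => ψ (y, t) ^ 2) x (v (x, t))) :=
      integral_mono I1 (I2.sub I3) hpt
    have step2 : ∫ x, (-2 * ψ (x, t) * (h (φ₁ (x, t)) x t - h (φ₂ (x, t)) x t)
        - fderiv ℝ (fun y => ψ (y, t) ^ 2) x (v (x, t)))
        = ∫ x, (-2 * ψ (x, t) * (h (φ₁ (x, t)) x t - h (φ₂ (x, t)) x t)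
          + ψ (x, t) ^ 2 * spatialDiv v x t) := by
      rw [integral_sub I2 I3, integral_add I2 I4, hibp2]
      ring
    have pointwise2 : ∀ x : EuclideanSpace ℝ (Fin m),
        -2 * ψ (x, t) * (h (φ₁ (x, t)) x t - h (φ₂ (x, t)) x t)
          + ψ (x, t) ^ 2 * spatialDiv v x t ≤ -(2 * β) * ψ (x, t) ^ 2 := by
      intro x
      have hfdiff : Differentiable ℝ (fun u => h u x t) := by
        have hrfl : (fun u => h u x t)
            = (fun q : ℝ × EuclideanSpace ℝ (Fin m) × ℝ => h q.1 q.2.1 q.2.2)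
              ∘ (fun u : ℝ => (u, x, t)) := rfl
        rw [hrfl]
        exact (hh.differentiable one_ne_zero).comp (differentiable_id.prodMk (differentiable_const _))
      have hder : ∀ u : ℝ, β + spatialDiv v x t / 2 ≤ deriv (fun w => h w x t) u := by
        intro u
        have := hcontr u x t
        linarith
      have hmvt := RCC_mvt_ineq (fun u => h u x t) hfdiff (β + spatialDiv v x t / 2) hder
        (φ₁ (x, t)) (φ₂ (x, t))
      have hpsieq : ψ (x, t) = φ₁ (x, t) - φ₂ (x, t) := rfl
      rw [hpsieq]
      nlinarith [hmvt]
    have step3 : ∫ x, (-2 * ψ (x, t) * (h (φ₁ (x, t)) x t - h (φ₂ (x, t)) x t)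
          + ψ (x, t) ^ 2 * spatialDiv v x t) ≤ ∫ x, -(2 * β) * ψ (x, t) ^ 2 :=
      integral_mono (I2.add I4) (I5.const_mul _) pointwise2
    have step4 : ∫ x, -(2 * β) * ψ (x, t) ^ 2 = -(2 * β) * Efun t := by
      rw [MeasureTheory.integral_const_mul]
    calc E' t ≤ _ := step1
      _ = _ := step2
      _ ≤ _ := step3
      _ = -(2 * β) * Efun t := step4
  -- Gronwall argument
  have hGd : ∀ s : ℝ, HasDerivAt (fun r => Real.exp (2 * β * r) * Efun r)
      (2 * β * Real.exp (2 * β * s) * Efun s + Real.exp (2 * β * s) * E' s) s := by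
    intro s
    have hlin : HasDerivAt (fun r : ℝ => 2 * β * r) (2 * β) s := by
      simpa using (hasDerivAt_id s).const_mul (2 * β)
    have hexp : HasDerivAt (fun r => Real.exp (2 * β * r)) (Real.exp (2 * β * s) * (2 * β)) s :=
      (Real.hasDerivAt_exp (2 * β * s)).comp s hlin
    have hmul : HasDerivAt (fun r => Real.exp (2 * β * r) * Efun r) _ s := hexp.mul (hE s)
    convert hmul using 1
    ring
  have hanti : Antitone (fun r => Real.exp (2 * β * r) * Efun r) := by
    apply antitone_of_deriv_nonpos
    · exact fun s => (hGd s).differentiableAt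
    · intro s
      rw [(hGd s).deriv]
      have h1 := hE'le s
      have h2 := Real.exp_pos (2 * β * s)
      nlinarith
  intro t ht
  have hle := hanti ht
  simp only [mul_zero, Real.exp_zero, one_mul] at hle
  have hgoal : Efun t ≤ Real.exp (-2 * β * t) * Efun 0 := by
    have hpos := Real.exp_pos (2 * β * t)
    have h3 : Real.exp (-2 * β * t) = (Real.exp (2 * β * t))⁻¹ := by
      rw [show (-2 * β * t) = -(2 * β * t) by ring, Real.exp_neg]
    rw [h3, inv_mul_eq_div, le_div_iff₀ hpos]
    calc Efun t * Real.exp (2 * β * t) = Real.exp (2 * β * t) * Efun t := mul_comm _ _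
      _ ≤ Efun 0 := hle
  exact hgoal
end

section
/- Let L > 0, β > 0, let a, v : [0,L] × ℝ → ℝ be continuously differentiable with v(0,t) ≥ 0 and v(L,t) ≥ 0 for all t ≥ 0 and −a(x,t) + ½ ∂v/∂x(x,t) ≤ −β for all (x,t) ∈ [0,L] × [0,∞). Let u : [0,L] × ℝ → ℝ be continuously differentiable, satisfy ∂u/∂t + a u + v ∂u/∂x = 0 on [0,L] × [0,∞), and satisfy the inflow boundary condition u(0,t) = 0 for all t ≥ 0. Then for all t ≥ 0, ∫₀^L u(x,t)² dx ≤ e^{−2βt} ∫₀^L u(x,0)² dx. -/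
open MeasureTheory Set intervalIntegral
open Topology

-- slice in x: HasDerivWithinAt on Icc 0 L
lemma cc_slice_x {L : ℝ} (f : ℝ → ℝ → ℝ)
    (hf : ContDiffOn ℝ 1 (fun p : ℝ × ℝ => f p.1 p.2) (Icc 0 L ×ˢ univ))
    {x t : ℝ} (hx : x ∈ Icc 0 L) :
    HasDerivWithinAt (fun y => f y t)
      (fderivWithin ℝ (fun p : ℝ × ℝ => f p.1 p.2) (Icc 0 L ×ˢ univ) (x, t) (1, 0))
      (Icc 0 L) x := by
  have hd := (hf.differentiableOn one_ne_zero (x, t) ⟨hx, mem_univ t⟩).hasFDerivWithinAt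
  have h1 : HasDerivWithinAt (fun y : ℝ => ((y, t) : ℝ × ℝ)) ((1:ℝ), (0:ℝ)) (Icc 0 L) x := by
    simpa using (HasDerivAt.prodMk (hasDerivAt_id x) (hasDerivAt_const x t)).hasDerivWithinAt
  exact hd.comp_hasDerivWithinAt x h1 (fun y (hy : y ∈ Icc 0 L) => (⟨hy, mem_univ t⟩ : (y, t) ∈ Icc 0 L ×ˢ univ))

-- slice in t: HasDerivAt
lemma cc_slice_t {L : ℝ} (f : ℝ → ℝ → ℝ)
    (hf : ContDiffOn ℝ 1 (fun p : ℝ × ℝ => f p.1 p.2) (Icc 0 L ×ˢ univ))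
    {x t : ℝ} (hx : x ∈ Icc 0 L) :
    HasDerivAt (fun s => f x s)
      (fderivWithin ℝ (fun p : ℝ × ℝ => f p.1 p.2) (Icc 0 L ×ˢ univ) (x, t) (0, 1)) t := by
  have hd := (hf.differentiableOn one_ne_zero (x, t) ⟨hx, mem_univ t⟩).hasFDerivWithinAt
  have h1 : HasDerivWithinAt (fun s : ℝ => ((x, s) : ℝ × ℝ)) ((0:ℝ), (1:ℝ)) univ t := by
    exact (HasDerivAt.prodMk (hasDerivAt_const t x) (hasDerivAt_id t)).hasDerivWithinAt
  have := hd.comp_hasDerivWithinAt t h1 (fun s _ => ⟨hx, mem_univ s⟩)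
  rwa [hasDerivWithinAt_univ] at this

lemma cc_cont_partial {L : ℝ} (hL : 0 < L) (f : ℝ → ℝ → ℝ)
    (hf : ContDiffOn ℝ 1 (fun p : ℝ × ℝ => f p.1 p.2) (Icc 0 L ×ˢ univ)) (w : ℝ × ℝ) :
    ContinuousOn (fun p : ℝ × ℝ =>
      fderivWithin ℝ (fun p : ℝ × ℝ => f p.1 p.2) (Icc 0 L ×ˢ univ) p w)
      (Icc 0 L ×ˢ univ) := by
  have hS : UniqueDiffOn ℝ (Icc (0:ℝ) L ×ˢ (univ : Set ℝ)) :=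
    (uniqueDiffOn_Icc hL).prod uniqueDiffOn_univ
  exact (hf.continuousOn_fderivWithin hS le_rfl).clm_apply continuousOn_const

theorem convection_contraction_1d (L β : ℝ) (hL : 0 < L) (hβ : 0 < β)
    (a v u : ℝ → ℝ → ℝ)
    (ha : ContDiffOn ℝ 1 (fun p : ℝ × ℝ => a p.1 p.2) (Icc 0 L ×ˢ univ))
    (hv : ContDiffOn ℝ 1 (fun p : ℝ × ℝ => v p.1 p.2) (Icc 0 L ×ˢ univ))
    (hu : ContDiffOn ℝ 1 (fun p : ℝ × ℝ => u p.1 p.2) (Icc 0 L ×ˢ univ))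
    (hin : ∀ t ≥ (0 : ℝ), 0 ≤ v 0 t)
    (hout : ∀ t ≥ (0 : ℝ), 0 ≤ v L t)
    (hrate : ∀ x ∈ Icc 0 L, ∀ t ≥ (0 : ℝ),
      -(a x t) + (1 / 2) * derivWithin (fun y => v y t) (Icc 0 L) x ≤ -β)
    (hpde : ∀ x ∈ Icc 0 L, ∀ t ≥ (0 : ℝ),
      deriv (fun s => u x s) t + a x t * u x t
        + v x t * derivWithin (fun y => u y t) (Icc 0 L) x = 0)
    (hbc : ∀ t ≥ (0 : ℝ), u 0 t = 0) :
    ∀ t ≥ (0 : ℝ),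
      (∫ x in (0 : ℝ)..L, (u x t) ^ 2)
        ≤ Real.exp (-2 * β * t) * ∫ x in (0 : ℝ)..L, (u x 0) ^ 2 := by
  have hLL : (0:ℝ) ≤ L := hL.le
  set ut : ℝ → ℝ → ℝ := fun x t =>
    fderivWithin ℝ (fun p : ℝ × ℝ => u p.1 p.2) (Icc 0 L ×ˢ univ) (x, t) (0, 1) with hutdef
  set ux : ℝ → ℝ → ℝ := fun x t =>
    fderivWithin ℝ (fun p : ℝ × ℝ => u p.1 p.2) (Icc 0 L ×ˢ univ) (x, t) (1, 0) with huxdef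
  set vx : ℝ → ℝ → ℝ := fun x t =>
    fderivWithin ℝ (fun p : ℝ × ℝ => v p.1 p.2) (Icc 0 L ×ˢ univ) (x, t) (1, 0) with hvxdef
  -- slice derivative facts
  have hux_s : ∀ (t : ℝ), ∀ x ∈ Icc 0 L,
      HasDerivWithinAt (fun y => u y t) (ux x t) (Icc 0 L) x :=
    fun t x hx => cc_slice_x u hu hx
  have hvx_s : ∀ (t : ℝ), ∀ x ∈ Icc 0 L,
      HasDerivWithinAt (fun y => v y t) (vx x t) (Icc 0 L) x :=
    fun t x hx => cc_slice_x v hv hx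
  have hut_s : ∀ (t : ℝ), ∀ x ∈ Icc 0 L, HasDerivAt (fun s => u x s) (ut x t) t :=
    fun t x hx => cc_slice_t u hu hx
  -- derivWithin identities
  have hDWu : ∀ (t : ℝ), ∀ x ∈ Icc 0 L, derivWithin (fun y => u y t) (Icc 0 L) x = ux x t :=
    fun t x hx => (hux_s t x hx).derivWithin (uniqueDiffOn_Icc hL x hx)
  have hDWv : ∀ (t : ℝ), ∀ x ∈ Icc 0 L, derivWithin (fun y => v y t) (Icc 0 L) x = vx x t :=
    fun t x hx => (hvx_s t x hx).derivWithin (uniqueDiffOn_Icc hL x hx)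
  -- PDE rewritten
  have hpde' : ∀ x ∈ Icc 0 L, ∀ t ≥ (0:ℝ),
      ut x t = -(a x t * u x t) - v x t * ux x t := by
    intro x hx t ht
    have h := hpde x hx t ht
    rw [(hut_s t x hx).deriv, hDWu t x hx] at h
    linarith
  -- continuity on slices
  have sliceC : ∀ (g : ℝ × ℝ → ℝ), ContinuousOn g (Icc 0 L ×ˢ univ) → ∀ t : ℝ,
      ContinuousOn (fun x => g (x, t)) (Icc 0 L) := by
    intro g hg t
    exact hg.comp (continuous_id.prodMk continuous_const).continuousOn
      (fun x hx => ⟨hx, mem_univ t⟩)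
  have cu := hu.continuousOn
  have ca := ha.continuousOn
  have cv := hv.continuousOn
  have cut := cc_cont_partial hL u hu ((0:ℝ), (1:ℝ))
  have cux := cc_cont_partial hL u hu ((1:ℝ), (0:ℝ))
  have cvx := cc_cont_partial hL v hv ((1:ℝ), (0:ℝ))
  have intg : ∀ (g : ℝ → ℝ), ContinuousOn g (Icc 0 L) → IntervalIntegrable g volume 0 L := by
    intro g hg
    apply ContinuousOn.intervalIntegrable
    rwa [uIcc_of_le hLL]
  set E : ℝ → ℝ := fun t => ∫ x in (0:ℝ)..L, u x t ^ 2 with hEdef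
  set E' : ℝ → ℝ := fun t => ∫ x in (0:ℝ)..L, 2 * u x t * ut x t with hE'def
  have hEderiv : ∀ t : ℝ, HasDerivAt E (E' t) t := by
    intro t₀
    have hK : IsCompact (Icc (0:ℝ) L ×ˢ Icc (t₀-1) (t₀+1)) :=
      isCompact_Icc.prod isCompact_Icc
    have hKS : (Icc (0:ℝ) L ×ˢ Icc (t₀-1) (t₀+1)) ⊆ Icc 0 L ×ˢ univ :=
      prod_mono_right (subset_univ _)
    have hgc : ContinuousOn (fun p : ℝ × ℝ => 2 * u p.1 p.2 * ut p.1 p.2)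
        (Icc (0:ℝ) L ×ˢ Icc (t₀-1) (t₀+1)) :=
      ((continuousOn_const.mul (cu.mono hKS)).mul (cut.mono hKS))
    obtain ⟨C, hC⟩ := hK.exists_bound_of_continuousOn hgc
    have hmemI : ∀ x ∈ Set.uIoc (0:ℝ) L, x ∈ Icc 0 L := by
      intro x hx
      rw [uIoc_of_le hLL] at hx
      exact Ioc_subset_Icc_self hx
    have meas : ∀ s : ℝ, ∀ (g : ℝ → ℝ), ContinuousOn g (Icc 0 L) →
        AEStronglyMeasurable g (volume.restrict (Set.uIoc (0:ℝ) L)) := by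
      intro s g hg
      exact (hg.mono hmemI).aestronglyMeasurable measurableSet_uIoc
    have := intervalIntegral.hasDerivAt_integral_of_dominated_loc_of_deriv_le
      (F := fun s x => u x s ^ 2) (F' := fun s x => 2 * u x s * ut x s)
      (a := 0) (b := L) (μ := volume) (x₀ := t₀) (bound := fun _ => C)
      (s := Metric.ball t₀ 1) (Metric.ball_mem_nhds t₀ one_pos)
      (Filter.Eventually.of_forall (fun s => meas s _ ((sliceC _ cu s).pow 2)))
      (intg _ ((sliceC _ cu t₀).pow 2))
      (meas t₀ _ ((continuousOn_const.mul (sliceC _ cu t₀)).mul (sliceC _ cut t₀)))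
      (Filter.Eventually.of_forall ?_) (intervalIntegrable_const)
      (Filter.Eventually.of_forall ?_)
    · exact this.2
    · -- bound
      intro x hx s hs
      have hxI := hmemI x hx
      have hsI : s ∈ Icc (t₀-1) (t₀+1) := by
        rw [Metric.mem_ball, Real.dist_eq, abs_sub_lt_iff] at hs
        constructor <;> linarith
      exact hC (x, s) ⟨hxI, hsI⟩
    · -- differentiability
      intro x hx s _
      have hd := (hut_s s x (hmemI x hx)).pow 2
      have : ((2:ℕ):ℝ) * u x s ^ (2-1) * ut x s = 2 * u x s * ut x s := by
        norm_num
      rwa [this] at hd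
  have key : ∀ t ≥ (0:ℝ), E' t ≤ -(2*β) * E t := by
    intro t ht
    have cU := sliceC _ cu t
    have cA := sliceC _ ca t
    have cV := sliceC _ cv t
    have cUx := sliceC _ cux t
    have cVx := sliceC _ cvx t
    have hi1 : IntervalIntegrable (fun x => (-(2*a x t) + vx x t) * u x t ^ 2) volume 0 L :=
      intg _ (((continuousOn_const.mul cA).neg.add cVx).mul (cU.pow 2))
    have hi2 : IntervalIntegrable
        (fun x => vx x t * u x t ^ 2 + v x t * (2 * u x t * ux x t)) volume 0 L :=
      intg _ ((cVx.mul (cU.pow 2)).add (cV.mul ((continuousOn_const.mul cU).mul cUx)))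
    have hEq : E' t = (∫ x in (0:ℝ)..L, (-(2*a x t) + vx x t) * u x t ^ 2)
        - ∫ x in (0:ℝ)..L, (vx x t * u x t ^ 2 + v x t * (2 * u x t * ux x t)) := by
      rw [← intervalIntegral.integral_sub hi1 hi2]
      apply intervalIntegral.integral_congr
      intro x hx
      rw [uIcc_of_le hLL] at hx
      have hp := hpde' x hx t ht
      simp only
      rw [hp]; ring
    have hIBP : (∫ x in (0:ℝ)..L, (vx x t * u x t ^ 2 + v x t * (2 * u x t * ux x t)))
        = v L t * u L t ^ 2 - v 0 t * u 0 t ^ 2 := by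
      apply intervalIntegral.integral_eq_sub_of_hasDeriv_right_of_le hLL
        (cV.mul (cU.pow 2)) _ hi2
      intro x hx
      have hxI : x ∈ Icc 0 L := Ioo_subset_Icc_self hx
      have hnd : Icc (0:ℝ) L ∈ 𝓝 x := Icc_mem_nhds hx.1 hx.2
      have hdu : HasDerivAt (fun y => u y t) (ux x t) x := (hux_s t x hxI).hasDerivAt hnd
      have hdv : HasDerivAt (fun y => v y t) (vx x t) x := (hvx_s t x hxI).hasDerivAt hnd
      have hprod := hdv.mul (hdu.pow 2)
      have h2 : vx x t * u x t ^ 2 + v x t * (((2:ℕ):ℝ) * u x t ^ (2-1) * ux x t)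
          = vx x t * u x t ^ 2 + v x t * (2 * u x t * ux x t) := by norm_num
      simp only [Pi.pow_apply] at hprod
      rw [h2] at hprod
      exact hprod.hasDerivWithinAt
    have hmono : (∫ x in (0:ℝ)..L, (-(2*a x t) + vx x t) * u x t ^ 2)
        ≤ ∫ x in (0:ℝ)..L, -(2*β) * u x t ^ 2 := by
      apply intervalIntegral.integral_mono_on hLL hi1
        (intg _ (continuousOn_const.mul (cU.pow 2)))
      intro x hx
      have hr := hrate x hx t ht
      rw [hDWv t x hx] at hr
      have hcoef : -(2*a x t) + vx x t ≤ -(2*β) := by linarith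
      exact mul_le_mul_of_nonneg_right hcoef (sq_nonneg _)
    have hconst : (∫ x in (0:ℝ)..L, -(2*β) * u x t ^ 2) = -(2*β) * E t := by
      rw [hEdef]
      exact intervalIntegral.integral_const_mul _ _
    rw [hconst] at hmono
    have hbd : 0 ≤ v L t * u L t ^ 2 - v 0 t * u 0 t ^ 2 := by
      rw [hbc t ht]
      have := mul_nonneg (hout t ht) (sq_nonneg (u L t))
      simpa using this
    rw [hEq, hIBP]
    linarith
  -- Gronwall
  have hG : ∀ s : ℝ, HasDerivAt (fun r => Real.exp (2*β*r) * E r)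
      (Real.exp (2*β*s) * (2*β * E s + E' s)) s := by
    intro s
    have h1 : HasDerivAt (fun r : ℝ => Real.exp (2*β*r)) (Real.exp (2*β*s) * (2*β)) s := by
      have h2 : HasDerivAt (fun r : ℝ => 2*β*r) (2*β) s := by
        simpa using (hasDerivAt_id s).const_mul (2*β)
      exact (Real.hasDerivAt_exp (2*β*s)).comp s h2
    have := h1.mul (hEderiv s)
    rw [show Real.exp (2*β*s) * (2*β * E s + E' s) = Real.exp (2*β*s) * (2*β) * E s + Real.exp (2*β*s) * E' s by ring]
    exact this
  have hanti : AntitoneOn (fun r => Real.exp (2*β*r) * E r) (Ici 0) := by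
    apply antitoneOn_of_deriv_nonpos (convex_Ici 0)
    · exact fun s _ => (hG s).continuousAt.continuousWithinAt
    · exact fun s _ => (hG s).differentiableAt.differentiableWithinAt
    · intro s hs
      rw [interior_Ici] at hs
      rw [(hG s).deriv]
      have hk := key s (le_of_lt hs)
      have hle : 2*β * E s + E' s ≤ 0 := by linarith
      exact mul_nonpos_of_nonneg_of_nonpos (Real.exp_nonneg _) hle
  intro t ht
  have h1 : Real.exp (2*β*t) * E t ≤ E 0 := by
    have := hanti self_mem_Ici ht ht
    simpa using this
  have hexp : (-2*β*t : ℝ) = -(2*β*t) := by ring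
  show E t ≤ Real.exp (-2*β*t) * E 0
  rw [hexp, Real.exp_neg]
  rw [inv_mul_eq_div, le_div_iff₀ (Real.exp_pos _)]
  linarith [h1]
end

section
/- Let h : ℝ^m × ℝ^m × ℝ → ℝ, (p,x,t) ↦ h(p,x,t), be continuously differentiable, let φ : ℝ^m × ℝ → ℝ be twice continuously differentiable (jointly in (x,t)) and satisfy the Hamilton–Jacobi equation ∂φ/∂t(x,t) + h(∇φ(x,t), x, t) = 0 for all (x,t), and let x : ℝ → ℝ^m be differentiable and follow the flow velocity, i.e. x′(t) = ∇_p h(∇φ(x(t),t), x(t), t) for all t. Then the function t ↦ ∇φ(x(t), t) is differentiable with d/dt [∇φ(x(t),t)] = − ∇_x h(∇φ(x(t),t), x(t), t). -/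
open MeasureTheory RealInnerProductSpace

theorem hamilton_jacobi_momentum_along_characteristics {m : ℕ}
    (h : EuclideanSpace ℝ (Fin m) → EuclideanSpace ℝ (Fin m) → ℝ → ℝ)
    (φ : EuclideanSpace ℝ (Fin m) × ℝ → ℝ)
    (x : ℝ → EuclideanSpace ℝ (Fin m))
    (hh : ContDiff ℝ 1 (fun q : EuclideanSpace ℝ (Fin m) × EuclideanSpace ℝ (Fin m) × ℝ =>
      h q.1 q.2.1 q.2.2))
    (hφ : ContDiff ℝ 2 φ)
    (hpde : ∀ y t, deriv (fun s => φ (y, s)) t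
      + h (gradient (fun z => φ (z, t)) y) y t = 0)
    (hflow : ∀ t, HasDerivAt x
      (gradient (fun p => h p (x t) t) (gradient (fun z => φ (z, t)) (x t))) t) :
    ∀ t, HasDerivAt (fun s => gradient (fun z => φ (z, s)) (x s))
      (-(gradient (fun y => h (gradient (fun z => φ (z, t)) (x t)) y t) (x t))) t := by
  intro t
  -- basic differentiability facts
  have hφd : Differentiable ℝ φ := (hφ.of_le one_le_two).differentiable one_ne_zero
  have hDφ : ContDiff ℝ 1 (fderiv ℝ φ) := hφ.fderiv_right (by norm_num)
  have hHd : Differentiable ℝ (fun q : (EuclideanSpace ℝ (Fin m)) × (EuclideanSpace ℝ (Fin m)) × ℝ => h q.1 q.2.1 q.2.2) :=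
    hh.differentiable one_ne_zero
  -- abbreviations
  set p₀ := gradient (fun z => φ (z, t)) (x t) with hp₀
  set v := gradient (fun p => h p (x t) t) p₀ with hv
  set D2 := fderiv ℝ (fderiv ℝ φ) (x t, t) with hD2def
  set DH := fderiv ℝ (fun q : (EuclideanSpace ℝ (Fin m)) × (EuclideanSpace ℝ (Fin m)) × ℝ => h q.1 q.2.1 q.2.2) (p₀, x t, t) with hDHdef
  -- inner product with gradient = fderiv
  have hgrad : ∀ (f : (EuclideanSpace ℝ (Fin m)) → ℝ) (y w : (EuclideanSpace ℝ (Fin m))), ⟪gradient f y, w⟫ = fderiv ℝ f y w := by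
    intro f y w
    show ⟪(InnerProductSpace.toDual ℝ (EuclideanSpace ℝ (Fin m))).symm (fderiv ℝ f y), w⟫ = _
    exact InnerProductSpace.toDual_symm_apply
  have hcomp : ∀ (w : (EuclideanSpace ℝ (Fin m))) (i : Fin m), w i = ⟪w, EuclideanSpace.single i (1:ℝ)⟫ := by
    intro w i
    rw [EuclideanSpace.inner_single_right]; simp
  -- partial fderiv in x
  have hpart : ∀ (y : (EuclideanSpace ℝ (Fin m))) (s : ℝ), HasFDerivAt (fun z => φ (z, s))
      ((fderiv ℝ φ (y, s)).comp (ContinuousLinearMap.inl ℝ (EuclideanSpace ℝ (Fin m)) ℝ)) y :=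
    fun y s => (hφd (y, s)).hasFDerivAt.comp y (hasFDerivAt_prodMk_left y s)
  -- second derivative
  have hD2at : HasFDerivAt (fderiv ℝ φ) D2 (x t, t) :=
    ((hDφ.differentiable one_ne_zero) (x t, t)).hasFDerivAt
  have hsymm : ∀ a b, D2 a b = D2 b a := hφ.contDiffAt.isSymmSndFDerivAt (by norm_num)
  -- the map L : ((EuclideanSpace ℝ (Fin m)) × ℝ →L ℝ) →L (EuclideanSpace ℝ (Fin m)),  T ↦ (toDual).symm (T ∘ inl)
  set L : (((EuclideanSpace ℝ (Fin m)) × ℝ) →L[ℝ] ℝ) →L[ℝ] (EuclideanSpace ℝ (Fin m)) :=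
    ((InnerProductSpace.toDual ℝ (EuclideanSpace ℝ (Fin m))).symm.toContinuousLinearEquiv.toContinuousLinearMap).comp
      ((ContinuousLinearMap.compL ℝ (EuclideanSpace ℝ (Fin m)) ((EuclideanSpace ℝ (Fin m)) × ℝ) ℝ).flip (ContinuousLinearMap.inl ℝ (EuclideanSpace ℝ (Fin m)) ℝ)) with hL
  have hLapp : ∀ T : ((EuclideanSpace ℝ (Fin m)) × ℝ) →L[ℝ] ℝ, L T = (InnerProductSpace.toDual ℝ (EuclideanSpace ℝ (Fin m))).symm
      (T.comp (ContinuousLinearMap.inl ℝ (EuclideanSpace ℝ (Fin m)) ℝ)) := fun T => rfl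
  have hLinner : ∀ (T : ((EuclideanSpace ℝ (Fin m)) × ℝ) →L[ℝ] ℝ) (w : (EuclideanSpace ℝ (Fin m))), ⟪w, L T⟫ = T (w, 0) := by
    intro T w
    rw [real_inner_comm, hLapp, InnerProductSpace.toDual_symm_apply]; rfl
  -- gradient of partial map as L of full fderiv
  have hPeq : ∀ (y : (EuclideanSpace ℝ (Fin m))) (s : ℝ), gradient (fun z => φ (z, s)) y = L (fderiv ℝ φ (y, s)) := by
    intro y s
    show (InnerProductSpace.toDual ℝ (EuclideanSpace ℝ (Fin m))).symm (fderiv ℝ (fun z => φ (z, s)) y) = _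
    rw [(hpart y s).fderiv, hLapp]
  -- flow
  have hx' : HasDerivAt x v t := hflow t
  have hc : HasDerivAt (fun s => ((x s, s) : (EuclideanSpace ℝ (Fin m)) × ℝ)) (v, 1) t := hx'.prodMk (hasDerivAt_id t)
  -- derivative of s ↦ fderiv φ (x s, s) applied to a fixed vector
  have hFc := hD2at.comp_hasDerivAt (f := fun s => ((x s, s) : (EuclideanSpace ℝ (Fin m)) × ℝ)) t hc
  have hcompi : ∀ w : (EuclideanSpace ℝ (Fin m)) × ℝ, HasDerivAt (fun s => fderiv ℝ φ (x s, s) w) (D2 (v, 1) w) t := by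
    intro w
    have := (ContinuousLinearMap.apply ℝ ℝ w).hasFDerivAt.comp_hasDerivAt t hFc
    simpa [Function.comp_def] using this
  -- ∇_p h facts
  have hinlp : HasFDerivAt (fun p : (EuclideanSpace ℝ (Fin m)) => h p (x t) t)
      (DH.comp (ContinuousLinearMap.inl ℝ (EuclideanSpace ℝ (Fin m)) ((EuclideanSpace ℝ (Fin m)) × ℝ))) p₀ :=
    (hHd (p₀, x t, t)).hasFDerivAt.comp (f := fun e => (e, x t, t)) p₀ (hasFDerivAt_prodMk_left p₀ ((x t, t) : (EuclideanSpace ℝ (Fin m)) × ℝ))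
  have hvinner : ∀ w : (EuclideanSpace ℝ (Fin m)), ⟪v, w⟫ = DH (w, 0, 0) := by
    intro w
    rw [hv, hgrad, hinlp.fderiv]; rfl
  -- ∇_x h facts
  have hmid : HasFDerivAt (fun y : (EuclideanSpace ℝ (Fin m)) => h p₀ y t)
      (DH.comp ((0 : (EuclideanSpace ℝ (Fin m)) →L[ℝ] (EuclideanSpace ℝ (Fin m))).prod ((ContinuousLinearMap.id ℝ (EuclideanSpace ℝ (Fin m))).prod 0))) (x t) := by
    have hyt : HasFDerivAt (fun y : (EuclideanSpace ℝ (Fin m)) => ((p₀, y, t) : (EuclideanSpace ℝ (Fin m)) × (EuclideanSpace ℝ (Fin m)) × ℝ))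
        ((0 : (EuclideanSpace ℝ (Fin m)) →L[ℝ] (EuclideanSpace ℝ (Fin m))).prod ((ContinuousLinearMap.id ℝ (EuclideanSpace ℝ (Fin m))).prod 0)) (x t) :=
      (hasFDerivAt_const p₀ (x t)).prodMk ((hasFDerivAt_id (x t)).prodMk (hasFDerivAt_const t (x t)))
    exact (hHd (p₀, x t, t)).hasFDerivAt.comp (x t) hyt
  have hwi : ∀ i : Fin m, gradient (fun y => h p₀ y t) (x t) i
      = DH (0, EuclideanSpace.single i (1:ℝ), 0) := by
    intro i
    rw [hcomp (gradient (fun y => h p₀ y t) (x t)) i, hgrad, hmid.fderiv]; rfl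
  -- derivative of the gradient map  P y = ∇φ(·,t) y
  set Q : (EuclideanSpace ℝ (Fin m)) →L[ℝ] (EuclideanSpace ℝ (Fin m)) := L.comp (D2.comp (ContinuousLinearMap.inl ℝ (EuclideanSpace ℝ (Fin m)) ℝ)) with hQ
  have hP : HasFDerivAt (fun y => gradient (fun z => φ (z, t)) y) Q (x t) := by
    have h1 : HasFDerivAt (fun y : (EuclideanSpace ℝ (Fin m)) => L (fderiv ℝ φ (y, t))) Q (x t) := by
      have := L.hasFDerivAt.comp (x t)
        (hD2at.comp (x t) (hasFDerivAt_prodMk_left (x t) t))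
      simpa [hQ, ContinuousLinearMap.comp_assoc, Function.comp_def] using this
    have heq : (fun y => gradient (fun z => φ (z, t)) y) = fun y : (EuclideanSpace ℝ (Fin m)) => L (fderiv ℝ φ (y, t)) := by
      funext y; exact hPeq y t
    rw [heq]
    exact h1
  -- differentiate the PDE in space
  have hΨ : ∀ i : Fin m, D2 (EuclideanSpace.single i (1:ℝ), 0) ((0 : (EuclideanSpace ℝ (Fin m))), (1:ℝ))
      + DH (Q (EuclideanSpace.single i (1:ℝ)), EuclideanSpace.single i (1:ℝ), 0) = 0 := by
    intro i
    -- the PDE as an identity of functions of y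
    have hfun : (fun y : (EuclideanSpace ℝ (Fin m)) => fderiv ℝ φ (y, t) ((0 : (EuclideanSpace ℝ (Fin m))), (1:ℝ))
        + h (gradient (fun z => φ (z, t)) y) y t) = fun _ => (0:ℝ) := by
      funext y
      have hys : HasDerivAt (fun s : ℝ => ((y, s) : (EuclideanSpace ℝ (Fin m)) × ℝ)) (((0 : (EuclideanSpace ℝ (Fin m))), (1:ℝ)) : (EuclideanSpace ℝ (Fin m)) × ℝ) t :=
        (hasDerivAt_const t y).prodMk (hasDerivAt_id t)
      have hdt := (hφd (y, t)).hasFDerivAt.comp_hasDerivAt t hys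
      rw [← hdt.deriv]
      exact hpde y t
    -- first summand derivative
    have hfst : HasFDerivAt (fun y : (EuclideanSpace ℝ (Fin m)) => fderiv ℝ φ (y, t) ((0 : (EuclideanSpace ℝ (Fin m))), (1:ℝ)))
        (((ContinuousLinearMap.apply ℝ ℝ (((0 : (EuclideanSpace ℝ (Fin m))), (1:ℝ)) : (EuclideanSpace ℝ (Fin m)) × ℝ)).comp D2).comp
          (ContinuousLinearMap.inl ℝ (EuclideanSpace ℝ (Fin m)) ℝ)) (x t) :=
      (ContinuousLinearMap.apply ℝ ℝ (((0 : (EuclideanSpace ℝ (Fin m))), (1:ℝ)) : (EuclideanSpace ℝ (Fin m)) × ℝ)).hasFDerivAt.comp (x t)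
        (hD2at.comp (x t) (hasFDerivAt_prodMk_left (x t) t))
    -- second summand derivative
    have hsnd : HasFDerivAt (fun y : (EuclideanSpace ℝ (Fin m)) => h (gradient (fun z => φ (z, t)) y) y t)
        (DH.comp (Q.prod ((ContinuousLinearMap.id ℝ (EuclideanSpace ℝ (Fin m))).prod 0))) (x t) := by
      have hyt : HasFDerivAt (fun y : (EuclideanSpace ℝ (Fin m)) => ((gradient (fun z => φ (z, t)) y, y, t) : (EuclideanSpace ℝ (Fin m)) × (EuclideanSpace ℝ (Fin m)) × ℝ))
          (Q.prod ((ContinuousLinearMap.id ℝ (EuclideanSpace ℝ (Fin m))).prod 0)) (x t) :=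
        hP.prodMk ((hasFDerivAt_id (x t)).prodMk (hasFDerivAt_const t (x t)))
      exact (hHd (p₀, x t, t)).hasFDerivAt.comp (x t) hyt
    have hsum := hfst.fun_add hsnd
    rw [hfun] at hsum
    have h0 : (((ContinuousLinearMap.apply ℝ ℝ (((0 : (EuclideanSpace ℝ (Fin m))), (1:ℝ)) : (EuclideanSpace ℝ (Fin m)) × ℝ)).comp D2).comp
          (ContinuousLinearMap.inl ℝ (EuclideanSpace ℝ (Fin m)) ℝ))
        + DH.comp (Q.prod ((ContinuousLinearMap.id ℝ (EuclideanSpace ℝ (Fin m))).prod 0)) = 0 :=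
      hsum.unique (hasFDerivAt_const 0 (x t))
    have happ := congrFun (congrArg (fun (T : (EuclideanSpace ℝ (Fin m)) →L[ℝ] ℝ) => (T : (EuclideanSpace ℝ (Fin m)) → ℝ)) h0)
      (EuclideanSpace.single i (1:ℝ))
    simpa using happ
  -- main component computation
  have hkey : ∀ i : Fin m, D2 (v, 1) (EuclideanSpace.single i (1:ℝ), 0)
      = -(gradient (fun y => h p₀ y t) (x t) i) := by
    intro i
    set e := EuclideanSpace.single i (1:ℝ) with he
    have hQe : DH (Q e, 0, 0) = D2 (e, 0) (v, 0) := by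
      rw [← hvinner (Q e)]
      have hqe : Q e = L (D2 (e, 0)) := rfl
      rw [hqe, hLinner]
    have hsplit : DH (Q e, e, 0) = DH (Q e, 0, 0) + DH (0, e, 0) := by
      rw [← map_add]
      norm_num
    have h1 : D2 (e, 0) ((0 : (EuclideanSpace ℝ (Fin m))), (1:ℝ)) + (D2 (e, 0) (v, 0) + DH (0, e, 0)) = 0 := by
      have hψ := hΨ i
      rwa [hsplit, hQe] at hψ
    have h2 : D2 (e, 0) (v, 1) + DH (0, e, 0) = 0 := by
      have hv1 : ((v, 1) : (EuclideanSpace ℝ (Fin m)) × ℝ) = (v, 0) + (0, 1) := by simp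
      rw [hv1, map_add]
      linarith [h1]
    rw [hsymm (v, 1) (e, 0), hwi i]
    linarith [h2]
  -- assemble the vector-valued derivative
  have hcompfun : ∀ i : Fin m, (fun s => gradient (fun z => φ (z, s)) (x s) i)
      = fun s => fderiv ℝ φ (x s, s) (EuclideanSpace.single i (1:ℝ), 0) := by
    intro i
    funext s
    rw [hcomp (gradient (fun z => φ (z, s)) (x s)) i, hgrad, (hpart (x s) s).fderiv]
    rfl
  have hpi : ∀ i : Fin m, HasDerivAt (fun s => gradient (fun z => φ (z, s)) (x s) i)
      (-(gradient (fun y => h p₀ y t) (x t) i)) t := by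
    intro i
    rw [hcompfun i, ← hkey i]
    exact hcompi (EuclideanSpace.single i (1:ℝ), 0)
  -- transfer along the equivalence with the pi type
  have hpider : HasDerivAt (fun s => (fun i => gradient (fun z => φ (z, s)) (x s) i : Fin m → ℝ))
      (fun i => -(gradient (fun y => h p₀ y t) (x t) i)) t := hasDerivAt_pi.2 hpi
  have hfinal := ((EuclideanSpace.equiv (Fin m) ℝ).symm.toContinuousLinearMap
    ).hasFDerivAt.comp_hasDerivAt t hpider
  have hfn : ((EuclideanSpace.equiv (Fin m) ℝ).symm.toContinuousLinearMap
      ∘ (fun s => (fun i => gradient (fun z => φ (z, s)) (x s) i : Fin m → ℝ)))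
      = fun s => gradient (fun z => φ (z, s)) (x s) := rfl
  have hvl : (EuclideanSpace.equiv (Fin m) ℝ).symm.toContinuousLinearMap
      (fun i => -(gradient (fun y => h p₀ y t) (x t) i))
      = -(gradient (fun y => h p₀ y t) (x t)) := rfl
  rw [hfn, hvl] at hfinal
  exact hfinal
end

section
/- Let h : ℝ^m × ℝ^m × ℝ → ℝ, (p,x,t) ↦ h(p,x,t), be twice continuously differentiable, let φ : ℝ^m × ℝ → ℝ be three times continuously differentiable (jointly in (x,t)) and satisfy the Hamilton–Jacobi equation ∂φ/∂t(x,t) + h(∇φ(x,t), x, t) = 0 for all (x,t), and let x : ℝ → ℝ^m be differentiable with x′(t) = ∇_p h(∇φ(x(t),t), x(t), t). Define P(t) to be the m × m spatial Hessian matrix (∇∇φ)(x(t), t). Then P is differentiable and satisfies the matrix Riccati equation P′(t) = − h_{xx} − h_{xp} P(t) − P(t) h_{px} − P(t) h_{pp} P(t), where h_{xx}, h_{pp} are the matrices of second partial derivatives of h with respect to x and p respectively, h_{xp} is the matrix of mixed second partial derivatives (∂²h/∂x∂p), h_{px} = h_{xp}ᵀ, and all are evaluated at (∇φ(x(t),t),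 x(t), t). -/
open MeasureTheory RealInnerProductSpace Matrix

/-- The Hessian matrix of a scalar function on `ℝ^m`, as the Jacobian of its gradient. -/
noncomputable def hessMat {m : ℕ} (ψ : EuclideanSpace ℝ (Fin m) → ℝ)
    (x : EuclideanSpace ℝ (Fin m)) : Matrix (Fin m) (Fin m) ℝ :=
  fun i j => (fderiv ℝ (fun y => gradient ψ y) x (EuclideanSpace.single j 1)) i

variable {m : ℕ}
local notation "E" => EuclideanSpace ℝ (Fin m)

lemma grad_apply (f : E → ℝ) (y : E) (k : Fin m) :
    gradient f y k = fderiv ℝ f y (EuclideanSpace.single k 1) := by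
  have h1 : ⟪gradient f y, EuclideanSpace.single k 1⟫ = fderiv ℝ f y (EuclideanSpace.single k 1) := by
    rw [gradient]
    exact InnerProductSpace.toDual_symm_apply
  rw [EuclideanSpace.inner_single_right] at h1
  simpa using h1

-- partial fderiv in first slot of E × ℝ
lemma fderiv_partial_fst {Y : Type*} [NormedAddCommGroup Y] [NormedSpace ℝ Y]
    (F : E × ℝ → Y) (y : E) (t : ℝ) (hF : DifferentiableAt ℝ F (y, t)) (v : E) :
    fderiv ℝ (fun z => F (z, t)) y v = fderiv ℝ F (y, t) (v, 0) := by
  have h1 : HasFDerivAt (fun z : E => (z, t)) (ContinuousLinearMap.inl ℝ E ℝ) y :=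
    hasFDerivAt_prodMk_left y t
  have h2 : HasFDerivAt (fun z => F (z, t))
      ((fderiv ℝ F (y, t)).comp (ContinuousLinearMap.inl ℝ E ℝ)) y :=
    hF.hasFDerivAt.comp y h1
  rw [h2.fderiv]; rfl

-- component of fderiv of E-valued map
lemma fderiv_comp_apply {X : Type*} [NormedAddCommGroup X] [NormedSpace ℝ X]
    (F : X → E) (x : X) (hF : DifferentiableAt ℝ F x) (v : X) (i : Fin m) :
    fderiv ℝ F x v i = fderiv ℝ (fun y => F y i) x v := by
  have h1 : HasFDerivAt (fun w : E => w i) (EuclideanSpace.proj i (𝕜 := ℝ)) (F x) :=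
    (EuclideanSpace.proj i (𝕜 := ℝ)).hasFDerivAt
  have h2 : HasFDerivAt (fun y => F y i)
      ((EuclideanSpace.proj i (𝕜 := ℝ)).comp (fderiv ℝ F x)) x :=
    h1.comp x hF.hasFDerivAt
  rw [h2.fderiv]; rfl

noncomputable def pd {X : Type*} [NormedAddCommGroup X] [NormedSpace ℝ X]
    (f : X → ℝ) (v : X) : X → ℝ := fun q => fderiv ℝ f q v

lemma pd_contDiff {X : Type*} [NormedAddCommGroup X] [NormedSpace ℝ X]
    {n N : ℕ} {f : X → ℝ} (hf : ContDiff ℝ N f) (hn : n + 1 ≤ N) (v : X) :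
    ContDiff ℝ n (pd f v) := by
  have h1 : ContDiff ℝ n (fderiv ℝ f) := hf.fderiv_right (by exact_mod_cast hn)
  exact h1.clm_apply contDiff_const

lemma pd_fderiv_swap {X : Type*} [NormedAddCommGroup X] [NormedSpace ℝ X]
    {f : X → ℝ} {q : X} (hf : DifferentiableAt ℝ (fderiv ℝ f) q) (v w : X) :
    pd (pd f v) w q = fderiv ℝ (fderiv ℝ f) q w v := by
  have h1 : HasFDerivAt (fun q => fderiv ℝ f q v)
      ((ContinuousLinearMap.apply ℝ ℝ v).comp (fderiv ℝ (fderiv ℝ f) q)) q :=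
    (ContinuousLinearMap.apply ℝ ℝ v).hasFDerivAt.comp q hf.hasFDerivAt
  show fderiv ℝ (fun q => fderiv ℝ f q v) q w = _
  rw [h1.fderiv]; rfl

lemma pd_symm {X : Type*} [NormedAddCommGroup X] [NormedSpace ℝ X]
    {f : X → ℝ} {q : X} (hf : ContDiffAt ℝ 2 f q) (v w : X) :
    pd (pd f v) w q = pd (pd f w) v q := by
  have hd : DifferentiableAt ℝ (fderiv ℝ f) q := by
    have := hf.fderiv_right (m := 1) (by norm_num)
    exact this.differentiableAt (by norm_num)
  rw [pd_fderiv_swap hd, pd_fderiv_swap hd]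
  exact (hf.isSymmSndFDerivAt (by norm_num)).eq w v

lemma euclidean_eq_sum (a : EuclideanSpace ℝ (Fin m)) :
    a = ∑ k, a k • EuclideanSpace.single k (1:ℝ) := by
  classical
  ext i
  rw [show ((∑ k, a k • EuclideanSpace.single k (1:ℝ)) i)
      = ∑ k, (a k • EuclideanSpace.single k (1:ℝ)) i from by rw [WithLp.ofLp_sum]; exact Finset.sum_apply i Finset.univ _]
  simp [EuclideanSpace.single_apply]

lemma clm_expand_Q (L : (EuclideanSpace ℝ (Fin m) × ℝ) →L[ℝ] ℝ) (a : EuclideanSpace ℝ (Fin m)) (c : ℝ) :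
    L (a, c) = (∑ k, a k * L (EuclideanSpace.single k 1, 0)) + c * L (0, 1) := by
  have h1 : ((a, c) : E × ℝ)
      = (∑ k, a k • ((EuclideanSpace.single k (1:ℝ) : E), (0:ℝ))) + c • ((0:E), (1:ℝ)) := by
    rw [Prod.ext_iff]
    constructor
    · simp [Prod.fst_sum]
      exact euclidean_eq_sum a
    · simp [Prod.snd_sum]
  rw [h1, map_add, map_sum, _root_.map_smul]
  simp only [_root_.map_smul, smul_eq_mul]

lemma clm_expand_W
    (L : (EuclideanSpace ℝ (Fin m) × EuclideanSpace ℝ (Fin m) × ℝ) →L[ℝ] ℝ)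
    (a b : EuclideanSpace ℝ (Fin m)) (c : ℝ) :
    L (a, b, c) = (∑ k, a k * L (EuclideanSpace.single k 1, 0, 0))
      + (∑ k, b k * L (0, EuclideanSpace.single k 1, 0)) + c * L (0, 0, 1) := by
  have h1 : ((a, b, c) : E × E × ℝ)
      = (∑ k, a k • ((EuclideanSpace.single k (1:ℝ) : E), (0:E), (0:ℝ)))
      + ((∑ k, b k • ((0:E), (EuclideanSpace.single k (1:ℝ) : E), (0:ℝ)))
      + c • ((0:E), (0:E), (1:ℝ))) := by
    rw [Prod.ext_iff]
    constructor
    · simp [Prod.fst_sum]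
      exact euclidean_eq_sum a
    · rw [Prod.ext_iff]
      constructor
      · simp [Prod.fst_sum, Prod.snd_sum]
        exact euclidean_eq_sum b
      · simp [Prod.snd_sum]
  rw [h1, map_add, map_add, map_sum, map_sum, _root_.map_smul]
  simp only [_root_.map_smul, smul_eq_mul, add_assoc]

/-- the spatial gradient of `φ` as a joint function of `(y,t)`. -/
noncomputable def gg (φ : EuclideanSpace ℝ (Fin m) × ℝ → ℝ) :
    EuclideanSpace ℝ (Fin m) × ℝ → EuclideanSpace ℝ (Fin m) :=
  fun q => gradient (fun z => φ (z, q.2)) q.1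

section phi

variable {φ : EuclideanSpace ℝ (Fin m) × ℝ → ℝ} (hφ : ContDiff ℝ 3 φ)

include hφ

lemma gg_apply (q : EuclideanSpace ℝ (Fin m) × ℝ) (k : Fin m) :
    gg φ q k = pd φ (EuclideanSpace.single k 1, 0) q := by
  rw [gg, grad_apply, fderiv_partial_fst φ q.1 q.2 ((hφ.differentiable (by norm_num)).differentiableAt)]
  rfl

lemma gg_contDiff : ContDiff ℝ 2 (gg φ) := by
  have heq : gg φ = fun q => (EuclideanSpace.equiv (Fin m) ℝ).symm
      (fun k => pd φ (EuclideanSpace.single k 1, 0) q) := by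
    funext q
    ext k
    rw [gg_apply hφ]
    rfl
  rw [heq]
  exact (EuclideanSpace.equiv (Fin m) ℝ).symm.contDiff.comp
    (contDiff_pi.2 fun k => pd_contDiff hφ (by norm_num) _)

lemma gg_fderiv (q : EuclideanSpace ℝ (Fin m) × ℝ) (u : EuclideanSpace ℝ (Fin m) × ℝ) (k : Fin m) :
    fderiv ℝ (gg φ) q u k = pd (pd φ (EuclideanSpace.single k 1, 0)) u q := by
  rw [fderiv_comp_apply _ _ (((gg_contDiff hφ).differentiable (by norm_num)).differentiableAt)]
  have heq : (fun q => gg φ q k) = pd φ (EuclideanSpace.single k 1, 0) :=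
    funext fun q => gg_apply hφ q k
  rw [heq]
  rfl

end phi

section phiH

variable {φ : EuclideanSpace ℝ (Fin m) × ℝ → ℝ} (hφ : ContDiff ℝ 3 φ)
variable {H : EuclideanSpace ℝ (Fin m) × EuclideanSpace ℝ (Fin m) × ℝ → ℝ} (hH : ContDiff ℝ 2 H)

include hφ

lemma comp_gg_hasFDerivAt (F : EuclideanSpace ℝ (Fin m) × EuclideanSpace ℝ (Fin m) × ℝ → ℝ)
    (hF : Differentiable ℝ F) (q0 : EuclideanSpace ℝ (Fin m) × ℝ) :
    HasFDerivAt (fun q => F (gg φ q, q))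
      ((fderiv ℝ F (gg φ q0, q0)).comp
        ((fderiv ℝ (gg φ) q0).prod (ContinuousLinearMap.id ℝ (EuclideanSpace ℝ (Fin m) × ℝ)))) q0 := by
  have hinner : HasFDerivAt (fun q => (gg φ q, q))
      ((fderiv ℝ (gg φ) q0).prod (ContinuousLinearMap.id ℝ (EuclideanSpace ℝ (Fin m) × ℝ))) q0 :=
    (((gg_contDiff hφ).differentiable (by norm_num)) q0).hasFDerivAt.prodMk (hasFDerivAt_id q0)
  exact HasFDerivAt.comp (hf := hinner) q0 ((hF _).hasFDerivAt)

lemma comp_pdH_value (v : EuclideanSpace ℝ (Fin m) × EuclideanSpace ℝ (Fin m) × ℝ)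
    (q0 : EuclideanSpace ℝ (Fin m) × ℝ) (i : Fin m) (hH : ContDiff ℝ 2 H) :
    fderiv ℝ (fun q => pd H v (gg φ q, q)) q0 (EuclideanSpace.single i 1, 0)
      = (∑ l, pd (pd φ (EuclideanSpace.single l 1, 0)) (EuclideanSpace.single i 1, 0) q0
          * pd (pd H v) (EuclideanSpace.single l 1, 0, 0) (gg φ q0, q0))
        + pd (pd H v) (0, EuclideanSpace.single i 1, 0) (gg φ q0, q0) := by
  have hFd : Differentiable ℝ (pd H v) :=
    (pd_contDiff (n := 1) hH (by norm_num) v).differentiable (by norm_num)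
  have h1 := comp_gg_hasFDerivAt hφ (pd H v) hFd q0
  rw [h1.fderiv]
  have h2 : ((fderiv ℝ (pd H v) (gg φ q0, q0)).comp
        ((fderiv ℝ (gg φ) q0).prod (ContinuousLinearMap.id ℝ (EuclideanSpace ℝ (Fin m) × ℝ))))
        (EuclideanSpace.single i 1, 0)
      = (fderiv ℝ (pd H v) (gg φ q0, q0))
          (fderiv ℝ (gg φ) q0 (EuclideanSpace.single i 1, 0), (EuclideanSpace.single i 1, (0:ℝ))) := rfl
  rw [h2, clm_expand_W]
  simp only [zero_mul, add_zero]
  congr 1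
  · refine Finset.sum_congr rfl fun l _ => ?_
    rw [gg_fderiv hφ]
    rfl
  · rw [show ∀ (c : Fin m → ℝ), (∑ l, (EuclideanSpace.single i (1:ℝ) : EuclideanSpace ℝ (Fin m)) l * c l) = c i from ?_]
    · rfl
    · intro c
      simp [EuclideanSpace.single_apply]

lemma first_var (hH : ContDiff ℝ 2 H)
    (hHJ : ∀ q, pd φ ((0 : EuclideanSpace ℝ (Fin m)), (1:ℝ)) q + H (gg φ q, q) = 0)
    (j : Fin m) (q : EuclideanSpace ℝ (Fin m) × ℝ) :
    pd (pd φ (0,1)) (EuclideanSpace.single j 1, 0) q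
    + ((∑ k, pd (pd φ (EuclideanSpace.single k 1, 0)) (EuclideanSpace.single j 1, 0) q
        * pd H (EuclideanSpace.single k 1, 0, 0) (gg φ q, q))
      + pd H (0, EuclideanSpace.single j 1, 0) (gg φ q, q)) = 0 := by
  have hA : HasFDerivAt (pd φ (0,1)) (fderiv ℝ (pd φ ((0 : EuclideanSpace ℝ (Fin m)), (1:ℝ))) q) q :=
    (((pd_contDiff (n := 2) hφ (by norm_num) _).differentiable (by norm_num)) q).hasFDerivAt
  have hB := comp_gg_hasFDerivAt hφ H (hH.differentiable (by norm_num)) q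
  have hsum := hA.fun_add hB
  have hzero : (fun q => pd φ ((0 : EuclideanSpace ℝ (Fin m)), (1:ℝ)) q + H (gg φ q, q))
      = fun _ => (0:ℝ) := funext hHJ
  rw [hzero] at hsum
  have h0 := hsum.unique (hasFDerivAt_const (0:ℝ) q)
  have h1 := congrArg (fun L : (EuclideanSpace ℝ (Fin m) × ℝ) →L[ℝ] ℝ =>
    L (EuclideanSpace.single j 1, (0:ℝ))) h0
  simp only [ContinuousLinearMap.add_apply, ContinuousLinearMap.zero_apply] at h1
  rw [show ((fderiv ℝ H (gg φ q, q)).comp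
        ((fderiv ℝ (gg φ) q).prod (ContinuousLinearMap.id ℝ (EuclideanSpace ℝ (Fin m) × ℝ))))
        (EuclideanSpace.single j 1, (0:ℝ))
      = (fderiv ℝ H (gg φ q, q))
          (fderiv ℝ (gg φ) q (EuclideanSpace.single j 1, 0), (EuclideanSpace.single j 1, (0:ℝ))) from rfl,
    clm_expand_W] at h1
  simp only [zero_mul, add_zero] at h1
  rw [show (∑ k, (EuclideanSpace.single j (1:ℝ) : EuclideanSpace ℝ (Fin m)) k
        * fderiv ℝ H (gg φ q, q) (0, EuclideanSpace.single k 1, 0))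
      = fderiv ℝ H (gg φ q, q) (0, EuclideanSpace.single j 1, 0) by
    simp [EuclideanSpace.single_apply]] at h1
  rw [show (∑ k, (fderiv ℝ (gg φ) q (EuclideanSpace.single j 1, 0)) k
        * fderiv ℝ H (gg φ q, q) (EuclideanSpace.single k 1, 0, 0))
      = ∑ k, pd (pd φ (EuclideanSpace.single k 1, 0)) (EuclideanSpace.single j 1, 0) q
        * pd H (EuclideanSpace.single k 1, 0, 0) (gg φ q, q) from
    Finset.sum_congr rfl fun k _ => by rw [gg_fderiv hφ]; rfl] at h1
  rw [← add_assoc] at h1 ⊢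
  exact h1

end phiH

noncomputable def ee {m : ℕ} (k : Fin m) : EuclideanSpace ℝ (Fin m) := EuclideanSpace.single k 1

lemma ee_def {m : ℕ} (k : Fin m) : ee k = EuclideanSpace.single k 1 := rfl

section phiH2

variable {φ : EuclideanSpace ℝ (Fin m) × ℝ → ℝ} (hφ : ContDiff ℝ 3 φ)
variable {H : EuclideanSpace ℝ (Fin m) × EuclideanSpace ℝ (Fin m) × ℝ → ℝ} (hH : ContDiff ℝ 2 H)

include hφ hH

set_option maxHeartbeats 1000000 in
lemma second_var
    (hHJ : ∀ q, pd φ ((0 : EuclideanSpace ℝ (Fin m)), (1:ℝ)) q + H (gg φ q, q) = 0)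
    (i j : Fin m) (q0 : EuclideanSpace ℝ (Fin m) × ℝ) :
    pd (pd (pd φ (0,1)) (ee j, 0)) (ee i, 0) q0
    + ((∑ k, (pd (pd φ (ee k, 0)) (ee j, 0) q0 *
          ((∑ l, pd (pd φ (ee l, 0)) (ee i, 0) q0
              * pd (pd H (ee k, 0, 0)) (ee l, 0, 0) (gg φ q0, q0))
            + pd (pd H (ee k, 0, 0)) (0, ee i, 0) (gg φ q0, q0))
        + pd H (ee k, 0, 0) (gg φ q0, q0) * pd (pd (pd φ (ee k, 0)) (ee j, 0)) (ee i, 0) q0))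
      + ((∑ l, pd (pd φ (ee l, 0)) (ee i, 0) q0
            * pd (pd H (0, ee j, 0)) (ee l, 0, 0) (gg φ q0, q0))
        + pd (pd H (0, ee j, 0)) (0, ee i, 0) (gg φ q0, q0))) = 0 := by
  classical
  -- differentiability facts
  have hφd1 : ∀ v w : EuclideanSpace ℝ (Fin m) × ℝ,
      HasFDerivAt (pd (pd φ v) w) (fderiv ℝ (pd (pd φ v) w) q0) q0 := fun v w =>
    (((pd_contDiff (n := 1) (pd_contDiff (n := 2) hφ (by norm_num) v) (by norm_num) w).differentiable
      (by norm_num)) q0).hasFDerivAt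
  have hHd : ∀ v, Differentiable ℝ (pd H v) := fun v =>
    (pd_contDiff (n := 1) hH (by norm_num) v).differentiable (by norm_num)
  -- the composite functions
  have hC : ∀ v, HasFDerivAt (fun q => pd H v (gg φ q, q))
      (fderiv ℝ (fun q => pd H v (gg φ q, q)) q0) q0 := fun v =>
    ((comp_gg_hasFDerivAt hφ (pd H v) (hHd v) q0).differentiableAt).hasFDerivAt
  -- the total function is identically zero
  have hzero : (fun q => pd (pd φ (0,1)) (ee j, 0) q
      + ((∑ k, pd (pd φ (ee k, 0)) (ee j, 0) q * pd H (ee k, 0, 0) (gg φ q, q))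
        + pd H (0, ee j, 0) (gg φ q, q))) = fun _ => (0:ℝ) := by
    funext q
    exact first_var hφ hH hHJ j q
  -- derivative of each summand
  have hterm1 := hφd1 (0,1) (ee j, 0)
  have hprod : ∀ k : Fin m, HasFDerivAt
      (fun q => pd (pd φ (ee k, 0)) (ee j, 0) q * pd H (ee k, 0, 0) (gg φ q, q))
      (pd (pd φ (ee k, 0)) (ee j, 0) q0 • fderiv ℝ (fun q => pd H (ee k, 0, 0) (gg φ q, q)) q0
        + pd H (ee k, 0, 0) (gg φ q0, q0) • fderiv ℝ (pd (pd φ (ee k, 0)) (ee j, 0)) q0) q0 :=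
    fun k => (hφd1 (ee k, 0) (ee j, 0)).mul (hC (ee k, 0, 0))
  have hsum : HasFDerivAt
      (fun q => ∑ k, pd (pd φ (ee k, 0)) (ee j, 0) q * pd H (ee k, 0, 0) (gg φ q, q))
      (∑ k, (pd (pd φ (ee k, 0)) (ee j, 0) q0 • fderiv ℝ (fun q => pd H (ee k, 0, 0) (gg φ q, q)) q0
        + pd H (ee k, 0, 0) (gg φ q0, q0) • fderiv ℝ (pd (pd φ (ee k, 0)) (ee j, 0)) q0)) q0 := by
    have := HasFDerivAt.fun_sum (fun k (_ : k ∈ Finset.univ) => hprod k)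
    simpa using this
  have htotal := hterm1.fun_add (hsum.fun_add (hC (0, ee j, 0)))
  rw [hzero] at htotal
  have h0 := htotal.unique (hasFDerivAt_const (0:ℝ) q0)
  have h1 := congrArg (fun L : (EuclideanSpace ℝ (Fin m) × ℝ) →L[ℝ] ℝ =>
    L (ee i, (0:ℝ))) h0
  simp only [ContinuousLinearMap.add_apply, ContinuousLinearMap.zero_apply,
    ContinuousLinearMap.sum_apply, ContinuousLinearMap.smul_apply, smul_eq_mul] at h1
  -- now rewrite the composite derivatives using comp_pdH_value
  rw [show (fderiv ℝ (fun q => pd H ((0 : EuclideanSpace ℝ (Fin m)), ee j, 0) (gg φ q, q)) q0)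
      (ee i, (0:ℝ)) = _ from comp_pdH_value hφ (0, ee j, 0) q0 i hH] at h1
  have h2 : ∀ k, (fderiv ℝ (fun q => pd H (ee k, (0:EuclideanSpace ℝ (Fin m)), (0:ℝ)) (gg φ q, q)) q0)
      (ee i, (0:ℝ))
      = (∑ l, pd (pd φ (ee l, 0)) (ee i, 0) q0
          * pd (pd H (ee k, 0, 0)) (ee l, 0, 0) (gg φ q0, q0))
        + pd (pd H (ee k, 0, 0)) (0, ee i, 0) (gg φ q0, q0) := fun k => by
    have := comp_pdH_value hφ ((ee k : EuclideanSpace ℝ (Fin m)), (0:EuclideanSpace ℝ (Fin m)), (0:ℝ)) q0 i hH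
    simpa [ee_def] using this
  simp only [h2] at h1
  -- identify plain fderiv applications with pd
  simp only [ee_def] at h1 ⊢
  exact h1

end phiH2

section Wpartial

variable {Y : Type*} [NormedAddCommGroup Y] [NormedSpace ℝ Y]

lemma fderiv_partial_snd (F : EuclideanSpace ℝ (Fin m) × ℝ → Y) (y : EuclideanSpace ℝ (Fin m)) (t : ℝ)
    (hF : DifferentiableAt ℝ F (y, t)) (c : ℝ) :
    fderiv ℝ (fun s => F (y, s)) t c = fderiv ℝ F (y, t) (0, c) := by
  have h1 : HasFDerivAt (fun s : ℝ => (y, s))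
      (ContinuousLinearMap.inr ℝ (EuclideanSpace ℝ (Fin m)) ℝ) t := hasFDerivAt_prodMk_right y t
  have h2 : HasFDerivAt (fun s => F (y, s))
      ((fderiv ℝ F (y, t)).comp (ContinuousLinearMap.inr ℝ (EuclideanSpace ℝ (Fin m)) ℝ)) t :=
    hF.hasFDerivAt.comp t h1
  rw [h2.fderiv]; rfl

lemma fderiv_partial_W1 (F : EuclideanSpace ℝ (Fin m) × EuclideanSpace ℝ (Fin m) × ℝ → Y)
    (p0 y0 : EuclideanSpace ℝ (Fin m)) (t0 : ℝ)
    (hF : DifferentiableAt ℝ F (p0, y0, t0)) (v : EuclideanSpace ℝ (Fin m)) :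
    fderiv ℝ (fun p => F (p, y0, t0)) p0 v = fderiv ℝ F (p0, y0, t0) (v, 0, 0) := by
  have h1 : HasFDerivAt (fun p : EuclideanSpace ℝ (Fin m) => (p, (y0, t0)))
      (ContinuousLinearMap.inl ℝ (EuclideanSpace ℝ (Fin m)) (EuclideanSpace ℝ (Fin m) × ℝ)) p0 :=
    hasFDerivAt_prodMk_left p0 (y0, t0)
  have h2 : HasFDerivAt (fun p => F (p, y0, t0))
      ((fderiv ℝ F (p0, y0, t0)).comp
        (ContinuousLinearMap.inl ℝ (EuclideanSpace ℝ (Fin m)) (EuclideanSpace ℝ (Fin m) × ℝ))) p0 :=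
    hF.hasFDerivAt.comp p0 h1
  rw [h2.fderiv]; rfl

lemma fderiv_partial_W2 (F : EuclideanSpace ℝ (Fin m) × EuclideanSpace ℝ (Fin m) × ℝ → Y)
    (p0 y0 : EuclideanSpace ℝ (Fin m)) (t0 : ℝ)
    (hF : DifferentiableAt ℝ F (p0, y0, t0)) (v : EuclideanSpace ℝ (Fin m)) :
    fderiv ℝ (fun y => F (p0, y, t0)) y0 v = fderiv ℝ F (p0, y0, t0) (0, v, 0) := by
  have h0 : HasFDerivAt (fun y : EuclideanSpace ℝ (Fin m) => (p0, (y, t0)))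
      ((0 : EuclideanSpace ℝ (Fin m) →L[ℝ] EuclideanSpace ℝ (Fin m)).prod
        (ContinuousLinearMap.inl ℝ (EuclideanSpace ℝ (Fin m)) ℝ)) y0 :=
    (hasFDerivAt_const p0 y0).prodMk (hasFDerivAt_prodMk_left y0 t0)
  have h2 : HasFDerivAt (fun y => F (p0, y, t0))
      ((fderiv ℝ F (p0, y0, t0)).comp
        ((0 : EuclideanSpace ℝ (Fin m) →L[ℝ] EuclideanSpace ℝ (Fin m)).prod
          (ContinuousLinearMap.inl ℝ (EuclideanSpace ℝ (Fin m)) ℝ))) y0 :=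
    hF.hasFDerivAt.comp y0 h0
  rw [h2.fderiv]; rfl

end Wpartial

noncomputable def hessMat' (ψ : EuclideanSpace ℝ (Fin m) → ℝ)
    (x : EuclideanSpace ℝ (Fin m)) : Matrix (Fin m) (Fin m) ℝ :=
  fun i j => (fderiv ℝ (fun y => gradient ψ y) x (EuclideanSpace.single j 1)) i

lemma diff_of_components (F : EuclideanSpace ℝ (Fin m) → EuclideanSpace ℝ (Fin m))
    (c : Fin m → EuclideanSpace ℝ (Fin m) → ℝ) (hc : ∀ k, Differentiable ℝ (c k))
    (hFc : ∀ p k, F p k = c k p) : Differentiable ℝ F := by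
  have hFeq : F = fun p => (EuclideanSpace.equiv (Fin m) ℝ).symm (fun k => c k p) := by
    funext p; ext k; rw [hFc]; rfl
  rw [hFeq]
  exact (EuclideanSpace.equiv (Fin m) ℝ).symm.differentiable.comp
    (differentiable_pi.2 fun k => hc k)

section entries

variable {φ : EuclideanSpace ℝ (Fin m) × ℝ → ℝ} (hφ : ContDiff ℝ 3 φ)

include hφ

lemma hess_phi (y : EuclideanSpace ℝ (Fin m)) (s : ℝ) (i j : Fin m) :
    hessMat' (fun z => φ (z, s)) y i j = pd (pd φ (ee i, 0)) (ee j, 0) (y, s) := by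
  rw [hessMat']
  have hfun : (fun y' => gradient (fun z => φ (z, s)) y') = fun y' => gg φ (y', s) := rfl
  rw [hfun]
  have hdiff : DifferentiableAt ℝ (fun y' => gg φ (y', s)) y := by
    have h1 : Differentiable ℝ (gg φ) := (gg_contDiff hφ).differentiable (by norm_num)
    exact (h1.comp (differentiable_id.prodMk (differentiable_const s))).differentiableAt
  rw [fderiv_comp_apply _ _ hdiff]
  have h2 : (fun y' => gg φ (y', s) i) = fun y' => pd φ (ee i, 0) (y', s) := by
    funext y'; rw [gg_apply hφ]; rfl
  rw [h2]
  have h3 : DifferentiableAt ℝ (pd φ (ee i, 0)) (y, s) :=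
    ((pd_contDiff (n := 2) hφ (by norm_num) _).differentiable (by norm_num)).differentiableAt
  have h4 := fderiv_partial_fst (pd φ ((ee i : EuclideanSpace ℝ (Fin m)), (0:ℝ))) y s h3
    (EuclideanSpace.single j 1)
  rw [h4]
  rfl

end entries

section Hentries

variable {H : EuclideanSpace ℝ (Fin m) × EuclideanSpace ℝ (Fin m) × ℝ → ℝ} (hH : ContDiff ℝ 2 H)

include hH

lemma gradp_apply (p y0 : EuclideanSpace ℝ (Fin m)) (t0 : ℝ) (k : Fin m) :
    gradient (fun p' => H (p', y0, t0)) p k = pd H (ee k, 0, 0) (p, y0, t0) := by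
  rw [grad_apply, fderiv_partial_W1 _ _ _ _ ((hH.differentiable (by norm_num)).differentiableAt)]
  rfl

lemma gradx_apply (p y0 : EuclideanSpace ℝ (Fin m)) (t0 : ℝ) (k : Fin m) :
    gradient (fun y => H (p, y, t0)) y0 k = pd H (0, ee k, 0) (p, y0, t0) := by
  rw [grad_apply, fderiv_partial_W2 _ _ _ _ ((hH.differentiable (by norm_num)).differentiableAt)]
  rfl

lemma hessH_pp (p0 y0 : EuclideanSpace ℝ (Fin m)) (t0 : ℝ) (k l : Fin m) :
    hessMat' (fun p => H (p, y0, t0)) p0 k l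
      = pd (pd H (ee k, 0, 0)) (ee l, 0, 0) (p0, y0, t0) := by
  rw [hessMat']
  have hdiff : Differentiable ℝ (fun p => gradient (fun p' => H (p', y0, t0)) p) := by
    refine diff_of_components _ (fun r => pd H (ee r, 0, 0) ∘ (fun p => (p, y0, t0))) ?_ ?_
    · intro r
      exact ((pd_contDiff (n := 1) hH (by norm_num) _).differentiable (by norm_num)).comp
        ((differentiable_id.prodMk (differentiable_const (y0, t0))))
    · intro p r
      exact gradp_apply hH p y0 t0 r
  rw [fderiv_comp_apply _ _ hdiff.differentiableAt]
  have h2 : (fun p => gradient (fun p' => H (p', y0, t0)) p k)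
      = fun p => pd H (ee k, 0, 0) (p, y0, t0) := funext fun p => gradp_apply hH p y0 t0 k
  rw [h2]
  have h3 : DifferentiableAt ℝ (pd H ((ee k : EuclideanSpace ℝ (Fin m)), 0, 0)) (p0, y0, t0) :=
    ((pd_contDiff (n := 1) hH (by norm_num) _).differentiable (by norm_num)).differentiableAt
  rw [fderiv_partial_W1 _ _ _ _ h3]
  rfl

lemma hessH_xx (p0 y0 : EuclideanSpace ℝ (Fin m)) (t0 : ℝ) (k l : Fin m) :
    hessMat' (fun y => H (p0, y, t0)) y0 k l
      = pd (pd H (0, ee k, 0)) (0, ee l, 0) (p0, y0, t0) := by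
  rw [hessMat']
  have hdiff : Differentiable ℝ (fun y => gradient (fun y' => H (p0, y', t0)) y) := by
    refine diff_of_components _ (fun r => pd H (0, ee r, 0) ∘ (fun y => (p0, y, t0))) ?_ ?_
    · intro r
      exact ((pd_contDiff (n := 1) hH (by norm_num) _).differentiable (by norm_num)).comp
        ((differentiable_const p0).prodMk (differentiable_id.prodMk (differentiable_const t0)))
    · intro y r
      exact gradx_apply hH p0 y t0 r
  rw [fderiv_comp_apply _ _ hdiff.differentiableAt]
  have h2 : (fun y => gradient (fun y' => H (p0, y', t0)) y k)
      = fun y => pd H (0, ee k, 0) (p0, y, t0) := funext fun y => gradx_apply hH p0 y t0 k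
  rw [h2]
  have h3 : DifferentiableAt ℝ (pd H ((0 : EuclideanSpace ℝ (Fin m)), ee k, 0)) (p0, y0, t0) :=
    ((pd_contDiff (n := 1) hH (by norm_num) _).differentiable (by norm_num)).differentiableAt
  rw [fderiv_partial_W2 _ _ _ _ h3]
  rfl

lemma hessH_xp (p0 y0 : EuclideanSpace ℝ (Fin m)) (t0 : ℝ) (i j : Fin m) :
    (fderiv ℝ (fun p => gradient (fun y => H (p, y, t0)) y0) p0 (EuclideanSpace.single j 1)) i
      = pd (pd H (0, ee i, 0)) (ee j, 0, 0) (p0, y0, t0) := by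
  have hdiff : Differentiable ℝ (fun p => gradient (fun y => H (p, y, t0)) y0) := by
    refine diff_of_components _ (fun r => pd H (0, ee r, 0) ∘ (fun p => (p, y0, t0))) ?_ ?_
    · intro r
      exact ((pd_contDiff (n := 1) hH (by norm_num) _).differentiable (by norm_num)).comp
        ((differentiable_id.prodMk (differentiable_const (y0, t0))))
    · intro p r
      exact gradx_apply hH p y0 t0 r
  rw [fderiv_comp_apply _ _ hdiff.differentiableAt]
  have h2 : (fun p => gradient (fun y => H (p, y, t0)) y0 i)
      = fun p => pd H (0, ee i, 0) (p, y0, t0) := funext fun p => gradx_apply hH p y0 t0 i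
  rw [h2]
  have h3 : DifferentiableAt ℝ (pd H ((0 : EuclideanSpace ℝ (Fin m)), ee i, 0)) (p0, y0, t0) :=
    ((pd_contDiff (n := 1) hH (by norm_num) _).differentiable (by norm_num)).differentiableAt
  rw [fderiv_partial_W1 _ _ _ _ h3]
  rfl

end Hentries

section syms

variable {φ : EuclideanSpace ℝ (Fin m) × ℝ → ℝ} (hφ : ContDiff ℝ 3 φ)

include hφ

lemma pd2_sym (v w q : EuclideanSpace ℝ (Fin m) × ℝ) :
    pd (pd φ v) w q = pd (pd φ w) v q :=
  pd_symm (hφ.contDiffAt.of_le (by norm_num)) v w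

lemma pd3_sym12 (v w u q : EuclideanSpace ℝ (Fin m) × ℝ) :
    pd (pd (pd φ v) w) u q = pd (pd (pd φ w) v) u q := by
  have h : pd (pd φ v) w = pd (pd φ w) v := funext fun q' => pd2_sym hφ v w q'
  rw [h]

lemma pd3_sym23 (v w u q : EuclideanSpace ℝ (Fin m) × ℝ) :
    pd (pd (pd φ v) w) u q = pd (pd (pd φ v) u) w q :=
  pd_symm (pd_contDiff (n := 2) hφ (by norm_num) v).contDiffAt w u

lemma traj_hasDerivAt (x : ℝ → EuclideanSpace ℝ (Fin m)) (xd : EuclideanSpace ℝ (Fin m))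
    (t : ℝ) (hx : HasDerivAt x xd t) (i j : Fin m) :
    HasDerivAt (fun s => pd (pd φ (ee i, 0)) (ee j, 0) (x s, s))
      ((∑ k, xd k * pd (pd (pd φ (ee i, 0)) (ee j, 0)) (ee k, 0) (x t, t))
        + pd (pd (pd φ (ee i, 0)) (ee j, 0)) (0, 1) (x t, t)) t := by
  have hxs : HasDerivAt (fun s => (x s, s)) (xd, 1) t := hx.prodMk (hasDerivAt_id t)
  have hF : HasFDerivAt (pd (pd φ (ee i, 0)) (ee j, 0))
      (fderiv ℝ (pd (pd φ (ee i, 0)) (ee j, 0)) (x t, t)) (x t, t) :=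
    (((pd_contDiff (n := 1) (pd_contDiff (n := 2) hφ (by norm_num) _) (by norm_num) _).differentiable
      (by norm_num)) (x t, t)).hasFDerivAt
  have h1 := HasFDerivAt.comp_hasDerivAt (f := fun s => (x s, s)) t hF hxs
  have hval : fderiv ℝ (pd (pd φ (ee i, 0)) (ee j, 0)) (x t, t) (xd, 1)
      = (∑ k, xd k * pd (pd (pd φ (ee i, 0)) (ee j, 0)) (ee k, 0) (x t, t))
        + pd (pd (pd φ (ee i, 0)) (ee j, 0)) (0, 1) (x t, t) := by
    rw [clm_expand_Q]
    simp only [one_mul]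
    rfl
  exact hval ▸ h1

end syms

lemma riccati_algebra (A C X : Fin m → Fin m → ℝ) (xx : ℝ)
    (hA : ∀ a b, A a b = A b a) (hC : ∀ a b, C a b = C b a) (i j : Fin m) :
    -xx - (∑ k, X i k * A k j) - (∑ k, A i k * X j k) - (∑ k, (∑ l, A i l * C l k) * A k j)
    = -((∑ k, A k j * ((∑ l, A l i * C k l) + X i k)) + ((∑ l, A l i * X j l) + xx)) := by
  have h1 : (∑ k, A k j * ((∑ l, A l i * C k l) + X i k))
      = (∑ k, ∑ l, A k j * (A l i * C k l)) + ∑ k, A k j * X i k := by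
    rw [← Finset.sum_add_distrib]
    refine Finset.sum_congr rfl fun k _ => ?_
    rw [mul_add, Finset.mul_sum]
  rw [h1]
  have h2 : (∑ k, (∑ l, A i l * C l k) * A k j) = ∑ k, ∑ l, A k j * (A l i * C k l) := by
    refine Finset.sum_congr rfl fun k _ => ?_
    rw [Finset.sum_mul]
    refine Finset.sum_congr rfl fun l _ => ?_
    rw [hA i l, hC l k]
    ring
  rw [h2]
  have h3 : (∑ k, X i k * A k j) = ∑ k, A k j * X i k :=
    Finset.sum_congr rfl fun k _ => by ring
  rw [h3]
  have h4 : (∑ k, A i k * X j k) = ∑ l, A l i * X j l :=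
    Finset.sum_congr rfl fun k _ => by rw [hA i k]
  rw [h4]
  ring


lemma hessMat_eq {m : ℕ} : (hessMat (m := m)) = hessMat' := rfl

set_option maxHeartbeats 2000000 in
theorem hamilton_jacobi_hessian_riccati {m : ℕ}
    (h : EuclideanSpace ℝ (Fin m) → EuclideanSpace ℝ (Fin m) → ℝ → ℝ)
    (φ : EuclideanSpace ℝ (Fin m) × ℝ → ℝ)
    (x : ℝ → EuclideanSpace ℝ (Fin m))
    (hh : ContDiff ℝ 2 (fun q : EuclideanSpace ℝ (Fin m) × EuclideanSpace ℝ (Fin m) × ℝ =>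
      h q.1 q.2.1 q.2.2))
    (hφ : ContDiff ℝ 3 φ)
    (hpde : ∀ y t, deriv (fun s => φ (y, s)) t
      + h (gradient (fun z => φ (z, t)) y) y t = 0)
    (hflow : ∀ t, HasDerivAt x
      (gradient (fun p => h p (x t) t) (gradient (fun z => φ (z, t)) (x t))) t)
    -- the momentum `∇φ` along the trajectory
    (pt : ℝ → EuclideanSpace ℝ (Fin m))
    (hpt : ∀ t, pt t = gradient (fun z => φ (z, t)) (x t))
    -- the Hessian `P(t) = ∇∇φ(x(t), t)` along the trajectory
    (P : ℝ → Matrix (Fin m) (Fin m) ℝ)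
    (hP : ∀ t, P t = hessMat (fun y => φ (y, t)) (x t))
    -- the second derivatives of the Hamiltonian along the trajectory
    (Hxx Hxp Hpp : ℝ → Matrix (Fin m) (Fin m) ℝ)
    (hHxx : ∀ t, Hxx t = hessMat (fun y => h (pt t) y t) (x t))
    (hHpp : ∀ t, Hpp t = hessMat (fun p => h p (x t) t) (pt t))
    (hHxp : ∀ t i j, Hxp t i j =
      (fderiv ℝ (fun p => gradient (fun y => h p y t) (x t)) (pt t)
        (EuclideanSpace.single j 1)) i) :
    ∀ t i j, HasDerivAt (fun s => P s i j)
      ((- Hxx t - Hxp t * P t - P t * (Hxp t)ᵀ - P t * Hpp t * P t) i j) t := by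
  intro t i j
  classical
  set H : EuclideanSpace ℝ (Fin m) × EuclideanSpace ℝ (Fin m) × ℝ → ℝ :=
    fun w => h w.1 w.2.1 w.2.2 with hHdef
  have hH : ContDiff ℝ 2 H := hh
  -- the Hamilton–Jacobi identity in `pd` form
  have hHJ : ∀ q : EuclideanSpace ℝ (Fin m) × ℝ,
      pd φ ((0 : EuclideanSpace ℝ (Fin m)), (1:ℝ)) q + H (gg φ q, q) = 0 := by
    intro q
    have h0 := hpde q.1 q.2
    have hderiv : deriv (fun s => φ (q.1, s)) q.2 = pd φ (0,1) q := by
      show fderiv ℝ (fun s => φ (q.1, s)) q.2 1 = fderiv ℝ φ q (0,1)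
      rw [fderiv_partial_snd φ q.1 q.2 ((hφ.differentiable (by norm_num)).differentiableAt)]
    rw [hderiv] at h0
    exact h0
  -- basic abbreviations
  have hQ0 : True := trivial
  -- entries of P
  have hfact_P : ∀ s a b, P s a b = pd (pd φ (ee a, 0)) (ee b, 0) (x s, s) := by
    intro s a b
    rw [hP s, hessMat_eq]
    exact hess_phi hφ (x s) s a b
  -- identification of the momentum
  have hptgg : ∀ s, pt s = gg φ (x s, s) := fun s => hpt s
  -- entries of the Hamiltonian second derivatives
  have hfact_Hpp : ∀ a b, Hpp t a b
      = pd (pd H (ee a, 0, 0)) (ee b, 0, 0) (gg φ (x t, t), (x t, t)) := by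
    intro a b
    rw [hHpp t, hessMat_eq, ← hptgg t]
    exact hessH_pp hH (pt t) (x t) t a b
  have hfact_Hxx : ∀ a b, Hxx t a b
      = pd (pd H (0, ee a, 0)) (0, ee b, 0) (gg φ (x t, t), (x t, t)) := by
    intro a b
    rw [hHxx t, hessMat_eq, ← hptgg t]
    exact hessH_xx hH (pt t) (x t) t a b
  have hfact_Hxp : ∀ a b, Hxp t a b
      = pd (pd H (0, ee a, 0)) (ee b, 0, 0) (gg φ (x t, t), (x t, t)) := by
    intro a b
    rw [hHxp t a b, ← hptgg t]
    exact hessH_xp hH (pt t) (x t) t a b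
  -- the flow velocity in `pd` form
  have hxd : ∀ k, gradient (fun p => h p (x t) t) (gradient (fun z => φ (z, t)) (x t)) k
      = pd H (ee k, 0, 0) (gg φ (x t, t), (x t, t)) := by
    intro k
    exact gradp_apply hH (gg φ (x t, t)) (x t) t k
  -- trajectory derivative
  have hD := traj_hasDerivAt hφ x _ t (hflow t) i j
  -- second variation identity
  have hSV := second_var hφ hH hHJ i j (x t, t)
  -- rewrite the function
  have hPfun : (fun s => P s i j) = fun s => pd (pd φ (ee i, 0)) (ee j, 0) (x s, s) :=
    funext fun s => hfact_P s i j
  rw [hPfun]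
  -- it remains to identify the derivative values
  convert hD using 1
  -- goal : matrix entry = V
  simp only [Matrix.sub_apply, Matrix.neg_apply, Matrix.mul_apply, Matrix.transpose_apply]
  simp only [hfact_Hxx, hfact_Hxp, hfact_Hpp, hfact_P, hxd]
  -- symmetry rewrites
  have hsymH : ∀ v w, pd (pd H v) w (gg φ (x t, t), (x t, t))
      = pd (pd H w) v (gg φ (x t, t), (x t, t)) := fun v w =>
    pd_symm hH.contDiffAt v w
  have hsymA : ∀ a b, pd (pd φ (ee a, 0)) (ee b, 0) ((x t : EuclideanSpace ℝ (Fin m)), t)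
      = pd (pd φ (ee b, 0)) (ee a, 0) (x t, t) := fun a b => pd2_sym hφ _ _ _
  have hT1 : pd (pd (pd φ (0,1)) (ee j, 0)) (ee i, 0) ((x t : EuclideanSpace ℝ (Fin m)), t)
      = pd (pd (pd φ (ee i, 0)) (ee j, 0)) (0, 1) (x t, t) := by
    rw [pd3_sym12 hφ, pd3_sym23 hφ, pd3_sym12 hφ]
  have hT3 : ∀ k, pd (pd (pd φ (ee k, 0)) (ee j, 0)) (ee i, 0) ((x t : EuclideanSpace ℝ (Fin m)), t)
      = pd (pd (pd φ (ee i, 0)) (ee j, 0)) (ee k, 0) (x t, t) := by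
    intro k
    rw [pd3_sym12 hφ, pd3_sym23 hφ, pd3_sym12 hφ]
  rw [hT1, ] at hSV
  simp only [hT3] at hSV
  -- split the sum in hSV
  rw [show (∑ k, (pd (pd φ (ee k, 0)) (ee j, 0) ((x t : EuclideanSpace ℝ (Fin m)), t) *
          ((∑ l, pd (pd φ (ee l, 0)) (ee i, 0) (x t, t)
              * pd (pd H (ee k, 0, 0)) (ee l, 0, 0) (gg φ (x t, t), (x t, t)))
            + pd (pd H (ee k, 0, 0)) (0, ee i, 0) (gg φ (x t, t), (x t, t)))
        + pd H (ee k, 0, 0) (gg φ (x t, t), (x t, t))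
          * pd (pd (pd φ (ee i, 0)) (ee j, 0)) (ee k, 0) (x t, t)))
      = (∑ k, pd (pd φ (ee k, 0)) (ee j, 0) ((x t : EuclideanSpace ℝ (Fin m)), t) *
          ((∑ l, pd (pd φ (ee l, 0)) (ee i, 0) (x t, t)
              * pd (pd H (ee k, 0, 0)) (ee l, 0, 0) (gg φ (x t, t), (x t, t)))
            + pd (pd H (ee k, 0, 0)) (0, ee i, 0) (gg φ (x t, t), (x t, t))))
        + ∑ k, pd H (ee k, 0, 0) (gg φ (x t, t), (x t, t))
          * pd (pd (pd φ (ee i, 0)) (ee j, 0)) (ee k, 0) (x t, t) from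
    Finset.sum_add_distrib] at hSV
  -- use the algebra lemma
  have halg := riccati_algebra
    (fun a b => pd (pd φ (ee a, 0)) (ee b, 0) ((x t : EuclideanSpace ℝ (Fin m)), t))
    (fun a b => pd (pd H (ee a, 0, 0)) (ee b, 0, 0) (gg φ (x t, t), (x t, t)))
    (fun a b => pd (pd H (0, ee a, 0)) (ee b, 0, 0) (gg φ (x t, t), (x t, t)))
    (pd (pd H (0, ee i, 0)) (0, ee j, 0) (gg φ (x t, t), (x t, t)))
    hsymA
    (fun a b => hsymH _ _)
    i j
  -- final arithmetic
  have e1 : ∀ k : Fin m, pd (pd H (ee k, 0, 0)) (0, ee i, 0) (gg φ (x t, t), (x t, t))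
      = pd (pd H (0, ee i, 0)) (ee k, 0, 0) (gg φ (x t, t), (x t, t)) := fun k => hsymH _ _
  have e2 : pd (pd H ((0 : EuclideanSpace ℝ (Fin m)), ee j, 0)) (0, ee i, 0) (gg φ (x t, t), (x t, t))
      = pd (pd H (0, ee i, 0)) (0, ee j, 0) (gg φ (x t, t), (x t, t)) := hsymH _ _
  simp only [e1, e2] at hSV
  rw [halg]
  linarith [hSV]
end

section
/- Let A, B, C, M : ℝ → Matrix (Fin m) (Fin m) ℝ be such that M, and the curve x : ℝ → ℝ^m, are differentiable, A(t), C(t), M(t) are symmetric for every t, M′(t) = − A(t) − B(t) M(t) − M(t) B(t)ᵀ − M(t) C(t) M(t), and x′(t) = (C(t) M(t) + B(t)ᵀ) x(t) for all t. Then t ↦ x(t)ᵀ M(t) x(t) is differentiable with d/dt [x(t)ᵀ M(t) x(t)] = − x(t)ᵀ ( A(t) − M(t) C(t) M(t) ) x(t). -/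
open Matrix

theorem riccati_quadratic_form_contraction {m : ℕ}
    (A B C M : ℝ → Matrix (Fin m) (Fin m) ℝ)
    (x : ℝ → (Fin m → ℝ))
    (hAsymm : ∀ t, (A t)ᵀ = A t)
    (hCsymm : ∀ t, (C t)ᵀ = C t)
    (hMsymm : ∀ t, (M t)ᵀ = M t)
    (hM : ∀ t i j, HasDerivAt (fun s => M s i j)
      ((- A t - B t * M t - M t * (B t)ᵀ - M t * C t * M t) i j) t)
    (hx : ∀ t i, HasDerivAt (fun s => x s i) (((C t * M t + (B t)ᵀ) *ᵥ x t) i) t) :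
    ∀ t, HasDerivAt (fun s => x s ⬝ᵥ (M s *ᵥ x s))
      (-(x t ⬝ᵥ ((A t - M t * C t * M t) *ᵥ x t))) t := by
  intro t
  set Md := (- A t - B t * M t - M t * (B t)ᵀ - M t * C t * M t) with hMd
  set Q := (C t * M t + (B t)ᵀ) with hQ
  set xd := Q *ᵥ x t with hxd
  have hinner : ∀ i, HasDerivAt (fun s => (M s *ᵥ x s) i)
      ((Md *ᵥ x t + M t *ᵥ xd) i) t := by
    intro i
    simp only [mulVec, dotProduct, Pi.add_apply]
    have h := HasDerivAt.fun_sum (fun j (_ : j ∈ Finset.univ) => (hM t i j).fun_mul (hx t j))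
    refine h.congr_deriv ?_
    rw [← Finset.sum_add_distrib]
  have h1 : HasDerivAt (fun s => x s ⬝ᵥ (M s *ᵥ x s))
      (xd ⬝ᵥ (M t *ᵥ x t) + x t ⬝ᵥ (Md *ᵥ x t + M t *ᵥ xd)) t := by
    have h := HasDerivAt.fun_sum (fun i (_ : i ∈ Finset.univ) => (hx t i).fun_mul (hinner i))
    simp only [dotProduct]
    refine h.congr_deriv ?_
    rw [← Finset.sum_add_distrib]
  convert h1 using 1
  have key : xd ⬝ᵥ (M t *ᵥ x t) = x t ⬝ᵥ ((Qᵀ * M t) *ᵥ x t) := by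
    rw [hxd, ← vecMul_transpose, ← dotProduct_mulVec, mulVec_mulVec]
  rw [key, dotProduct_add, mulVec_mulVec, ← dotProduct_add, ← dotProduct_add,
    ← add_mulVec, ← add_mulVec]
  have hQt : Qᵀ = M t * C t + B t := by
    rw [hQ, transpose_add, transpose_mul, hCsymm, hMsymm, transpose_transpose]
  have : Qᵀ * M t + (Md + M t * Q) = -(A t - M t * C t * M t) := by
    rw [hQt, hMd, hQ]
    noncomm_ring
  rw [this, neg_mulVec, dotProduct_neg]
end

section
/- Let T > 0, let a, b, c : ℝ → ℝ be continuous, and let f : ℝ → ℝ be differentiable on [0,T] and satisfy the scalar Riccati equation f′(t) = − a(t) − 2 b(t) f(t) − c(t) f(t)² for all t ∈ [0,T]. If a(t) < 0 for all t ∈ [0,T] and f(0) > 0, then f(t) > 0 for all t ∈ [0,T]. -/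
open Set

theorem scalar_riccati_positivity (T : ℝ) (hT : 0 < T)
    (a b c : ℝ → ℝ) (ha : Continuous a) (hb : Continuous b) (hc : Continuous c)
    (f : ℝ → ℝ)
    (hf : ∀ t ∈ Icc (0 : ℝ) T,
      HasDerivAt f (- a t - 2 * b t * f t - c t * (f t) ^ 2) t)
    (haneg : ∀ t ∈ Icc (0 : ℝ) T, a t < 0)
    (hf0 : 0 < f 0) :
    ∀ t ∈ Icc (0 : ℝ) T, 0 < f t := by
  by_contra h
  push_neg at h
  obtain ⟨t0, ht0, hft0⟩ := h
  set S : Set ℝ := {t | t ∈ Icc (0 : ℝ) T ∧ f t ≤ 0} with hSdef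
  have hcont : ContinuousOn f (Icc (0 : ℝ) T) :=
    fun t ht => ((hf t ht).continuousAt).continuousWithinAt
  have hSne : S.Nonempty := ⟨t0, ht0, hft0⟩
  have hSbdd : BddBelow S := ⟨0, fun t ht => ht.1.1⟩
  have hSclosed : IsClosed S := by
    have : S = Icc (0 : ℝ) T ∩ f ⁻¹' (Iic 0) := by
      ext t; simp [hSdef, and_comm]
    rw [this]
    exact hcont.preimage_isClosed_of_isClosed isClosed_Icc isClosed_Iic
  set τ := sInf S with hτdef
  have hτS : τ ∈ S := hSclosed.csInf_mem hSne hSbdd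
  have hτIcc : τ ∈ Icc (0 : ℝ) T := hτS.1
  have hτpos : 0 < τ := by
    rcases lt_or_eq_of_le hτIcc.1 with h0 | h0
    · exact h0
    · exact absurd hτS.2 (by rw [← h0]; linarith)
  have hpos_before : ∀ t, 0 ≤ t → t < τ → 0 < f t := by
    intro t ht0' htτ
    by_contra hle
    push_neg at hle
    have : t ∈ S := ⟨⟨ht0', le_trans htτ.le hτIcc.2⟩, hle⟩
    exact absurd (csInf_le hSbdd this) (not_le.mpr htτ)
  have hfτ : f τ = 0 := by
    rcases lt_or_eq_of_le hτS.2 with hlt | heq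
    · exfalso
      have hsub : Icc (0 : ℝ) τ ⊆ Icc (0 : ℝ) T := Icc_subset_Icc le_rfl hτIcc.2
      have := intermediate_value_Icc' hτIcc.1 (hcont.mono hsub)
      have h0mem : (0 : ℝ) ∈ Icc (f τ) (f 0) := ⟨hlt.le, hf0.le⟩
      obtain ⟨s, hs, hfs⟩ := this h0mem
      have hsS : s ∈ S := ⟨⟨hs.1, le_trans hs.2 hτIcc.2⟩, hfs.le⟩
      have : τ ≤ s := csInf_le hSbdd hsS
      have : s = τ := le_antisymm hs.2 this
      rw [this] at hfs
      linarith
    · exact heq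
  -- derivative at τ is -a τ > 0
  have hd := hf τ hτIcc
  rw [hfτ] at hd
  simp only [mul_zero, zero_pow, sub_zero, ne_eq, OfNat.ofNat_ne_zero,
    not_false_eq_true] at hd
  have hdpos : 0 < -a τ := by linarith [haneg τ hτIcc]
  have hslope : Filter.Tendsto (slope f τ) (nhdsWithin τ {τ}ᶜ) (nhds (-a τ)) :=
    hasDerivAt_iff_tendsto_slope.mp hd
  have hslope' : Filter.Tendsto (slope f τ) (nhdsWithin τ (Iio τ)) (nhds (-a τ)) :=
    hslope.mono_left (nhdsWithin_mono τ (fun x hx => ne_of_lt hx))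
  have h1 : ∀ᶠ t in nhdsWithin τ (Iio τ), 0 < slope f τ t :=
    hslope'.eventually (eventually_gt_nhds hdpos)
  have h2 : Ioo (0 : ℝ) τ ∈ nhdsWithin τ (Iio τ) :=
    Ioo_mem_nhdsLT_of_mem ⟨hτpos, le_rfl⟩
  obtain ⟨t, hslopet, htIoo⟩ := (h1.and (Filter.eventually_of_mem h2 (fun x hx => hx))).exists
  have hslope_val : slope f τ t = (f t - 0) / (t - τ) := by
    rw [slope_def_field, hfτ]
  rw [hslope_val, sub_zero] at hslopet
  have hneg : t - τ < 0 := by linarith [htIoo.2]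
  have : f t < 0 := by
    by_contra hge
    push_neg at hge
    have : (f t) / (t - τ) ≤ 0 := div_nonpos_of_nonneg_of_nonpos hge hneg.le
    linarith
  linarith [hpos_before t htIoo.1.le htIoo.2]
end

section
/- Let L > 0, Λ ≥ 0 and λ ∈ ℝ. Let a, v : [0,L] × ℝ → ℝ and A : [0,L] × ℝ → ℝ be continuously differentiable with A(x,t) ≥ Λ and −a(x,t) + ½ ∂v/∂x(x,t) ≤ λ for all (x,t) ∈ [0,L] × [0,∞). Let u : [0,L] × ℝ → ℝ be twice continuously differentiable, satisfy the reaction–convection–diffusion equation ∂u/∂t + a u + v ∂u/∂x = ∂/∂x ( A ∂u/∂x ) on [0,L] × [0,∞), and satisfy u(0,t) = u(L,t) = 0 for all t ≥ 0. Then for all t ≥ 0, ∫₀^L u(x,t)² dx ≤ e^{2(λ − Λπ²/L²) t} ∫₀^L u(x,0)² dx; in particular, if λ − Λπ²/L² < 0 the solution converges exponentially to zero in L². -/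
open MeasureTheory Set intervalIntegral Real
open Filter Topology

section helpers
variable {L : ℝ}

lemma slice_left {n : ℕ∞} {f : ℝ → ℝ → ℝ}
    (hf : ContDiffOn ℝ n (fun p : ℝ × ℝ => f p.1 p.2) (Icc 0 L ×ˢ univ)) (t : ℝ) :
    ContDiffOn ℝ n (fun y => f y t) (Icc 0 L) := by
  have h : ContDiff ℝ n (fun y : ℝ => (y, t)) := contDiff_id.prodMk contDiff_const
  exact hf.comp h.contDiffOn (fun y hy => ⟨hy, mem_univ t⟩)

lemma uds (hL : 0 < L) : UniqueDiffOn ℝ (Icc (0:ℝ) L ×ˢ (univ : Set ℝ)) :=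
  (uniqueDiffOn_Icc hL).prod uniqueDiffOn_univ

lemma hasDerivAt_right {f : ℝ → ℝ → ℝ}
    (hf : ContDiffOn ℝ 1 (fun p : ℝ × ℝ => f p.1 p.2) (Icc 0 L ×ˢ univ))
    {x t : ℝ} (hx : x ∈ Icc 0 L) :
    HasDerivAt (fun s => f x s)
      (fderivWithin ℝ (fun p : ℝ × ℝ => f p.1 p.2) (Icc 0 L ×ˢ univ) (x, t) (0, 1)) t := by
  have hdiff : DifferentiableWithinAt ℝ (fun p : ℝ × ℝ => f p.1 p.2) (Icc 0 L ×ˢ univ) (x, t) :=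
    (hf.differentiableOn one_ne_zero) (x, t) ⟨hx, mem_univ t⟩
  have hF := hdiff.hasFDerivWithinAt
  have hι : HasDerivAt (fun s : ℝ => ((x, s) : ℝ × ℝ)) ((0 : ℝ), (1 : ℝ)) t := by
    simpa using ((hasDerivAt_const t x).prodMk (hasDerivAt_id t))
  have := hF.comp_hasDerivWithinAt t (hι.hasDerivWithinAt (s := univ))
    (fun s _ => ⟨hx, mem_univ s⟩)
  simpa [hasDerivWithinAt_univ, Function.comp_def] using this

lemma hasDerivWithinAt_left {f : ℝ → ℝ → ℝ}
    (hf : ContDiffOn ℝ 1 (fun p : ℝ × ℝ => f p.1 p.2) (Icc 0 L ×ˢ univ))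
    {x t : ℝ} (hx : x ∈ Icc 0 L) :
    HasDerivWithinAt (fun y => f y t)
      (fderivWithin ℝ (fun p : ℝ × ℝ => f p.1 p.2) (Icc 0 L ×ˢ univ) (x, t) (1, 0))
      (Icc 0 L) x := by
  have hdiff : DifferentiableWithinAt ℝ (fun p : ℝ × ℝ => f p.1 p.2) (Icc 0 L ×ˢ univ) (x, t) :=
    (hf.differentiableOn one_ne_zero) (x, t) ⟨hx, mem_univ t⟩
  have hF := hdiff.hasFDerivWithinAt
  have hι : HasDerivAt (fun y : ℝ => ((y, t) : ℝ × ℝ)) ((1 : ℝ), (0 : ℝ)) x := by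
    simpa using ((hasDerivAt_id x).prodMk (hasDerivAt_const x t))
  have := hF.comp_hasDerivWithinAt x (hι.hasDerivWithinAt (s := Icc 0 L))
    (fun y hy => show ((y, t) : ℝ × ℝ) ∈ Icc 0 L ×ˢ univ from ⟨hy, mem_univ t⟩)
  simpa [Function.comp_def] using this

lemma continuousOn_partial_right {f : ℝ → ℝ → ℝ} (hL : 0 < L)
    (hf : ContDiffOn ℝ 1 (fun p : ℝ × ℝ => f p.1 p.2) (Icc 0 L ×ˢ univ)) :
    ContinuousOn (fun p : ℝ × ℝ =>
      fderivWithin ℝ (fun q : ℝ × ℝ => f q.1 q.2) (Icc 0 L ×ˢ univ) p (0, 1))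
      (Icc 0 L ×ˢ univ) := by
  have := hf.continuousOn_fderivWithin (uds hL) le_rfl
  exact this.clm_apply continuousOn_const

end helpers

lemma poincare {L : ℝ} (hL : 0 < L) {f : ℝ → ℝ} (hf : ContDiffOn ℝ 1 f (Icc 0 L))
    (h0 : f 0 = 0) (hLf : f L = 0) :
    π ^ 2 / L ^ 2 * ∫ x in (0:ℝ)..L, f x ^ 2
      ≤ ∫ x in (0:ℝ)..L, (derivWithin f (Icc 0 L) x) ^ 2 := by
  set c : ℝ := π / L with hc
  have hcL : c * L = π := by rw [hc]; field_simp
  have hcpos : 0 < c := div_pos pi_pos hL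
  set f' : ℝ → ℝ := derivWithin f (Icc 0 L) with hf'
  have hf'cont : ContinuousOn f' (Icc 0 L) :=
    hf.continuousOn_derivWithin (uniqueDiffOn_Icc hL) le_rfl
  have hfcont : ContinuousOn f (Icc 0 L) := hf.continuousOn
  have hfd : ∀ x ∈ Ioo (0:ℝ) L, HasDerivAt f (f' x) x := by
    intro x hx
    exact (((hf.differentiableOn one_ne_zero) x (Ioo_subset_Icc_self hx)).hasDerivWithinAt).hasDerivAt
      (Icc_mem_nhds hx.1 hx.2)
  set φ : ℝ → ℝ := fun y => c * Real.cos (c * y) / Real.sin (c * y) with hφ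
  set G : ℝ → ℝ := fun y => φ y * f y ^ 2 with hG
  set G' : ℝ → ℝ := fun y => (-(c ^ 2) - φ y ^ 2) * f y ^ 2 + 2 * φ y * f y * f' y with hG'
  have hsin : ∀ x ∈ Ioo (0:ℝ) L, 0 < Real.sin (c * x) := by
    intro x hx
    apply Real.sin_pos_of_pos_of_lt_pi (mul_pos hcpos hx.1)
    calc c * x < c * L := by nlinarith [hx.2]
    _ = π := hcL
  have hφd : ∀ x ∈ Ioo (0:ℝ) L, HasDerivAt φ (-(c ^ 2) - φ x ^ 2) x := by
    intro x hx
    have hs := hsin x hx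
    have hlin : HasDerivAt (fun y : ℝ => c * y) c x := by
      simpa using (hasDerivAt_id x).const_mul c
    have h1 : HasDerivAt (fun y => Real.sin (c * y)) (Real.cos (c * x) * c) x :=
      (Real.hasDerivAt_sin (c * x)).comp x hlin
    have h2 : HasDerivAt (fun y => Real.cos (c * y)) (-Real.sin (c * x) * c) x :=
      (Real.hasDerivAt_cos (c * x)).comp x hlin
    have h3 := ((h2.const_mul c).div h1 hs.ne')
    apply h3.congr_deriv
    have hpyth := Real.sin_sq_add_cos_sq (c * x)
    have hs' := hs.ne'
    simp only [hφ]
    field_simp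
  have hGd : ∀ x ∈ Ioo (0:ℝ) L, HasDerivAt G (G' x) x := by
    intro x hx
    have := (hφd x hx).mul ((hfd x hx).pow 2)
    apply this.congr_deriv
    simp [hG']
    ring
  have hφcont : ContinuousOn φ (Ioo 0 L) := by
    apply ContinuousOn.div
    · exact (continuous_const.mul (Real.continuous_cos.comp (continuous_const.mul continuous_id))).continuousOn
    · exact (Real.continuous_sin.comp (continuous_const.mul continuous_id)).continuousOn
    · exact fun x hx => (hsin x hx).ne'
  have hG'cont : ContinuousOn G' (Ioo 0 L) := by
    apply ContinuousOn.add
    · exact ((continuousOn_const.sub (hφcont.pow 2)).mul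
        ((hfcont.mono Ioo_subset_Icc_self).pow 2))
    · exact ((continuousOn_const.mul hφcont).mul (hfcont.mono Ioo_subset_Icc_self)).mul
        (hf'cont.mono Ioo_subset_Icc_self)
  set h : ℝ → ℝ := fun x => f' x ^ 2 - c ^ 2 * f x ^ 2 with hh
  have hhcont : ContinuousOn h (Icc 0 L) :=
    (hf'cont.pow 2).sub (continuousOn_const.mul (hfcont.pow 2))
  have hhint : IntervalIntegrable h volume 0 L :=
    hhcont.intervalIntegrable_of_Icc hL.le
  set J : ℝ := ∫ x in (0:ℝ)..L, h x with hJ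
  -- key inequality for truncated interval
  have key : ∀ ε ∈ Ioo (0:ℝ) (L/2), G (L - ε) - G ε ≤ ∫ x in ε..(L - ε), h x := by
    intro ε hε
    have hεle : ε ≤ L - ε := by linarith [hε.2]
    have hsub : Icc ε (L - ε) ⊆ Ioo 0 L := fun x hx =>
      ⟨lt_of_lt_of_le hε.1 hx.1, by have := hx.2; have := hε.1; linarith⟩
    have hG'int : IntervalIntegrable G' volume ε (L - ε) :=
      (hG'cont.mono hsub).intervalIntegrable_of_Icc hεle
    have hhint' : IntervalIntegrable h volume ε (L - ε) :=
      (hhcont.mono (hsub.trans Ioo_subset_Icc_self)).intervalIntegrable_of_Icc hεle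
    have hftc : ∫ x in ε..(L - ε), G' x = G (L - ε) - G ε := by
      apply integral_eq_sub_of_hasDerivAt
      · intro x hx
        exact hGd x (hsub (by rwa [uIcc_of_le hεle] at hx))
      · exact hG'int
    rw [← hftc]
    apply integral_mono_on hεle hG'int hhint'
    intro x hx
    have hsq := sq_nonneg (f' x - φ x * f x)
    simp only [hG', hh]
    nlinarith [hsq]
  have hIooMem : Ioo (0:ℝ) L ∈ 𝓝[>] (0:ℝ) := by
    rw [← nhdsWithin_Ioo_eq_nhdsGT hL]; exact self_mem_nhdsWithin
  have hIooMem2 : Ioo (0:ℝ) (L/2) ∈ 𝓝[>] (0:ℝ) := by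
    rw [← nhdsWithin_Ioo_eq_nhdsGT (half_pos hL)]; exact self_mem_nhdsWithin
  -- slope limits at the two endpoints
  have hslope0 : Tendsto (fun ε => f ε / ε) (𝓝[>] (0:ℝ)) (𝓝 (f' 0)) := by
    have hfd0 : HasDerivWithinAt f (f' 0) (Icc 0 L) 0 :=
      ((hf.differentiableOn one_ne_zero) 0 (left_mem_Icc.2 hL.le)).hasDerivWithinAt
    have hT := hasDerivWithinAt_iff_tendsto_slope.mp hfd0
    have hmono : 𝓝[>] (0:ℝ) ≤ 𝓝[Icc 0 L \ {0}] 0 := by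
      rw [← nhdsWithin_Ioo_eq_nhdsGT hL]
      exact nhdsWithin_mono _ (fun x hx => ⟨Ioo_subset_Icc_self hx, ne_of_gt hx.1⟩)
    refine (hT.mono_left hmono).congr' ?_
    filter_upwards [self_mem_nhdsWithin] with ε hε
    simp [slope, h0, div_eq_inv_mul]
  have hslopeL : Tendsto (fun ε => f (L - ε) / ε) (𝓝[>] (0:ℝ)) (𝓝 (-(f' L))) := by
    have hfdL : HasDerivWithinAt f (f' L) (Icc 0 L) L :=
      ((hf.differentiableOn one_ne_zero) L (right_mem_Icc.2 hL.le)).hasDerivWithinAt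
    have hT := hasDerivWithinAt_iff_tendsto_slope.mp hfdL
    have hmap : Tendsto (fun ε : ℝ => L - ε) (𝓝[>] (0:ℝ)) (𝓝[Icc 0 L \ {L}] L) := by
      apply tendsto_nhdsWithin_of_tendsto_nhds_of_eventually_within
      · exact ((continuous_const.sub continuous_id).tendsto' 0 L (by simp)).mono_left
          nhdsWithin_le_nhds
      · filter_upwards [hIooMem] with ε hε
        exact ⟨⟨by linarith [hε.2], by linarith [hε.1]⟩, by simp; linarith [hε.1]⟩
    have hcomp := hT.comp hmap
    have := hcomp.neg
    refine this.congr' ?_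
    filter_upwards [self_mem_nhdsWithin] with ε (hε : (0:ℝ) < ε)
    simp only [Function.comp, slope, hLf, vsub_eq_sub, sub_zero, smul_eq_mul]
    rw [show L - ε - L = -ε by ring]
    field_simp
  have hsinlim : Tendsto (fun ε => Real.sin (c * ε) / (c * ε)) (𝓝[>] (0:ℝ)) (𝓝 1) := by
    have hds := hasDerivAt_iff_tendsto_slope.mp (Real.hasDerivAt_sin 0)
    have hmap2 : Tendsto (fun ε : ℝ => c * ε) (𝓝[>] (0:ℝ)) (𝓝[≠] (0:ℝ)) := by
      apply tendsto_nhdsWithin_of_tendsto_nhds_of_eventually_within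
      · exact ((continuous_const.mul continuous_id).tendsto' 0 0 (by simp)).mono_left
          nhdsWithin_le_nhds
      · filter_upwards [self_mem_nhdsWithin] with ε (hε : (0:ℝ) < ε)
        exact (mul_pos hcpos hε).ne'
    have hcomp := hds.comp hmap2
    rw [Real.cos_zero] at hcomp
    refine hcomp.congr' ?_
    filter_upwards [self_mem_nhdsWithin] with ε (hε : (0:ℝ) < ε)
    simp [Function.comp, slope, Real.sin_zero, div_eq_inv_mul]
  have hratio : Tendsto (fun ε => ε / Real.sin (c * ε)) (𝓝[>] (0:ℝ)) (𝓝 (1/c)) := by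
    have h1 := hsinlim.inv₀ one_ne_zero
    have h2 := h1.mul (tendsto_const_nhds (x := (1/c)) (f := 𝓝[>] (0:ℝ)))
    rw [show (1:ℝ)⁻¹ * (1/c) = 1/c by norm_num] at h2
    refine h2.congr' ?_
    filter_upwards [hIooMem] with ε hε
    have hs := (hsin ε hε).ne'
    have hε0 : ε ≠ 0 := hε.1.ne'
    field_simp
  have hcoslim : Tendsto (fun ε => c * Real.cos (c * ε)) (𝓝[>] (0:ℝ)) (𝓝 c) := by
    exact ((continuous_const.mul (Real.continuous_cos.comp
      (continuous_const.mul continuous_id))).tendsto' 0 c (by simp [hc])).mono_left nhdsWithin_le_nhds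
  have hid0 : Tendsto (fun ε : ℝ => ε) (𝓝[>] (0:ℝ)) (𝓝 0) :=
    tendsto_id.mono_left nhdsWithin_le_nhds
  have hGε : Tendsto (fun ε => G ε) (𝓝[>] (0:ℝ)) (𝓝 0) := by
    have hprod := ((hcoslim.mul hratio).mul (hslope0.pow 2)).mul hid0
    rw [mul_zero] at hprod
    refine hprod.congr' ?_
    filter_upwards [hIooMem] with ε hε
    have hs := (hsin ε hε).ne'
    have hε0 : ε ≠ 0 := hε.1.ne'
    simp only [hG, hφ]
    field_simp
  have hGL : Tendsto (fun ε => G (L - ε)) (𝓝[>] (0:ℝ)) (𝓝 0) := by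
    have hprod := (((hcoslim.mul hratio).mul (hslopeL.pow 2)).mul hid0).neg
    rw [mul_zero, neg_zero] at hprod
    refine hprod.congr' ?_
    filter_upwards [hIooMem2] with ε hε
    have hεL : ε ∈ Ioo (0:ℝ) L := ⟨hε.1, by linarith [hε.2]⟩
    have hs := (hsin ε hεL).ne'
    have hε0 : ε ≠ 0 := hε.1.ne'
    have harg : c * (L - ε) = π - c * ε := by rw [mul_sub, hcL]
    simp only [hG, hφ, harg, Real.sin_pi_sub, Real.cos_pi_sub]
    field_simp
  set P : ℝ → ℝ := fun y => ∫ x in (0:ℝ)..y, h x with hP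
  have hPcont : ContinuousOn P (Icc 0 L) := by
    have hint : IntegrableOn h (uIcc 0 L) volume := by
      rw [uIcc_of_le hL.le]
      exact hhcont.integrableOn_Icc
    have := intervalIntegral.continuousOn_primitive_interval hint
    rwa [uIcc_of_le hL.le] at this
  have hmonoIcc : 𝓝[>] (0:ℝ) ≤ 𝓝[Icc 0 L] 0 := by
    rw [← nhdsWithin_Ioo_eq_nhdsGT hL]
    exact nhdsWithin_mono _ Ioo_subset_Icc_self
  have hP0 : Tendsto P (𝓝[>] (0:ℝ)) (𝓝 0) := by
    have := (hPcont 0 (left_mem_Icc.2 hL.le)).mono_left hmonoIcc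
    simpa [hP, intervalIntegral.integral_same] using this
  have hPL : Tendsto (fun ε => P (L - ε)) (𝓝[>] (0:ℝ)) (𝓝 J) := by
    have hmapL : Tendsto (fun ε : ℝ => L - ε) (𝓝[>] (0:ℝ)) (𝓝[Icc 0 L] L) := by
      apply tendsto_nhdsWithin_of_tendsto_nhds_of_eventually_within
      · exact ((continuous_const.sub continuous_id).tendsto' 0 L (by simp)).mono_left
          nhdsWithin_le_nhds
      · filter_upwards [hIooMem] with ε hε
        exact ⟨by linarith [hε.2], by linarith [hε.1]⟩
    have hPL' : Tendsto P (𝓝[Icc 0 L] L) (𝓝 (P L)) := hPcont L (right_mem_Icc.2 hL.le)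
    exact hPL'.comp hmapL
  have hI : Tendsto (fun ε => ∫ x in ε..(L - ε), h x) (𝓝[>] (0:ℝ)) (𝓝 J) := by
    have := hPL.sub hP0
    rw [sub_zero] at this
    refine this.congr' ?_
    filter_upwards [hIooMem2] with ε hε
    have h1 : IntervalIntegrable h volume 0 (L - ε) :=
      (hhcont.mono (Icc_subset_Icc le_rfl (by linarith [hε.1]))).intervalIntegrable_of_Icc
        (by linarith [hε.1, hε.2])
    have h2 : IntervalIntegrable h volume 0 ε :=
      (hhcont.mono (Icc_subset_Icc le_rfl (by linarith [hε.2]))).intervalIntegrable_of_Icc hε.1.le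
    simp only [hP]
    rw [intervalIntegral.integral_interval_sub_left h1 h2]
  have hJ0 : (0:ℝ) ≤ J := by
    have hlhs := hGL.sub hGε
    rw [sub_zero] at hlhs
    refine le_of_tendsto_of_tendsto hlhs hI ?_
    filter_upwards [hIooMem2] with ε hε
    exact key ε hε
  have hsplit : J = (∫ x in (0:ℝ)..L, f' x ^ 2) - c ^ 2 * ∫ x in (0:ℝ)..L, f x ^ 2 := by
    rw [hJ, intervalIntegral.integral_sub (f := fun x => f' x ^ 2) (g := fun x => c ^ 2 * f x ^ 2) ((hf'cont.pow 2).intervalIntegrable_of_Icc hL.le)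
      ((continuousOn_const.mul (hfcont.pow 2)).intervalIntegrable_of_Icc hL.le),
      intervalIntegral.integral_const_mul]
  have hc2 : c ^ 2 = π ^ 2 / L ^ 2 := by rw [hc, div_pow]
  rw [← hc2]
  linarith [hJ0, hsplit]


theorem reaction_convection_diffusion_contraction_1d (L Λ lam : ℝ) (hL : 0 < L) (hΛ : 0 ≤ Λ)
    (a v A u : ℝ → ℝ → ℝ)
    (ha : ContDiffOn ℝ 1 (fun p : ℝ × ℝ => a p.1 p.2) (Icc 0 L ×ˢ univ))
    (hv : ContDiffOn ℝ 1 (fun p : ℝ × ℝ => v p.1 p.2) (Icc 0 L ×ˢ univ))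
    (hA : ContDiffOn ℝ 1 (fun p : ℝ × ℝ => A p.1 p.2) (Icc 0 L ×ˢ univ))
    (hAΛ : ∀ x ∈ Icc (0 : ℝ) L, ∀ t ≥ (0 : ℝ), Λ ≤ A x t)
    (hrate : ∀ x ∈ Icc (0 : ℝ) L, ∀ t ≥ (0 : ℝ),
      -(a x t) + (1 / 2) * derivWithin (fun y => v y t) (Icc 0 L) x ≤ lam)
    (hu : ContDiffOn ℝ 2 (fun p : ℝ × ℝ => u p.1 p.2) (Icc 0 L ×ˢ univ))
    (hpde : ∀ x ∈ Icc 0 L, ∀ t ≥ (0 : ℝ),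
      deriv (fun s => u x s) t + a x t * u x t
          + v x t * derivWithin (fun y => u y t) (Icc 0 L) x =
        derivWithin (fun y => A y t * derivWithin (fun z => u z t) (Icc 0 L) y) (Icc 0 L) x)
    (hbc0 : ∀ t ≥ (0 : ℝ), u 0 t = 0) (hbcL : ∀ t ≥ (0 : ℝ), u L t = 0) :
    ∀ t ≥ (0 : ℝ),
      (∫ x in (0 : ℝ)..L, (u x t) ^ 2)
        ≤ exp (2 * (lam - Λ * π ^ 2 / L ^ 2) * t) * ∫ x in (0 : ℝ)..L, (u x 0) ^ 2 := by
  have udi : UniqueDiffOn ℝ (Icc (0:ℝ) L) := uniqueDiffOn_Icc hL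
  set S : Set (ℝ × ℝ) := Icc (0:ℝ) L ×ˢ (univ : Set ℝ) with hS
  have hu1 : ContDiffOn ℝ 1 (fun p : ℝ × ℝ => u p.1 p.2) S := hu.of_le one_le_two
  set ut : ℝ → ℝ → ℝ :=
    fun x t => fderivWithin ℝ (fun p : ℝ × ℝ => u p.1 p.2) S (x, t) (0, 1) with hut_def
  have hut : ∀ x ∈ Icc (0:ℝ) L, ∀ t : ℝ, HasDerivAt (fun s => u x s) (ut x t) t :=
    fun x hx t => hasDerivAt_right hu1 hx
  have hutcont : ContinuousOn (fun p : ℝ × ℝ => ut p.1 p.2) S := by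
    have := continuousOn_partial_right hL hu1
    exact this
  have hucont : ContinuousOn (fun p : ℝ × ℝ => u p.1 p.2) S := hu.continuousOn
  have huxcont : ∀ t : ℝ, ContinuousOn (fun x => u x t) (Icc 0 L) :=
    fun t => (slice_left (n := 2) hu t).continuousOn
  have hutxcont : ∀ t : ℝ, ContinuousOn (fun x => ut x t) (Icc 0 L) := by
    intro t
    have hmap : ContinuousOn (fun x : ℝ => ((x, t) : ℝ × ℝ)) (Icc 0 L) :=
      (continuous_id.prodMk continuous_const).continuousOn
    exact hutcont.comp hmap (fun x hx => ⟨hx, mem_univ t⟩)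
  set F : ℝ → ℝ := fun s => ∫ x in (0:ℝ)..L, u x s ^ 2 with hF
  -- Step A : derivative of F
  have stepA : ∀ t : ℝ, HasDerivAt F (∫ x in (0:ℝ)..L, 2 * u x t * ut x t) t := by
    intro t
    have hsub : ∀ s : ℝ, Set.uIoc (0:ℝ) L ⊆ Icc 0 L := by
      intro s
      rw [uIoc_of_le hL.le]
      exact Ioc_subset_Icc_self
    obtain ⟨C, hC⟩ : ∃ C : ℝ, ∀ p ∈ Icc (0:ℝ) L ×ˢ Icc (t-1) (t+1),
        ‖2 * u p.1 p.2 * ut p.1 p.2‖ ≤ C := by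
      apply IsCompact.exists_bound_of_continuousOn (isCompact_Icc.prod isCompact_Icc)
      have : ContinuousOn (fun p : ℝ × ℝ => 2 * u p.1 p.2 * ut p.1 p.2) S :=
        (continuousOn_const.mul hucont).mul hutcont
      exact this.mono (fun p hp => ⟨hp.1, mem_univ _⟩)
    have hres := intervalIntegral.hasDerivAt_integral_of_dominated_loc_of_deriv_le
      (F := fun s x => u x s ^ 2) (F' := fun s x => 2 * u x s * ut x s)
      (x₀ := t) (a := (0:ℝ)) (b := L) (μ := volume) (bound := fun _ => C)
      (s := Metric.ball t 1) (Metric.ball_mem_nhds t one_pos)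
      (Eventually.of_forall (fun s => by
        exact (((huxcont s).pow 2).mono (hsub s)).aestronglyMeasurable measurableSet_uIoc))
      (((huxcont t).pow 2).intervalIntegrable_of_Icc hL.le)
      (((continuousOn_const.mul (huxcont t)).mul (hutxcont t)).mono (hsub t)
        |>.aestronglyMeasurable measurableSet_uIoc)
      (Eventually.of_forall (fun x hx s hs => by
        apply hC (x, s)
        refine ⟨hsub t hx, ?_⟩
        have := mem_ball_iff_norm.mp hs
        rw [Real.norm_eq_abs] at this
        constructor <;> [linarith [abs_lt.mp this]; linarith [(abs_lt.mp this).2]]))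
      intervalIntegrable_const
      (Eventually.of_forall (fun x hx s _ => by
        have h1 := (hut x (hsub t hx) s).pow 2
        simpa [pow_one, Pi.pow_def] using h1.congr_deriv (by push_cast; ring)))
    exact hres.2
  -- Step B : energy inequality
  have stepB : ∀ t ≥ (0:ℝ),
      (∫ x in (0:ℝ)..L, 2 * u x t * ut x t) ≤ 2 * (lam - Λ * π ^ 2 / L ^ 2) * F t := by
    intro t ht
    set f : ℝ → ℝ := fun y => u y t with hfdef
    set f' : ℝ → ℝ := fun y => derivWithin (fun z => u z t) (Icc 0 L) y with hf'def
    set g : ℝ → ℝ := fun y => A y t with hgdef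
    set w : ℝ → ℝ := fun y => v y t with hwdef
    set al : ℝ → ℝ := fun y => a y t with haldef
    set w' : ℝ → ℝ := fun y => derivWithin (fun z => v z t) (Icc 0 L) y with hw'def
    set D : ℝ → ℝ := fun y => derivWithin (fun z => A z t * f' z) (Icc 0 L) y with hDdef
    have hfC2 : ContDiffOn ℝ 2 f (Icc 0 L) := slice_left hu t
    have hf'C1 : ContDiffOn ℝ 1 f' (Icc 0 L) := by
      have := hfC2.derivWithin udi (m := 1) (by norm_num)
      exact this
    have hgC1 : ContDiffOn ℝ 1 g (Icc 0 L) := slice_left hA t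
    have hwC1 : ContDiffOn ℝ 1 w (Icc 0 L) := slice_left hv t
    have hfcont : ContinuousOn f (Icc 0 L) := hfC2.continuousOn
    have hf'cont : ContinuousOn f' (Icc 0 L) := hf'C1.continuousOn
    have hgcont : ContinuousOn g (Icc 0 L) := hgC1.continuousOn
    have hwcont : ContinuousOn w (Icc 0 L) := hwC1.continuousOn
    have halcont : ContinuousOn al (Icc 0 L) := (slice_left ha t).continuousOn
    have hw'cont : ContinuousOn w' (Icc 0 L) := hwC1.continuousOn_derivWithin udi le_rfl
    have hgf'C1 : ContDiffOn ℝ 1 (fun y => A y t * f' y) (Icc 0 L) := hgC1.mul hf'C1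
    have hDcont : ContinuousOn D (Icc 0 L) := hgf'C1.continuousOn_derivWithin udi le_rfl
    -- interior derivatives
    have hfdx : ∀ x ∈ Ioo (0:ℝ) L, HasDerivAt f (f' x) x := fun x hx =>
      (((hfC2.differentiableOn two_ne_zero) x (Ioo_subset_Icc_self hx)).hasDerivWithinAt).hasDerivAt
        (Icc_mem_nhds hx.1 hx.2)
    have hGFdx : ∀ x ∈ Ioo (0:ℝ) L, HasDerivAt (fun y => A y t * f' y) (D x) x := fun x hx =>
      (((hgf'C1.differentiableOn one_ne_zero) x (Ioo_subset_Icc_self hx)).hasDerivWithinAt).hasDerivAt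
        (Icc_mem_nhds hx.1 hx.2)
    have hwdx : ∀ x ∈ Ioo (0:ℝ) L, HasDerivAt w (w' x) x := fun x hx =>
      (((hwC1.differentiableOn one_ne_zero) x (Ioo_subset_Icc_self hx)).hasDerivWithinAt).hasDerivAt
        (Icc_mem_nhds hx.1 hx.2)
    have hbc0' : f 0 = 0 := hbc0 t ht
    have hbcL' : f L = 0 := hbcL t ht
    -- integration by parts 1
    have ibp1 : (∫ x in (0:ℝ)..L, f x * D x) = - ∫ x in (0:ℝ)..L, g x * f' x ^ 2 := by
      have hcont : ContinuousOn (fun y => f y * (g y * f' y)) (Icc 0 L) :=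
        hfcont.mul (hgcont.mul hf'cont)
      have hder : ∀ x ∈ Ioo (0:ℝ) L,
          HasDerivAt (fun y => f y * (g y * f' y))
            (f' x * (g x * f' x) + f x * D x) x :=
        fun x hx => (hfdx x hx).mul (hGFdx x hx)
      have hint1 : IntervalIntegrable (fun x => f' x * (g x * f' x)) volume 0 L :=
        (hf'cont.mul (hgcont.mul hf'cont)).intervalIntegrable_of_Icc hL.le
      have hint2 : IntervalIntegrable (fun x => f x * D x) volume 0 L :=
        (hfcont.mul hDcont).intervalIntegrable_of_Icc hL.le
      have hftc := integral_eq_sub_of_hasDerivAt_of_le hL.le hcont hder (hint1.add hint2)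
      rw [hbc0', hbcL'] at hftc
      simp only [zero_mul, sub_zero] at hftc
      rw [intervalIntegral.integral_add hint1 hint2] at hftc
      have heq : (∫ x in (0:ℝ)..L, f' x * (g x * f' x)) = ∫ x in (0:ℝ)..L, g x * f' x ^ 2 := by
        apply intervalIntegral.integral_congr
        intro x hx
        ring
      rw [heq] at hftc
      linarith
    -- integration by parts 2
    have ibp2 : (∫ x in (0:ℝ)..L, w x * f x * f' x)
        = -(1/2) * ∫ x in (0:ℝ)..L, w' x * f x ^ 2 := by
      have hcont : ContinuousOn (fun y => w y * f y ^ 2) (Icc 0 L) :=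
        hwcont.mul (hfcont.pow 2)
      have hder : ∀ x ∈ Ioo (0:ℝ) L,
          HasDerivAt (fun y => w y * f y ^ 2)
            (w' x * f x ^ 2 + 2 * (w x * f x * f' x)) x := by
        intro x hx
        have := (hwdx x hx).mul ((hfdx x hx).pow 2)
        apply this.congr_deriv
        simp only [Pi.pow_apply]
        push_cast
        ring
      have hint1 : IntervalIntegrable (fun x => w' x * f x ^ 2) volume 0 L :=
        (hw'cont.mul (hfcont.pow 2)).intervalIntegrable_of_Icc hL.le
      have hint2 : IntervalIntegrable (fun x => 2 * (w x * f x * f' x)) volume 0 L :=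
        (continuousOn_const.mul ((hwcont.mul hfcont).mul hf'cont)).intervalIntegrable_of_Icc hL.le
      have hftc := integral_eq_sub_of_hasDerivAt_of_le hL.le hcont hder (hint1.add hint2)
      rw [hbc0', hbcL'] at hftc
      simp only [ne_eq, OfNat.ofNat_ne_zero, not_false_eq_true, zero_pow, mul_zero,
        sub_zero] at hftc
      rw [intervalIntegral.integral_add hint1 hint2, intervalIntegral.integral_const_mul] at hftc
      linarith
    -- PDE rewrite
    have hpde' : ∀ x ∈ Icc (0:ℝ) L, ut x t = D x - al x * f x - w x * f' x := by
      intro x hx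
      have h1 := hpde x hx t ht
      have h2 : deriv (fun s => u x s) t = ut x t := (hut x hx t).deriv
      rw [h2] at h1
      simp only [hDdef, hfdef, haldef, hwdef, hf'def]
      linarith
    -- rewrite the integral
    have hsplit : (∫ x in (0:ℝ)..L, 2 * u x t * ut x t)
        = 2 * (∫ x in (0:ℝ)..L, f x * D x) - 2 * (∫ x in (0:ℝ)..L, al x * f x ^ 2)
          - 2 * (∫ x in (0:ℝ)..L, w x * f x * f' x) := by
      have hint1 : IntervalIntegrable (fun x => f x * D x) volume 0 L :=
        (hfcont.mul hDcont).intervalIntegrable_of_Icc hL.le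
      have hint2 : IntervalIntegrable (fun x => al x * f x ^ 2) volume 0 L :=
        (halcont.mul (hfcont.pow 2)).intervalIntegrable_of_Icc hL.le
      have hint3 : IntervalIntegrable (fun x => w x * f x * f' x) volume 0 L :=
        ((hwcont.mul hfcont).mul hf'cont).intervalIntegrable_of_Icc hL.le
      have heq : (∫ x in (0:ℝ)..L, 2 * u x t * ut x t)
          = ∫ x in (0:ℝ)..L,
              (2 * (f x * D x) - 2 * (al x * f x ^ 2) - 2 * (w x * f x * f' x)) := by
        apply intervalIntegral.integral_congr
        intro x hx
        rw [uIcc_of_le hL.le] at hx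
        have := hpde' x hx
        simp only [hfdef]
        rw [this]
        ring
      rw [heq,
        intervalIntegral.integral_sub ((hint1.const_mul 2).sub (hint2.const_mul 2))
          (hint3.const_mul 2),
        intervalIntegral.integral_sub (hint1.const_mul 2) (hint2.const_mul 2),
        intervalIntegral.integral_const_mul, intervalIntegral.integral_const_mul,
        intervalIntegral.integral_const_mul]
    -- Poincaré inequality
    have hpoin := poincare hL (hfC2.of_le one_le_two) hbc0' hbcL'
    -- bound 1 : Λ ∫ f'^2 ≤ ∫ g f'^2
    have hb1 : Λ * (∫ x in (0:ℝ)..L, f' x ^ 2) ≤ ∫ x in (0:ℝ)..L, g x * f' x ^ 2 := by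
      rw [← intervalIntegral.integral_const_mul]
      apply intervalIntegral.integral_mono_on hL.le
        ((continuousOn_const.mul (hf'cont.pow 2)).intervalIntegrable_of_Icc hL.le)
        ((hgcont.mul (hf'cont.pow 2)).intervalIntegrable_of_Icc hL.le)
      intro x hx
      exact mul_le_mul_of_nonneg_right (hAΛ x hx t ht) (sq_nonneg _)
    -- bound 2 : ∫ (-2 al + w') f^2 ≤ 2 lam ∫ f^2
    have hb2 : (∫ x in (0:ℝ)..L, (-2 * al x + w' x) * f x ^ 2)
        ≤ 2 * lam * ∫ x in (0:ℝ)..L, f x ^ 2 := by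
      rw [← intervalIntegral.integral_const_mul]
      apply intervalIntegral.integral_mono_on hL.le
        (((continuousOn_const.mul halcont).add hw'cont).mul
          (hfcont.pow 2) |>.intervalIntegrable_of_Icc hL.le)
        ((continuousOn_const.mul (hfcont.pow 2)).intervalIntegrable_of_Icc hL.le)
      intro x hx
      have hr := hrate x hx t ht
      have : -2 * al x + w' x ≤ 2 * lam := by
        simp only [haldef, hw'def]
        linarith
      exact mul_le_mul_of_nonneg_right this (sq_nonneg _)
    have hb2' : -2 * (∫ x in (0:ℝ)..L, al x * f x ^ 2) + (∫ x in (0:ℝ)..L, w' x * f x ^ 2)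
        ≤ 2 * lam * ∫ x in (0:ℝ)..L, f x ^ 2 := by
      have hint2 : IntervalIntegrable (fun x => al x * f x ^ 2) volume 0 L :=
        (halcont.mul (hfcont.pow 2)).intervalIntegrable_of_Icc hL.le
      have hint4 : IntervalIntegrable (fun x => w' x * f x ^ 2) volume 0 L :=
        (hw'cont.mul (hfcont.pow 2)).intervalIntegrable_of_Icc hL.le
      have heq : (∫ x in (0:ℝ)..L, (-2 * al x + w' x) * f x ^ 2)
          = -2 * (∫ x in (0:ℝ)..L, al x * f x ^ 2) + ∫ x in (0:ℝ)..L, w' x * f x ^ 2 := by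
        rw [show (fun x => (-2 * al x + w' x) * f x ^ 2)
            = fun x => (-2) * (al x * f x ^ 2) + w' x * f x ^ 2 by funext x; ring]
        rw [intervalIntegral.integral_add (hint2.const_mul (-2)) hint4,
          intervalIntegral.integral_const_mul]
      rw [heq] at hb2
      exact hb2
    have hFt : F t = ∫ x in (0:ℝ)..L, f x ^ 2 := rfl
    have hpoin' : Λ * (π ^ 2 / L ^ 2 * ∫ x in (0:ℝ)..L, f x ^ 2)
        ≤ Λ * ∫ x in (0:ℝ)..L, f' x ^ 2 := mul_le_mul_of_nonneg_left hpoin hΛ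
    rw [hsplit, ibp1, ibp2, hFt]
    have h2 : Λ * π ^ 2 / L ^ 2 * ∫ x in (0:ℝ)..L, f x ^ 2
        ≤ Λ * ∫ x in (0:ℝ)..L, f' x ^ 2 := by
      calc Λ * π ^ 2 / L ^ 2 * ∫ x in (0:ℝ)..L, f x ^ 2
          = Λ * (π ^ 2 / L ^ 2 * ∫ x in (0:ℝ)..L, f x ^ 2) := by ring
      _ ≤ Λ * ∫ x in (0:ℝ)..L, f' x ^ 2 := hpoin'
    linarith [hb1, hb2', h2]
  -- Step C : Gronwall
  intro t ht
  set Kc : ℝ := 2 * (lam - Λ * π ^ 2 / L ^ 2) with hKc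
  set Φ : ℝ → ℝ := fun s => Real.exp (-Kc * s) * F s with hΦ
  have hΦd : ∀ s : ℝ, HasDerivAt Φ
      (-Kc * Real.exp (-Kc * s) * F s
        + Real.exp (-Kc * s) * ∫ x in (0:ℝ)..L, 2 * u x s * ut x s) s := by
    intro s
    have h1 : HasDerivAt (fun r : ℝ => -Kc * r) (-Kc) s := by
      simpa using (hasDerivAt_id s).const_mul (-Kc)
    have he : HasDerivAt (fun r => Real.exp (-Kc * r)) (-Kc * Real.exp (-Kc * s)) s := by
      simpa [mul_comm] using h1.exp
    exact he.mul (stepA s)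
  have hΦdiff : Differentiable ℝ Φ := fun s => (hΦd s).differentiableAt
  have hmono : AntitoneOn Φ (Ici 0) := by
    apply antitoneOn_of_deriv_nonpos (convex_Ici 0) hΦdiff.continuous.continuousOn
      hΦdiff.differentiableOn
    intro s hs
    rw [interior_Ici] at hs
    rw [(hΦd s).deriv]
    have hB := stepB s (le_of_lt hs)
    nlinarith [Real.exp_pos (-Kc * s), hB]
  have h1 : Φ t ≤ Φ 0 := hmono self_mem_Ici ht ht
  have h1' : Real.exp (-Kc * t) * F t ≤ F 0 := by
    simpa [hΦ] using h1
  have h2 := mul_le_mul_of_nonneg_left h1' (Real.exp_pos (Kc * t)).le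
  have h3 : Real.exp (Kc * t) * (Real.exp (-Kc * t) * F t) = F t := by
    rw [← mul_assoc, ← Real.exp_add]
    norm_num
  rw [h3] at h2
  exact h2
end
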